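/- arXiv:1610.01839 — 4 statements merged into one kernel-verified Lean document; each statement's English description precedes it below -/
import Mathlib

section
/- Let D = (V,A) be a digraph. Then, as polynomials in y, Σ_{S ⊆ A : D∖S acyclic} y^{|A∖S|} = (−1)^{|V|} · B_D(−1, 1+y, 1), where D∖S is the digraph obtained from D by deleting the arcs in S, and B_D(−1, 1+y, 1) denotes the evaluation of the B-polynomial of D at q = −1, y replaced by 1+y, and z = 1. -/
open Finset

/-- The sum over all `q`-colorings of a digraph of
`y ^ (number of ascents) * z ^ (number of descents)`. -/
def colorSum (V A : Type) [Fintype V] [DecidableEq V] [Fintype A]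
    (s t : A → V) (q : ℕ) (y z : ℚ) : ℚ :=
  ∑ f : V → Fin q,
    y ^ (Finset.univ.filter (fun a => f (s a) < f (t a))).card *
    z ^ (Finset.univ.filter (fun a => f (t a) < f (s a))).card

/-- A digraph (arcs `A`, source map `s`, target map `t`) contains a directed cycle. -/
def HasDicycle {V A : Type} (s t : A → V) : Prop :=
  ∃ n : ℕ, 0 < n ∧ ∃ c : ZMod n → A, ∀ i, t (c i) = s (c (i + 1))

open scoped Classical

/-- cycle in a relation -/
def RelCycle {W : Type} (r : W → W → Prop) : Prop :=
  ∃ n : ℕ, 0 < n ∧ ∃ g : ZMod n → W, ∀ i, r (g i) (g (i + 1))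

lemma relCycle_of_forall_exists {W : Type} [Finite W] [Nonempty W] {r : W → W → Prop}
    (h : ∀ v, ∃ w, r v w) : RelCycle r := by
  choose nxt hn using h
  obtain ⟨w0⟩ := (inferInstance : Nonempty W)
  obtain ⟨i, j, hij, hmap⟩ := Finite.exists_ne_map_eq_of_infinite (fun m : ℕ => nxt^[m] w0)
  obtain ⟨i, j, hlt, heq⟩ : ∃ i j : ℕ, i < j ∧ nxt^[i] w0 = nxt^[j] w0 := by
    rcases hij.lt_or_gt with h' | h'
    · exact ⟨i, j, h', hmap⟩
    · exact ⟨j, i, h', hmap.symm⟩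
  set n := j - i with hn'
  have hnpos : 0 < n := by omega
  haveI : NeZero n := ⟨by omega⟩
  set x := nxt^[i] w0 with hx
  have hfix : nxt^[n] x = x := by
    have h2 : nxt^[n] x = nxt^[j] w0 := by
      rw [hx, ← Function.iterate_add_apply]; congr 1; omega
    rw [h2, ← heq]
  have hper : ∀ m, nxt^[m % n] x = nxt^[m] x := by
    intro m
    have hx0 : nxt^[n * (m / n)] x = x := by
      rw [Function.iterate_mul]
      exact Function.iterate_fixed hfix _
    conv_rhs => rw [show m = m % n + n * (m / n) from (Nat.mod_add_div m n).symm]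
    rw [Function.iterate_add_apply, hx0]
  refine ⟨n, hnpos, fun z => nxt^[z.val] x, fun z => ?_⟩
  have h1 : (z + 1).val = (z.val + 1) % n := by
    rw [ZMod.val_add, ZMod.val_one_eq_one_mod]
    conv_rhs => rw [Nat.add_mod]
    rw [Nat.add_mod, Nat.mod_mod_of_dvd _ (dvd_refl n)]
  have h2 : nxt^[(z+1).val] x = nxt (nxt^[z.val] x) := by
    rw [h1, hper, Function.iterate_succ_apply']
  show r (nxt^[z.val] x) (nxt^[(z+1).val] x)
  rw [h2]
  exact hn _

lemma exists_sink {W : Type} [Finite W] [Nonempty W] {r : W → W → Prop}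
    (h : ¬ RelCycle r) : ∃ v, ∀ w, ¬ r v w := by
  by_contra hc
  push_neg at hc
  exact h (relCycle_of_forall_exists hc)

noncomputable def SCcard (W : Type) [Fintype W] [DecidableEq W] (r : W → W → Prop) (k : ℕ) : ℕ :=
  (univ.filter (fun f : W → Fin k => Function.Surjective f ∧ ∀ x y, r x y → f x < f y)).card

lemma SCcard_eq_zero_of_card_lt {W : Type} [Fintype W] [DecidableEq W] (r : W → W → Prop)
    {k : ℕ} (hk : Fintype.card W < k) : SCcard W r k = 0 := by
  rw [SCcard, Finset.card_eq_zero, Finset.filter_eq_empty_iff]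
  rintro f - ⟨hs, -⟩
  have := Fintype.card_le_of_surjective f hs
  simp only [Fintype.card_fin] at this
  omega

lemma SCcard_zero_of_nonempty {W : Type} [Fintype W] [DecidableEq W] [Nonempty W]
    (r : W → W → Prop) : SCcard W r 0 = 0 := by
  rw [SCcard, Finset.card_eq_zero, Finset.filter_eq_empty_iff]
  rintro f - -
  exact (f (Classical.arbitrary W)).elim0

lemma SCcard_empty {W : Type} [Fintype W] [DecidableEq W] [IsEmpty W]
    (r : W → W → Prop) : SCcard W r 0 = 1 := by
  rw [SCcard, Finset.filter_true_of_mem, Finset.card_univ]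
  · haveI : Unique (W → Fin 0) :=
      ⟨⟨fun w => (IsEmpty.elim ‹_› w)⟩, fun f => funext fun w => (IsEmpty.elim ‹_› w)⟩
    simp
  · intro f _
    exact ⟨fun b => b.elim0, fun x y h => (IsEmpty.elim ‹_› x)⟩

section Claims

variable {W : Type} [Fintype W] [DecidableEq W] (r : W → W → Prop) (v : W)

noncomputable def SCf (k : ℕ) : Finset ({w : W // w ≠ v} → Fin k) :=
  univ.filter (fun f => Function.Surjective f ∧
    ∀ x y : {w : W // w ≠ v}, r x.1 y.1 → f x < f y)

lemma SCf_card (k : ℕ) :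
    (SCf r v k).card = SCcard {w : W // w ≠ v} (fun x y => r x.1 y.1) k := rfl

noncomputable def shS (k : ℕ) (f' : {w : W // w ≠ v} → Fin k) : Finset (Fin k) :=
  univ.filter (fun j => ∀ u : {w : W // w ≠ v}, r u.1 v → f' u < j)

noncomputable def slS (k : ℕ) (f' : {w : W // w ≠ v} → Fin k) : Finset (Fin (k+1)) :=
  univ.filter (fun j => ∀ u : {w : W // w ≠ v}, r u.1 v → (f' u : ℕ) < (j : ℕ))

lemma claimC (k : ℕ) (f' : {w : W // w ≠ v} → Fin k) :
    (slS r v k f').card = (shS r v k f').card + 1 := by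
  have h1 : slS r v k f' = insert (Fin.last k) ((shS r v k f').image Fin.castSucc) := by
    ext j
    simp only [slS, shS, Finset.mem_filter, Finset.mem_univ, true_and, Finset.mem_insert,
      Finset.mem_image]
    rcases Fin.eq_castSucc_or_eq_last j with ⟨j', rfl⟩ | rfl
    · constructor
      · intro h
        exact Or.inr ⟨j', fun u hu => Fin.lt_def.mpr (by simpa using h u hu), rfl⟩
      · rintro (h | ⟨x, hx, hxe⟩)
        · exact absurd h (Fin.castSucc_lt_last j').ne
        · cases Fin.castSucc_injective _ hxe
          intro u hu
          simpa using Fin.lt_def.mp (hx u hu)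
    · exact iff_of_true (fun u _ => by simpa using (f' u).is_lt) (Or.inl rfl)
  rw [h1, Finset.card_insert_of_notMem, Finset.card_image_of_injective _ (Fin.castSucc_injective _)]
  simp only [Finset.mem_image]
  rintro ⟨x, -, hxe⟩
  exact (Fin.castSucc_lt_last x).ne hxe


lemma claimA (hv : ∀ w, ¬ r v w) (k : ℕ) :
    SCcard W r (k+1) =
      (∑ f' ∈ SCf r v (k+1), (shS r v (k+1) f').card) +
      (∑ f' ∈ SCf r v k, (slS r v k f').card) := by
  classical
  set P : (W → Fin (k+1)) → Prop := fun f => Function.Surjective f ∧ ∀ x y, r x y → f x < f y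
    with hP
  set Sh : (W → Fin (k+1)) → Prop := fun f => ∃ u : {w : W // w ≠ v}, f u.1 = f v with hSh
  have hsplit : SCcard W r (k+1) =
      ((univ.filter P).filter Sh).card + ((univ.filter P).filter (fun f => ¬ Sh f)).card := by
    rw [SCcard, Finset.card_filter_add_card_filter_not]
  rw [hsplit]
  congr 1
  · -- shared part
    have hmaps : ∀ f ∈ (univ.filter P).filter Sh,
        (fun u : {w : W // w ≠ v} => f u.1) ∈ SCf r v (k+1) := by
      intro f hf
      simp only [Finset.mem_filter, Finset.mem_univ, true_and, hP, hSh] at hf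
      obtain ⟨⟨hsurj, hcpt⟩, hsh⟩ := hf
      rw [SCf, Finset.mem_filter]
      refine ⟨Finset.mem_univ _, ?_, fun x y h => hcpt x.1 y.1 h⟩
      intro j
      obtain ⟨w, hw⟩ := hsurj j
      by_cases hwv : w = v
      · obtain ⟨u, hu⟩ := hsh
        exact ⟨u, by show f u.1 = j; rw [hu, ← hwv, hw]⟩
      · exact ⟨⟨w, hwv⟩, hw⟩
    rw [Finset.card_eq_sum_card_fiberwise hmaps]
    refine Finset.sum_congr rfl fun f' hf' => ?_
    simp only [SCf, Finset.mem_filter, Finset.mem_univ, true_and] at hf'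
    obtain ⟨hsurj', hcpt'⟩ := hf'
    apply Finset.card_bij (i := fun f _ => f v)
    · intro f hf
      simp only [Finset.mem_filter, Finset.mem_univ, true_and, hP, hSh] at hf
      obtain ⟨⟨⟨hsurj, hcpt⟩, hsh⟩, hres⟩ := hf
      rw [shS, Finset.mem_filter]
      refine ⟨Finset.mem_univ _, fun u hu => ?_⟩
      rw [← hres]
      exact hcpt u.1 v hu
    · intro f1 h1 f2 h2 heqv
      simp only [Finset.mem_filter] at h1 h2
      funext w
      by_cases hw : w = v
      · rw [hw]; exact heqv
      · have := congrFun (h1.2.trans h2.2.symm) ⟨w, hw⟩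
        exact this
    · intro j hj
      rw [shS, Finset.mem_filter] at hj
      refine ⟨fun w => if h : w = v then j else f' ⟨w, h⟩, ?_, dif_pos rfl⟩
      have hres : (fun u : {w : W // w ≠ v} =>
          (fun w => if h : w = v then j else f' ⟨w, h⟩) u.1) = f' := by
        funext u
        simp only [dif_neg u.2]
      simp only [Finset.mem_filter, Finset.mem_univ, true_and, hP, hSh]
      refine ⟨⟨⟨?_, ?_⟩, ?_⟩, hres⟩
      · intro j'
        obtain ⟨u, hu⟩ := hsurj' j'
        exact ⟨u.1, by simp [u.2, hu]⟩
      · intro x y hr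
        by_cases hx : x = v
        · subst hx; exact absurd hr (hv y)
        · by_cases hy : y = v
          · subst hy
            simp only [dif_neg hx, dif_pos rfl]
            exact hj.2 ⟨x, hx⟩ hr
          · simp only [dif_neg hx, dif_neg hy]
            exact hcpt' ⟨x, hx⟩ ⟨y, hy⟩ hr
      · obtain ⟨u, hu⟩ := hsurj' j
        exact ⟨u, by simp [u.2, hu]⟩
  · -- unshared part
    set pairF : Finset (({w : W // w ≠ v} → Fin (k+1)) × Fin (k+1)) :=
      univ.filter (fun p =>
        (∀ j' : Fin (k+1), j' ≠ p.2 → ∃ u, p.1 u = j') ∧ (∀ u, p.1 u ≠ p.2) ∧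
        (∀ x y : {w : W // w ≠ v}, r x.1 y.1 → p.1 x < p.1 y) ∧
        (∀ u : {w : W // w ≠ v}, r u.1 v → p.1 u < p.2)) with hpairF
    have hstepA : ((univ.filter P).filter (fun f => ¬ Sh f)).card = pairF.card := by
      apply Finset.card_bij'
        (i := fun f _ => ((fun u : {w : W // w ≠ v} => f u.1), f v))
        (j := fun p _ => fun w => if h : w = v then p.2 else p.1 ⟨w, h⟩)
      · intro f hf
        simp only [Finset.mem_filter, Finset.mem_univ, true_and, hP, hSh] at hf
        obtain ⟨⟨hsurj, hcpt⟩, hnsh⟩ := hf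
        push_neg at hnsh
        simp only [hpairF, Finset.mem_filter, Finset.mem_univ, true_and]
        refine ⟨?_, hnsh, fun x y h => hcpt x.1 y.1 h, fun u hu => hcpt u.1 v hu⟩
        intro j' hj'
        obtain ⟨w, hw⟩ := hsurj j'
        have hwv : w ≠ v := by rintro rfl; exact hj' hw.symm
        exact ⟨⟨w, hwv⟩, hw⟩
      · intro p hp
        simp only [hpairF, Finset.mem_filter, Finset.mem_univ, true_and] at hp
        obtain ⟨hsur, hne, hcpt, hin⟩ := hp
        simp only [Finset.mem_filter, Finset.mem_univ, true_and, hP, hSh]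
        refine ⟨⟨?_, ?_⟩, ?_⟩
        · intro j'
          by_cases hj' : j' = p.2
          · exact ⟨v, by simp [hj']⟩
          · obtain ⟨u, hu⟩ := hsur j' hj'
            exact ⟨u.1, by simp [u.2, hu]⟩
        · intro x y hr
          by_cases hx : x = v
          · exact absurd hr (by rw [hx]; exact hv y)
          · by_cases hy : y = v
            · show (if h : x = v then p.2 else p.1 ⟨x, h⟩) < if h : y = v then p.2 else p.1 ⟨y, h⟩
              rw [dif_neg hx, dif_pos hy]
              exact hin ⟨x, hx⟩ (hy ▸ hr)
            · show (if h : x = v then p.2 else p.1 ⟨x, h⟩) < if h : y = v then p.2 else p.1 ⟨y, h⟩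
              rw [dif_neg hx, dif_neg hy]
              exact hcpt ⟨x, hx⟩ ⟨y, hy⟩ hr
        · rintro ⟨u, hu⟩
          simp only [u.2, dite_false, dif_pos rfl, Subtype.coe_eta] at hu
          exact hne u (by simpa [u.2] using hu)
      · intro f hf
        funext w
        by_cases hw : w = v <;> simp [hw]
      · intro p hp
        refine Prod.ext ?_ (by simp)
        funext u
        simp [u.2]
    rw [hstepA, ← Finset.card_sigma]
    apply Finset.card_bij (i := fun p (hp : p ∈ pairF) =>
      (⟨fun u => ⟨if (p.1 u : ℕ) < (p.2 : ℕ) then (p.1 u : ℕ) else (p.1 u : ℕ) - 1, by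
          rw [hpairF] at hp
          have hne : p.1 u ≠ p.2 := (Finset.mem_filter.mp hp).2.2.1 u
          have h1 : (p.1 u : ℕ) ≤ k := Fin.is_le _
          have h2 : (p.2 : ℕ) ≤ k := Fin.is_le _
          have h3 : (p.1 u : ℕ) ≠ (p.2 : ℕ) := fun hc => hne (Fin.ext hc)
          split_ifs with h <;> omega⟩, p.2⟩ :
        Σ _ : ({w : W // w ≠ v} → Fin k), Fin (k+1)))
    · intro p hp
      have hp2 := hp
      rw [hpairF] at hp2
      obtain ⟨-, hsur, hne, hcpt, hin⟩ := Finset.mem_filter.mp hp2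
      rw [Finset.mem_sigma]
      constructor
      · rw [SCf, Finset.mem_filter]
        refine ⟨Finset.mem_univ _, ?_, ?_⟩
        · intro j'
          by_cases h : (j' : ℕ) < (p.2 : ℕ)
          · obtain ⟨u, hu⟩ := hsur (Fin.castSucc j')
              (by intro hc; have := congrArg Fin.val hc; simp only [Fin.coe_castSucc] at this; omega)
            have hval : (p.1 u : ℕ) = (j' : ℕ) := by rw [hu]; simp
            refine ⟨u, Fin.ext ?_⟩
            show (if (p.1 u : ℕ) < (p.2 : ℕ) then (p.1 u : ℕ) else (p.1 u : ℕ) - 1) = (j' : ℕ)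
            rw [hval, if_pos h]
          · have hle := Fin.is_lt j'
            obtain ⟨u, hu⟩ := hsur (Fin.succ j')
              (by intro hc; have := congrArg Fin.val hc; simp only [Fin.val_succ] at this; omega)
            have hval : (p.1 u : ℕ) = (j' : ℕ) + 1 := by rw [hu]; simp
            refine ⟨u, Fin.ext ?_⟩
            show (if (p.1 u : ℕ) < (p.2 : ℕ) then (p.1 u : ℕ) else (p.1 u : ℕ) - 1) = (j' : ℕ)
            rw [hval, if_neg (by omega)]
            omega
        · intro x y hr
          have h := Fin.lt_def.mp (hcpt x y hr)
          have hnx : (p.1 x : ℕ) ≠ (p.2 : ℕ) := fun hc => hne x (Fin.ext hc)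
          have hny : (p.1 y : ℕ) ≠ (p.2 : ℕ) := fun hc => hne y (Fin.ext hc)
          rw [Fin.lt_def]
          show (if (p.1 x : ℕ) < (p.2 : ℕ) then (p.1 x : ℕ) else (p.1 x : ℕ) - 1) <
            (if (p.1 y : ℕ) < (p.2 : ℕ) then (p.1 y : ℕ) else (p.1 y : ℕ) - 1)
          split_ifs <;> omega
      · rw [slS, Finset.mem_filter]
        refine ⟨Finset.mem_univ _, fun u hu => ?_⟩
        have h := Fin.lt_def.mp (hin u hu)
        show (if (p.1 u : ℕ) < (p.2 : ℕ) then (p.1 u : ℕ) else (p.1 u : ℕ) - 1) < (p.2 : ℕ)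
        rw [if_pos h]; exact h
    · intro p hp q hq heq
      have hp2 := hp; rw [hpairF] at hp2
      have hq2 := hq; rw [hpairF] at hq2
      have hnep := (Finset.mem_filter.mp hp2).2.2.1
      have hneq := (Finset.mem_filter.mp hq2).2.2.1
      have h2 : p.2 = q.2 :=
        congrArg (fun x : Σ _ : ({w : W // w ≠ v} → Fin k), Fin (k+1) => x.2) heq
      have h1 : _ = _ :=
        congrArg (fun x : Σ _ : ({w : W // w ≠ v} → Fin k), Fin (k+1) => x.1) heq
      refine Prod.ext ?_ h2
      funext u
      apply Fin.ext
      have hcv := congrArg Fin.val (congrFun h1 u)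
      simp only at hcv
      have hJ : (p.2 : ℕ) = (q.2 : ℕ) := congrArg Fin.val h2
      have e1 : (p.1 u : ℕ) ≠ (p.2 : ℕ) := fun hc => hnep u (Fin.ext hc)
      have e2 : (q.1 u : ℕ) ≠ (q.2 : ℕ) := fun hc => hneq u (Fin.ext hc)
      have l1 : (p.1 u : ℕ) ≤ k := Fin.is_le _
      have l2 : (q.1 u : ℕ) ≤ k := Fin.is_le _
      split_ifs at hcv <;> omega
    · rintro ⟨g', j⟩ hb
      rw [Finset.mem_sigma] at hb
      obtain ⟨hg', hj⟩ := hb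
      rw [SCf, Finset.mem_filter] at hg'
      obtain ⟨-, hsurj', hcpt'⟩ := hg'
      rw [slS, Finset.mem_filter] at hj
      have hjcond := hj.2
      dsimp only at hsurj' hcpt' hjcond
      have hjk : (j : ℕ) ≤ k := Fin.is_le _
      refine ⟨(fun u => if (g' u : ℕ) < (j : ℕ) then Fin.castSucc (g' u) else Fin.succ (g' u), j),
        ?_, ?_⟩
      · rw [hpairF, Finset.mem_filter]
        refine ⟨Finset.mem_univ _, ?_, ?_, ?_, ?_⟩
        · intro j' hj'
          dsimp only at hj' ⊢
          by_cases h : (j' : ℕ) < (j : ℕ)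
          · obtain ⟨u, hu⟩ := hsurj' ⟨(j' : ℕ), by omega⟩
            have hval : (g' u : ℕ) = (j' : ℕ) := congrArg Fin.val hu
            refine ⟨u, Fin.ext ?_⟩
            rw [apply_ite Fin.val, if_pos (by omega : (g' u : ℕ) < (j : ℕ))]
            simp [hval]
          · have h1j : (j' : ℕ) ≠ (j : ℕ) := fun hc => hj' (Fin.ext hc)
            have hle := Fin.is_le j'
            obtain ⟨u, hu⟩ := hsurj' ⟨(j' : ℕ) - 1, by omega⟩
            have hval : (g' u : ℕ) = (j' : ℕ) - 1 := congrArg Fin.val hu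
            refine ⟨u, Fin.ext ?_⟩
            rw [apply_ite Fin.val, if_neg (by omega : ¬ ((g' u : ℕ) < (j : ℕ)))]
            simp only [Fin.val_succ, hval]
            omega
        · intro u hc
          dsimp only at hc
          have hcv := congrArg Fin.val hc
          rw [apply_ite Fin.val] at hcv
          simp only [Fin.coe_castSucc, Fin.val_succ] at hcv
          split_ifs at hcv <;> omega
        · intro x y hr
          dsimp only
          have h := Fin.lt_def.mp (hcpt' x y hr)
          have l1 : (g' x : ℕ) < k := Fin.is_lt _
          have l2 : (g' y : ℕ) < k := Fin.is_lt _
          rw [Fin.lt_def, apply_ite Fin.val, apply_ite Fin.val]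
          simp only [Fin.coe_castSucc, Fin.val_succ]
          split_ifs <;> omega
        · intro u hu
          dsimp only
          have h := hjcond u hu
          rw [Fin.lt_def, apply_ite Fin.val]
          simp only [Fin.coe_castSucc, Fin.val_succ]
          rw [if_pos h]
          exact h
      · apply Sigma.ext
        · funext u
          apply Fin.ext
          dsimp only
          have l1 : (g' u : ℕ) < k := Fin.is_lt _
          rw [apply_ite Fin.val]
          rw [show ((if (g' u : ℕ) < (j : ℕ) then Fin.castSucc (g' u) else Fin.succ (g' u)) : ℕ)
            = (if (g' u : ℕ) < (j : ℕ) then ((g' u : ℕ)) else ((g' u : ℕ) + 1)) from by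
              split_ifs <;> simp]
          split_ifs <;> omega
        · exact heq_of_eq rfl

end Claims

lemma signed_sum : ∀ (n : ℕ) (W : Type) [Fintype W] [DecidableEq W] (r : W → W → Prop),
    ¬ RelCycle r → Fintype.card W = n →
    ∑ k ∈ Finset.range (n+1), (-1 : ℤ)^k * SCcard W r k = (-1)^n := by
  intro n
  induction n with
  | zero =>
    intro W _ _ r _ hcard
    haveI : IsEmpty W := Fintype.card_eq_zero_iff.mp hcard
    simp [SCcard_empty r]
  | succ n IH =>
    intro W _ _ r hcyc hcard
    haveI : Nonempty W := Fintype.card_pos_iff.mp (by omega)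
    obtain ⟨v, hv⟩ := exists_sink hcyc
    have hcard' : Fintype.card {w : W // w ≠ v} = n := by
      rw [Fintype.card_subtype_compl, Fintype.card_subtype_eq, hcard]
      omega
    have hcyc' : ¬ RelCycle (fun x y : {w : W // w ≠ v} => r x.1 y.1) := by
      rintro ⟨m, hm, g, hg⟩
      exact hcyc ⟨m, hm, fun i => (g i).1, fun i => hg i⟩
    have IH' := IH {w : W // w ≠ v} (fun x y => r x.1 y.1) hcyc' hcard'
    set SH : ℕ → ℤ := fun k => ∑ f' ∈ SCf r v k, ((shS r v k f').card : ℤ) with hSH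
    set G : ℕ → ℤ := fun k =>
      ((SCcard {w : W // w ≠ v} (fun x y => r x.1 y.1) k : ℕ) : ℤ) with hG
    have hC : ∀ k, ∑ f' ∈ SCf r v k, ((slS r v k f').card : ℤ) = SH k + G k := by
      intro k
      have : ∀ f' ∈ SCf r v k, ((slS r v k f').card : ℤ) = ((shS r v k f').card : ℤ) + 1 := by
        intro f' _
        rw [claimC]
        push_cast
        ring
      rw [Finset.sum_congr rfl this, Finset.sum_add_distrib]
      congr 1
      rw [Finset.sum_const]
      have h5 := SCf_card r v k
      simp only [hG, smul_eq_mul, mul_one]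
      rw [h5]
      simp
    have hA : ∀ k, (SCcard W r (k+1) : ℤ) =
        SH (k+1) + ∑ f' ∈ SCf r v k, ((slS r v k f').card : ℤ) := by
      intro k
      rw [claimA r v hv k]
      push_cast [hSH]
      ring
    have hSH0 : SH 0 = 0 := by
      show ∑ f' ∈ SCf r v 0, ((shS r v 0 f').card : ℤ) = 0
      apply Finset.sum_eq_zero
      intro f' _
      simp [shS]
    have hSHtop : SH (n+1) = 0 := by
      have h0 : (SCf r v (n+1)).card = 0 := by
        rw [SCf_card]
        exact SCcard_eq_zero_of_card_lt _ (by omega)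
      show ∑ f' ∈ SCf r v (n+1), ((shS r v (n+1) f').card : ℤ) = 0
      rw [Finset.card_eq_zero.mp h0, Finset.sum_empty]
    have hF0 : (SCcard W r 0 : ℤ) = 0 := by
      rw [SCcard_zero_of_nonempty]
      rfl
    have e1 : ∑ k ∈ Finset.range (n+1), (-1:ℤ)^(k+1) * SH (k+1)
        = ∑ k ∈ Finset.range (n+1), (-1:ℤ)^k * SH k := by
      have h2 := Finset.sum_range_succ' (fun k => (-1:ℤ)^k * SH k) (n+1)
      have h3 := Finset.sum_range_succ (fun k => (-1:ℤ)^k * SH k) (n+1)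
      simp only [hSHtop, hSH0, mul_zero, add_zero, pow_zero, one_mul] at h2 h3
      rw [h3] at h2
      linarith [h2]
    calc ∑ k ∈ Finset.range (n+1+1), (-1:ℤ)^k * SCcard W r k
        = ∑ k ∈ Finset.range (n+1), (-1:ℤ)^(k+1) * SCcard W r (k+1)
          + (-1:ℤ)^0 * SCcard W r 0 :=
          Finset.sum_range_succ' (fun k => (-1:ℤ)^k * SCcard W r k) (n+1)
      _ = ∑ k ∈ Finset.range (n+1), (-1:ℤ)^(k+1) * (SH (k+1) + (SH k + G k)) := by
          rw [hF0]
          simp only [mul_zero, add_zero]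
          refine Finset.sum_congr rfl fun k _ => ?_
          rw [hA k, hC k]
      _ = (∑ k ∈ Finset.range (n+1), (-1:ℤ)^(k+1) * SH (k+1))
          + ((∑ k ∈ Finset.range (n+1), (-1:ℤ)^(k+1) * SH k)
          + (∑ k ∈ Finset.range (n+1), (-1:ℤ)^(k+1) * G k)) := by
          rw [← Finset.sum_add_distrib, ← Finset.sum_add_distrib]
          refine Finset.sum_congr rfl fun k _ => ?_
          ring
      _ = (∑ k ∈ Finset.range (n+1), (-1:ℤ)^k * SH k)
          + ((-(∑ k ∈ Finset.range (n+1), (-1:ℤ)^k * SH k))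
          + (-(∑ k ∈ Finset.range (n+1), (-1:ℤ)^k * G k))) := by
          rw [e1, ← Finset.sum_neg_distrib, ← Finset.sum_neg_distrib]
          congr 1
          congr 1 <;>
          · refine Finset.sum_congr rfl fun k _ => ?_
            rw [pow_succ]
            ring
      _ = -(∑ k ∈ Finset.range (n+1), (-1:ℤ)^k * G k) := by ring
      _ = (-1:ℤ)^(n+1) := by
          have h4 : ∑ k ∈ Finset.range (n+1), (-1:ℤ)^k * G k
              = ∑ k ∈ Finset.range (n+1),
                  (-1:ℤ)^k * (SCcard {w : W // w ≠ v} (fun x y => r x.1 y.1) k : ℤ) := rfl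
          rw [h4, IH']
          ring

section Digraph
variable {V A : Type} [Fintype V] [DecidableEq V] [Fintype A] [DecidableEq A] (s t : A → V)

def relOf (T : Finset A) : V → V → Prop := fun x y => ∃ a ∈ T, s a = x ∧ t a = y

noncomputable def Ncard (T : Finset A) (q : ℕ) : ℕ :=
  (univ.filter (fun f : V → Fin q => ∀ a ∈ T, f (s a) < f (t a))).card

lemma filter_compat_eq (T : Finset A) (q : ℕ) :
    (univ.filter (fun f : V → Fin q => ∀ a ∈ T, f (s a) < f (t a)))
      = (univ.filter (fun f : V → Fin q => ∀ x y, relOf s t T x y → f x < f y)) := by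
  apply Finset.filter_congr
  intro f _
  constructor
  · rintro h x y ⟨a, ha, rfl, rfl⟩
    exact h a ha
  · intro h a ha
    exact h _ _ ⟨a, ha, rfl, rfl⟩

lemma Ncard_eq (T : Finset A) (q : ℕ) :
    Ncard s t T q = ∑ k ∈ Finset.range (Fintype.card V + 1),
      q.choose k * SCcard V (relOf s t T) k := by
  classical
  have stepBC : Ncard s t T q = ∑ T' ∈ (univ : Finset (Finset (Fin q))),
      SCcard V (relOf s t T) T'.card := by
    rw [Ncard, filter_compat_eq]
    rw [Finset.card_eq_sum_card_fiberwise
      (f := fun f : V → Fin q => Finset.image f univ)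
      (t := (univ : Finset (Finset (Fin q)))) (fun f _ => Finset.mem_univ _)]
    refine Finset.sum_congr rfl fun T' _ => ?_
    set e := T'.orderIsoOfFin rfl with he
    apply Finset.card_bij (i := fun f (hf : f ∈ _) => fun w =>
      e.symm ⟨f w, by
        have hmem := (Finset.mem_filter.mp hf).2
        exact hmem ▸ Finset.mem_image_of_mem f (Finset.mem_univ w)⟩)
    · intro f hf
      have himg := (Finset.mem_filter.mp hf).2
      have hcpt := (Finset.mem_filter.mp (Finset.mem_filter.mp hf).1).2
      rw [Finset.mem_filter]
      refine ⟨Finset.mem_univ _, ?_, ?_⟩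
      · intro j
        have hb : (e j).1 ∈ Finset.image f univ := himg ▸ (e j).2
        obtain ⟨w, -, hw⟩ := Finset.mem_image.mp hb
        refine ⟨w, ?_⟩
        have : (⟨f w, by exact himg ▸ Finset.mem_image_of_mem f (Finset.mem_univ w)⟩ :
            {x // x ∈ T'}) = e j := Subtype.ext hw
        exact (congrArg e.symm this).trans (e.symm_apply_apply j)
      · intro x y hr
        have hlt : f x < f y := hcpt x y hr
        have hpx : f x ∈ T' := himg ▸ Finset.mem_image_of_mem f (Finset.mem_univ x)
        have hpy : f y ∈ T' := himg ▸ Finset.mem_image_of_mem f (Finset.mem_univ y)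
        have h7 : (⟨f x, hpx⟩ : {x // x ∈ T'}) < ⟨f y, hpy⟩ := Subtype.mk_lt_mk.mpr hlt
        exact e.symm.lt_iff_lt.mpr h7
    · intro f1 h1 f2 h2 heqv
      funext w
      have := congrFun heqv w
      have h3 := e.symm.injective this
      exact congrArg Subtype.val h3
    · intro g hg
      rw [Finset.mem_filter] at hg
      obtain ⟨-, hsurj, hcpt⟩ := hg
      have himg : Finset.image (fun w => (e (g w) : Fin q)) univ = T' := by
        ext b
        simp only [Finset.mem_image, Finset.mem_univ, true_and]
        constructor
        · rintro ⟨w, rfl⟩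
          exact (e (g w)).2
        · intro hb
          obtain ⟨w, hw⟩ := hsurj (e.symm ⟨b, hb⟩)
          exact ⟨w, by rw [hw]; simp⟩
      refine ⟨fun w => (e (g w) : Fin q), ?_, ?_⟩
      · rw [Finset.mem_filter, Finset.mem_filter]
        refine ⟨⟨Finset.mem_univ _, fun x y hr => ?_⟩, himg⟩
        exact Subtype.coe_lt_coe.mpr (e.lt_iff_lt.mpr (hcpt x y hr))
      · funext w
        have h6 : e.symm ⟨(e (g w) : Fin q), (e (g w)).2⟩ = e.symm (e (g w)) :=
          congrArg e.symm (Subtype.ext rfl)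
        exact h6.trans (e.symm_apply_apply (g w))
  rw [stepBC]
  have stepD : ∑ T' ∈ (univ : Finset (Finset (Fin q))), SCcard V (relOf s t T) T'.card
      = ∑ k ∈ Finset.range (q + 1), q.choose k * SCcard V (relOf s t T) k := by
    rw [← Finset.sum_fiberwise_of_maps_to (g := Finset.card)
      (t := Finset.range (q+1)) (fun T' _ => Finset.mem_range.mpr
        (by have := Finset.card_le_univ T'; simp only [Finset.card_univ, Fintype.card_fin] at this; omega))]
    refine Finset.sum_congr rfl fun k hk => ?_
    have hfil : (univ : Finset (Finset (Fin q))).filter (fun T' => T'.card = k)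
        = Finset.powersetCard k univ := by
      ext T'
      simp [Finset.mem_powersetCard_univ]
    calc ∑ T' ∈ (univ : Finset (Finset (Fin q))).filter (fun T' => T'.card = k),
          SCcard V (relOf s t T) T'.card
        = ∑ T' ∈ (univ : Finset (Finset (Fin q))).filter (fun T' => T'.card = k),
          SCcard V (relOf s t T) k := by
          refine Finset.sum_congr rfl fun T' hT' => ?_
          rw [(Finset.mem_filter.mp hT').2]
      _ = q.choose k * SCcard V (relOf s t T) k := by
          rw [Finset.sum_const, hfil, Finset.card_powersetCard, Finset.card_univ,
            Fintype.card_fin, smul_eq_mul]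
  rw [stepD]
  have h1 : ∑ k ∈ Finset.range (q + 1), q.choose k * SCcard V (relOf s t T) k
      = ∑ k ∈ Finset.range (q + Fintype.card V + 2), q.choose k * SCcard V (relOf s t T) k := by
    apply Finset.sum_subset
    · intro k hk
      rw [Finset.mem_range] at *
      omega
    · intro k hk hnk
      rw [Finset.mem_range] at hnk
      rw [Nat.choose_eq_zero_of_lt (by omega), zero_mul]
  have h2 : ∑ k ∈ Finset.range (Fintype.card V + 1), q.choose k * SCcard V (relOf s t T) k
      = ∑ k ∈ Finset.range (q + Fintype.card V + 2), q.choose k * SCcard V (relOf s t T) k := by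
    apply Finset.sum_subset
    · intro k hk
      rw [Finset.mem_range] at *
      omega
    · intro k hk hnk
      rw [Finset.mem_range] at hnk
      rw [SCcard_eq_zero_of_card_lt _ (by omega), mul_zero]
  rw [h1, ← h2]

end Digraph

lemma descPoch_neg_one (k : ℕ) : (descPochhammer ℚ k).eval (-1 : ℚ) = (-1)^k * k.factorial := by
  induction k with
  | zero => simp
  | succ n ih =>
    rw [descPochhammer_succ_eval, ih, Nat.factorial_succ]
    push_cast
    ring

lemma SCcard_eq_zero_of_relCycle {W : Type} [Fintype W] [DecidableEq W] {r : W → W → Prop}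
    (h : RelCycle r) (k : ℕ) : SCcard W r k = 0 := by
  obtain ⟨m, hm, g, hg⟩ := h
  haveI : NeZero m := ⟨by omega⟩
  rw [SCcard, Finset.card_eq_zero, Finset.filter_eq_empty_iff]
  rintro f - ⟨-, hcpt⟩
  obtain ⟨i, hi⟩ := Finite.exists_max (fun i : ZMod m => f (g i))
  exact absurd (hcpt _ _ (hg i)) (not_lt.mpr (hi (i+1)))

section Digraph2
variable {V A : Type} [Fintype V] [DecidableEq V] [Fintype A] [DecidableEq A] (s t : A → V)

lemma hasDicycle_iff (S : Finset A) :
    HasDicycle (fun b : {a : A // a ∉ S} => s b.1) (fun b : {a : A // a ∉ S} => t b.1)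
      ↔ RelCycle (relOf s t Sᶜ) := by
  constructor
  · rintro ⟨m, hm, c, hc⟩
    exact ⟨m, hm, fun i => s (c i).1,
      fun i => ⟨(c i).1, Finset.mem_compl.mpr (c i).2, rfl, hc i⟩⟩
  · rintro ⟨m, hm, g, hg⟩
    choose ar hmem hs ht using hg
    refine ⟨m, hm, fun i => ⟨ar i, Finset.mem_compl.mp (hmem i)⟩, fun i => ?_⟩
    show t (ar i) = s (ar (i+1))
    rw [ht i]
    exact (hs (i+1)).symm

lemma colorSum_expand (q : ℕ) (y : ℚ) :
    colorSum V A s t q (1+y) 1 = ∑ T : Finset A, y ^ T.card * (Ncard s t T q : ℚ) := by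
  rw [colorSum]
  calc ∑ f : V → Fin q, (1+y) ^ (univ.filter (fun a => f (s a) < f (t a))).card
          * (1:ℚ) ^ (univ.filter (fun a => f (t a) < f (s a))).card
      = ∑ f : V → Fin q, ∑ T ∈ (univ.filter (fun a => f (s a) < f (t a))).powerset,
          y ^ T.card := by
        refine Finset.sum_congr rfl fun f _ => ?_
        rw [one_pow, mul_one]
        have h := Finset.prod_add (fun _ => y) (fun _ => (1:ℚ))
          (univ.filter (fun a => f (s a) < f (t a)))
        simp only [Finset.prod_const, one_pow, mul_one] at h
        rw [add_comm 1 y, h]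
    _ = ∑ f : V → Fin q, ∑ T ∈ (univ : Finset (Finset A)),
          ite (T ⊆ univ.filter (fun a => f (s a) < f (t a))) (y ^ T.card) 0 := by
        refine Finset.sum_congr rfl fun f _ => ?_
        have h2 : (univ : Finset (Finset A)).filter
            (fun T => T ⊆ univ.filter (fun a => f (s a) < f (t a)))
            = (univ.filter (fun a => f (s a) < f (t a))).powerset := by
          ext T
          simp [Finset.mem_powerset]
        rw [← h2, Finset.sum_filter]
    _ = ∑ T ∈ (univ : Finset (Finset A)), ∑ f : V → Fin q,
          ite (T ⊆ univ.filter (fun a => f (s a) < f (t a))) (y ^ T.card) 0 :=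
        Finset.sum_comm
    _ = ∑ T : Finset A, y ^ T.card * (Ncard s t T q : ℚ) := by
        refine Finset.sum_congr rfl fun T _ => ?_
        rw [← Finset.sum_filter, Finset.sum_const, nsmul_eq_mul, mul_comm]
        congr 1
        have h3 : (univ : Finset (V → Fin q)).filter
            (fun f => T ⊆ univ.filter (fun a => f (s a) < f (t a)))
            = univ.filter (fun f : V → Fin q => ∀ a ∈ T, f (s a) < f (t a)) := by
          apply Finset.filter_congr
          intro f _
          constructor
          · intro h a ha
            exact (Finset.mem_filter.mp (h ha)).2
          · intro h a ha
            exact Finset.mem_filter.mpr ⟨Finset.mem_univ _, h a ha⟩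
        rw [h3]
        rfl

end Digraph2


/-- for a digraph `D = (V,A)`, as polynomials in `y` (stated for all
rational `y`): `Σ_{S ⊆ A : D∖S acyclic} y^{|A∖S|} = (−1)^{|V|} · B_D(−1, 1+y, 1)`,
where `D∖S` deletes the arcs in `S`. -/
theorem acyclic_subgraphs_gen_function
    (V A : Type) [Fintype V] [DecidableEq V] [Fintype A] [DecidableEq A]
    (s t : A → V)
    (B : MvPolynomial (Fin 3) ℚ)
    (hB : ∀ q : ℕ, 0 < q → ∀ y z : ℚ,
      MvPolynomial.eval ![(q : ℚ), y, z] B = colorSum V A s t q y z) :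
    ∀ y : ℚ,
      ∑ S ∈ (Finset.univ : Finset (Finset A)).filter
          (fun S => ¬ HasDicycle
            (fun b : {a : A // a ∉ S} => s b.1)
            (fun b : {a : A // a ∉ S} => t b.1)),
        y ^ (Sᶜ : Finset A).card
      = (-1 : ℚ) ^ (Fintype.card V) *
        MvPolynomial.eval ![(-1 : ℚ), 1 + y, 1] B := by
  intro y
  set n := Fintype.card V with hn
  set PT : Finset A → Polynomial ℚ := fun T =>
    ∑ k ∈ Finset.range (n+1),
      Polynomial.C ((SCcard V (relOf s t T) k : ℚ) / k.factorial) * descPochhammer ℚ k with hPT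
  set Ppoly : Polynomial ℚ := ∑ T : Finset A, Polynomial.C (y ^ T.card) * PT T with hPp
  set gpoly : Polynomial ℚ :=
    MvPolynomial.aeval ![Polynomial.X, Polynomial.C (1+y), Polynomial.C 1] B with hgp
  have hgeval : ∀ c : ℚ, gpoly.eval c = MvPolynomial.eval ![c, 1+y, 1] B := by
    intro c
    have h := MvPolynomial.comp_aeval (R := ℚ)
      (f := ![Polynomial.X, Polynomial.C (1+y), Polynomial.C 1]) (φ := Polynomial.aeval c)
    have h2 := congrFun (congrArg DFunLike.coe h) B
    simp only [AlgHom.coe_comp, Function.comp_apply] at h2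
    rw [Polynomial.coe_aeval_eq_eval] at h2
    rw [hgp, h2]
    have h3 : (fun i => Polynomial.eval c (![Polynomial.X, Polynomial.C (1+y),
        Polynomial.C 1] i)) = ![c, 1+y, 1] := by
      funext i
      fin_cases i <;> simp
    rw [h3, MvPolynomial.aeval_def]
    rfl
  have hPTeval : ∀ (T : Finset A) (q : ℕ), (PT T).eval (q : ℚ) = (Ncard s t T q : ℚ) := by
    intro T q
    rw [hPT]
    simp only
    rw [Polynomial.eval_finset_sum]
    have hterm : ∀ k ∈ Finset.range (n+1),
        (Polynomial.C ((SCcard V (relOf s t T) k : ℚ) / k.factorial)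
          * descPochhammer ℚ k).eval (q : ℚ)
        = (q.choose k : ℚ) * (SCcard V (relOf s t T) k : ℚ) := by
      intro k _
      rw [Polynomial.eval_mul, Polynomial.eval_C, descPochhammer_eval_eq_descFactorial,
        Nat.descFactorial_eq_factorial_mul_choose]
      have hk : (k.factorial : ℚ) ≠ 0 := Nat.cast_ne_zero.mpr k.factorial_ne_zero
      push_cast
      field_simp
    rw [Finset.sum_congr rfl hterm, Ncard_eq s t T q]
    push_cast
    rfl
  have hPpeval : ∀ q : ℕ, Ppoly.eval (q : ℚ) = ∑ T : Finset A, y ^ T.card * (Ncard s t T q : ℚ) := by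
    intro q
    rw [hPp, Polynomial.eval_finset_sum]
    refine Finset.sum_congr rfl fun T _ => ?_
    rw [Polynomial.eval_mul, Polynomial.eval_C, hPTeval T q]
  have hpq : gpoly = Ppoly := by
    have hroot : {x : ℚ | (gpoly - Ppoly).IsRoot x}.Infinite := by
      apply Set.infinite_of_injective_forall_mem (f := fun m : ℕ => (m : ℚ) + 1)
      · intro a b hab
        simpa using hab
      · intro m
        simp only [Set.mem_setOf_eq, Polynomial.IsRoot, Polynomial.eval_sub]
        have h1 : ((m : ℚ) + 1) = ((m+1 : ℕ) : ℚ) := by push_cast; ring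
        rw [h1, hgeval, hPpeval, hB (m+1) (by omega) (1+y) 1, colorSum_expand s t (m+1) y]
        ring
    have h0 := Polynomial.eq_zero_of_infinite_isRoot _ hroot
    have h5 : gpoly - Ppoly = 0 := h0
    linear_combination h5
  have hPT1 : ∀ T : Finset A, ¬ RelCycle (relOf s t T) →
      (PT T).eval (-1 : ℚ) = (-1)^n := by
    intro T hT
    rw [hPT]
    simp only
    rw [Polynomial.eval_finset_sum]
    have hsg := signed_sum n V (relOf s t T) hT hn.symm
    have hcast : (∑ k ∈ Finset.range (n+1),
        (-1:ℚ)^k * (SCcard V (relOf s t T) k : ℚ)) = (-1:ℚ)^n := by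
      exact_mod_cast congrArg (fun z : ℤ => (z : ℚ)) hsg
    rw [← hcast]
    refine Finset.sum_congr rfl fun k _ => ?_
    rw [Polynomial.eval_mul, Polynomial.eval_C, descPoch_neg_one]
    have hk : (k.factorial : ℚ) ≠ 0 := Nat.cast_ne_zero.mpr k.factorial_ne_zero
    field_simp
  have hPT0 : ∀ T : Finset A, RelCycle (relOf s t T) → (PT T).eval (-1 : ℚ) = 0 := by
    intro T hT
    rw [hPT]
    simp only
    rw [Polynomial.eval_finset_sum]
    apply Finset.sum_eq_zero
    intro k _
    rw [SCcard_eq_zero_of_relCycle hT]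
    simp
  have hfinal : MvPolynomial.eval ![(-1:ℚ), 1+y, 1] B = Ppoly.eval (-1) := by
    rw [← hgeval, hpq]
  rw [hfinal, hPp, Polynomial.eval_finset_sum]
  have hterm2 : ∀ T ∈ (univ : Finset (Finset A)),
      (Polynomial.C (y ^ T.card) * PT T).eval (-1:ℚ)
      = ite (¬ RelCycle (relOf s t T)) ((-1:ℚ)^n * y^T.card) 0 := by
    intro T _
    rw [Polynomial.eval_mul, Polynomial.eval_C]
    by_cases hT : RelCycle (relOf s t T)
    · rw [hPT0 T hT, if_neg (not_not_intro hT)]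
      ring
    · rw [hPT1 T hT, if_pos hT]
      ring
  rw [Finset.sum_congr rfl hterm2, ← Finset.sum_filter, Finset.mul_sum]
  have hpow : ∀ x : ℚ, (-1:ℚ)^n * ((-1:ℚ)^n * x) = x := by
    intro x
    rw [← mul_assoc, ← pow_add]
    have : Even (n + n) := ⟨n, rfl⟩
    rw [this.neg_one_pow, one_mul]
  conv_rhs => rw [Finset.sum_congr rfl (fun T _ => hpow (y ^ T.card))]
  apply Finset.sum_nbij' (i := fun S => Sᶜ) (j := fun T => Tᶜ)
  · intro S hS
    rw [Finset.mem_filter] at hS ⊢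
    refine ⟨Finset.mem_univ _, ?_⟩
    rw [← hasDicycle_iff s t S]
    exact hS.2
  · intro T hT
    rw [Finset.mem_filter] at hT ⊢
    refine ⟨Finset.mem_univ _, ?_⟩
    rw [hasDicycle_iff s t Tᶜ, compl_compl]
    exact hT.2
  · intro S _
    exact compl_compl S
  · intro T _
    exact compl_compl T
  · intro S _
    rfl
end

section
/- Let D = (V,A) be a digraph whose underlying graph (obtained by forgetting arc directions) is a forest, i.e., contains no cycle. Then, as an identity in the field of rational functions in q, y, z: B_D(−q, y, z) = (−1)^{|V|} · (y+z−1)^{|A|} · B_D(q, y/(y+z−1), z/(y+z−1)). -/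
open Finset

/-- The graph underlying the digraph (arc directions forgotten) contains a cycle,
i.e. there is a closed walk of positive length using pairwise distinct edges. -/
def UnderlyingHasCycle {V A : Type} (s t : A → V) : Prop :=
  ∃ n : ℕ, 0 < n ∧ ∃ (e : ZMod n → A) (v : ZMod n → V),
    Function.Injective e ∧
    ∀ i, (s (e i) = v i ∧ t (e i) = v (i + 1)) ∨ (t (e i) = v i ∧ s (e i) = v (i + 1))


namespace ForestB

/-- Evaluation of a `Polynomial (Polynomial ℚ)`: outer variable gets `b`,
inner variable gets `a`. -/
noncomputable def ev2 (p : Polynomial (Polynomial ℚ)) (a b : ℚ) : ℚ :=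
  Polynomial.eval a (Polynomial.eval (Polynomial.C b) p)

lemma ev2_eq_eval₂ (p : Polynomial (Polynomial ℚ)) (a b : ℚ) :
    ev2 p a b = Polynomial.eval₂ (Polynomial.evalRingHom a) b p := by
  unfold ev2
  have : Polynomial.eval (Polynomial.C b) p
      = Polynomial.eval₂ (RingHom.id _) (Polynomial.C b) p := rfl
  rw [this, show Polynomial.eval a (Polynomial.eval₂ (RingHom.id _) (Polynomial.C b) p)
      = (Polynomial.evalRingHom a) (Polynomial.eval₂ (RingHom.id _) (Polynomial.C b) p) from rfl,
    Polynomial.hom_eval₂]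
  simp

/-- `F : ℚ → ℚ → ℚ` is a polynomial function of two variables. -/
def IsP2 (F : ℚ → ℚ → ℚ) : Prop := ∃ p, F = fun a b => ev2 p a b

lemma ev2_add (p q : Polynomial (Polynomial ℚ)) (a b : ℚ) :
    ev2 (p + q) a b = ev2 p a b + ev2 q a b := by simp [ev2]

lemma ev2_mul (p q : Polynomial (Polynomial ℚ)) (a b : ℚ) :
    ev2 (p * q) a b = ev2 p a b * ev2 q a b := by simp [ev2]

lemma ev2_neg (p : Polynomial (Polynomial ℚ)) (a b : ℚ) :
    ev2 (-p) a b = - ev2 p a b := by simp [ev2]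

lemma ev2_sub (p q : Polynomial (Polynomial ℚ)) (a b : ℚ) :
    ev2 (p - q) a b = ev2 p a b - ev2 q a b := by simp [ev2]

lemma ev2_C (r : ℚ) (a b : ℚ) : ev2 (Polynomial.C (Polynomial.C r)) a b = r := by simp [ev2]

lemma isP2_const (r : ℚ) : IsP2 (fun _ _ => r) :=
  ⟨Polynomial.C (Polynomial.C r), by funext a b; rw [ev2_C]⟩

lemma IsP2.mul {F G : ℚ → ℚ → ℚ} (hF : IsP2 F) (hG : IsP2 G) :
    IsP2 (fun a b => F a b * G a b) := by
  obtain ⟨p, rfl⟩ := hF; obtain ⟨q, rfl⟩ := hG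
  exact ⟨p * q, by funext a b; rw [ev2_mul]⟩

lemma IsP2.add {F G : ℚ → ℚ → ℚ} (hF : IsP2 F) (hG : IsP2 G) :
    IsP2 (fun a b => F a b + G a b) := by
  obtain ⟨p, rfl⟩ := hF; obtain ⟨q, rfl⟩ := hG
  exact ⟨p + q, by funext a b; rw [ev2_add]⟩

lemma IsP2.sub {F G : ℚ → ℚ → ℚ} (hF : IsP2 F) (hG : IsP2 G) :
    IsP2 (fun a b => F a b - G a b) := by
  obtain ⟨p, rfl⟩ := hF; obtain ⟨q, rfl⟩ := hG
  exact ⟨p - q, by funext a b; rw [ev2_sub]⟩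

lemma IsP2.neg {F : ℚ → ℚ → ℚ} (hF : IsP2 F) : IsP2 (fun a b => - F a b) := by
  obtain ⟨p, rfl⟩ := hF
  exact ⟨-p, by funext a b; rw [ev2_neg]⟩

lemma IsP2.const_mul {F : ℚ → ℚ → ℚ} (hF : IsP2 F) (c : ℚ) :
    IsP2 (fun a b => c * F a b) := (isP2_const c).mul hF

/-- Affine substitution in both variables. -/
lemma IsP2.comp_affine {F : ℚ → ℚ → ℚ} (hF : IsP2 F) (α β γ δ : ℚ) :
    IsP2 (fun a b => F (α * a + β) (γ * b + δ)) := by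
  obtain ⟨p, rfl⟩ := hF
  refine ⟨(p.map ((Polynomial.aeval
      (Polynomial.C α * Polynomial.X + Polynomial.C β)).toRingHom
        : Polynomial ℚ →+* Polynomial ℚ)).comp
      (Polynomial.C (Polynomial.C γ) * Polynomial.X + Polynomial.C (Polynomial.C δ)), ?_⟩
  funext a b
  show ev2 p (α * a + β) (γ * b + δ) = _
  rw [ev2_eq_eval₂, ev2_eq_eval₂, Polynomial.eval₂_comp, Polynomial.eval₂_map]
  have h1 : Polynomial.eval₂ (Polynomial.evalRingHom a) b
      (Polynomial.C (Polynomial.C γ) * Polynomial.X + Polynomial.C (Polynomial.C δ))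
      = γ * b + δ := by simp
  rw [h1]
  have h2 : (Polynomial.evalRingHom a).comp
      ((Polynomial.aeval (Polynomial.C α * Polynomial.X + Polynomial.C β)).toRingHom
        : Polynomial ℚ →+* Polynomial ℚ) = Polynomial.evalRingHom (α * a + β) := by
    apply Polynomial.ringHom_ext <;> simp
  rw [h2]

/-- Diagonal of a 2-variable polynomial, as a 1-variable polynomial. -/
noncomputable def dg (p : Polynomial (Polynomial ℚ)) : Polynomial ℚ := p.eval Polynomial.X

lemma dg_eval (p : Polynomial (Polynomial ℚ)) (a : ℚ) :
    (dg p).eval a = ev2 p a a := by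
  rw [ev2_eq_eval₂]
  unfold dg
  have : p.eval Polynomial.X = Polynomial.eval₂ (RingHom.id _) Polynomial.X p := rfl
  rw [this, show Polynomial.eval a (Polynomial.eval₂ (RingHom.id _) Polynomial.X p)
      = (Polynomial.evalRingHom a) (Polynomial.eval₂ (RingHom.id _) Polynomial.X p) from rfl,
    Polynomial.hom_eval₂]
  simp

/-- `fun a b => d.eval a` is a 2-variable polynomial function. -/
lemma isP2_fst (d : Polynomial ℚ) : IsP2 (fun a _ => d.eval a) := by
  refine ⟨Polynomial.C d, ?_⟩
  funext a b
  simp [ev2]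

/-- diagonal as constant-in-`b` polynomial function -/
lemma IsP2.diag {F : ℚ → ℚ → ℚ} (hF : IsP2 F) : IsP2 (fun a _ => F a a) := by
  obtain ⟨p, rfl⟩ := hF
  have := isP2_fst (dg p)
  convert this using 2 with a b
  rw [dg_eval]

/-- `fun a b => d.eval b` is a 2-variable polynomial function. -/
lemma isP2_snd (d : Polynomial ℚ) : IsP2 (fun _ b => d.eval b) := by
  refine ⟨d.map (Polynomial.C : ℚ →+* Polynomial ℚ), ?_⟩
  funext a b
  rw [ev2_eq_eval₂, Polynomial.eval₂_map]
  have : (Polynomial.evalRingHom a).comp (Polynomial.C : ℚ →+* Polynomial ℚ)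
      = RingHom.id ℚ := by ext r; simp
  rw [this]; rfl

lemma isP2_sum {ι : Type*} (s : Finset ι) (F : ι → ℚ → ℚ → ℚ)
    (h : ∀ i ∈ s, IsP2 (F i)) : IsP2 (fun a b => ∑ i ∈ s, F i a b) := by
  classical
  induction s using Finset.induction_on with
  | empty => simpa using isP2_const 0
  | insert x s' hx ih =>
    simp only [Finset.sum_insert hx]
    exact (h x (Finset.mem_insert_self _ _)).add
      (ih fun i hi => h i (Finset.mem_insert_of_mem hi))

/-- There is a polynomial giving the partial sums `∑_{k=1}^m (k:ℚ)^j`. -/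
lemma exists_SP (j : ℕ) : ∃ P : Polynomial ℚ,
    ∀ m : ℕ, P.eval (m : ℚ) = ∑ k ∈ range m, ((k : ℚ) + 1) ^ j := by
  classical
  refine ⟨(∑ i ∈ range (j + 1),
      Polynomial.C (_root_.bernoulli i * ((j + 1).choose i) / ((j : ℚ) + 1)) *
        (Polynomial.X + 1) ^ (j + 1 - i))
      - Polynomial.C (if j = 0 then 1 else 0), ?_⟩
  intro m
  have key : ∑ k ∈ range m, ((k : ℚ) + 1) ^ j
      = (∑ k ∈ range (m + 1), (k : ℚ) ^ j) - (if j = 0 then 1 else 0) := by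
    rw [Finset.sum_range_succ']
    push_cast
    simp [zero_pow_eq]
  rw [key, sum_range_pow]
  simp only [Polynomial.eval_sub, Polynomial.eval_finset_sum, Polynomial.eval_mul,
    Polynomial.eval_C, Polynomial.eval_pow, Polynomial.eval_add, Polynomial.eval_X,
    Polynomial.eval_one]
  congr 1
  refine Finset.sum_congr rfl fun i _ => ?_
  push_cast
  ring

/-- Partial sums of a 2-variable polynomial function in the second variable. -/
lemma IsP2.exists_sum {F : ℚ → ℚ → ℚ} (hF : IsP2 F) :
    ∃ G : ℚ → ℚ → ℚ, IsP2 G ∧ ∀ (a : ℚ) (m : ℕ), G a m = ∑ k ∈ range m, F a ((k : ℚ) + 1) := by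
  classical
  obtain ⟨p, rfl⟩ := hF
  choose SP hSP using exists_SP
  refine ⟨fun a b => ∑ j ∈ p.support, (p.coeff j).eval a * (SP j).eval b, ?_, ?_⟩
  · exact isP2_sum _ _ fun j _ => (isP2_fst (p.coeff j)).mul (isP2_snd (SP j))
  · intro a m
    have expand : ∀ c : ℚ, ev2 p a c = ∑ j ∈ p.support, (p.coeff j).eval a * c ^ j := by
      intro c
      rw [ev2_eq_eval₂, Polynomial.eval₂_eq_sum, Polynomial.sum_def]
      simp
    simp only []
    calc ∑ j ∈ p.support, (p.coeff j).eval a * (SP j).eval (m : ℚ)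
        = ∑ j ∈ p.support, ∑ k ∈ range m, (p.coeff j).eval a * ((k : ℚ) + 1) ^ j := by
          refine Finset.sum_congr rfl fun j _ => ?_
          rw [hSP j m, Finset.mul_sum]
      _ = ∑ k ∈ range m, ∑ j ∈ p.support, (p.coeff j).eval a * ((k : ℚ) + 1) ^ j :=
          Finset.sum_comm
      _ = ∑ k ∈ range m, ev2 p a ((k : ℚ) + 1) := by
          refine Finset.sum_congr rfl fun k _ => ?_
          rw [expand]

/-- A rational polynomial vanishing at all naturals is zero. -/
lemma poly_eq_zero_of_nat (p : Polynomial ℚ) (h : ∀ n : ℕ, p.eval (n : ℚ) = 0) : p = 0 := by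
  apply Polynomial.eq_zero_of_infinite_isRoot
  apply Set.infinite_of_injective_forall_mem (f := fun n : ℕ => (n : ℚ))
  · exact fun a b hab => Nat.cast_injective hab
  · intro n; exact h n

/-- Two 2-variable polynomial functions agreeing on the natural grid agree everywhere. -/
lemma IsP2.ext_nat {F G : ℚ → ℚ → ℚ} (hF : IsP2 F) (hG : IsP2 G)
    (h : ∀ m n : ℕ, F m n = G m n) : F = G := by
  obtain ⟨p, rfl⟩ := hF
  obtain ⟨q, rfl⟩ := hG
  suffices hz : ∀ a b : ℚ, ev2 (p - q) a b = 0 by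
    funext a b
    have := hz a b
    rw [ev2_sub] at this
    linarith
  have step1 : ∀ (m : ℕ) (b : ℚ), ev2 (p - q) (m : ℚ) b = 0 := by
    intro m b
    have hmap : ∀ c : ℚ, ev2 (p - q) (m : ℚ) c
        = ((p - q).map (Polynomial.evalRingHom (m : ℚ))).eval c := by
      intro c
      rw [ev2_eq_eval₂, Polynomial.eval_map]
    rw [hmap]
    have : (p - q).map (Polynomial.evalRingHom (m : ℚ)) = 0 := by
      apply poly_eq_zero_of_nat
      intro n
      rw [← hmap, ev2_sub]
      have := h m n
      simp only at this
      rw [this, sub_self]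
    rw [this]
    simp
  intro a b
  have : ∀ c : ℚ, ev2 (p - q) c b = ((p - q).eval (Polynomial.C b)).eval c := fun c => rfl
  rw [this]
  have hz : (p - q).eval (Polynomial.C b) = 0 := by
    apply poly_eq_zero_of_nat
    intro n
    rw [← this, step1]
  rw [hz]
  simp

/-- Everywhere-valid recurrence for the partial-sum function. -/
lemma sum_rec {F G : ℚ → ℚ → ℚ} (hF : IsP2 F) (hG : IsP2 G)
    (hs : ∀ (a : ℚ) (m : ℕ), G a m = ∑ k ∈ range m, F a ((k : ℚ) + 1)) :
    ∀ a b : ℚ, G a b - G a (b - 1) = F a b := by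
  have h1 : IsP2 (fun a b => G a (b + 1) - G a b) := by
    have e : (fun (a b : ℚ) => G a (b + 1) - G a b)
        = (fun a b => G (1 * a + 0) (1 * b + 1) - G a b) := by
      funext a b; norm_num
    rw [e]
    exact (hG.comp_affine 1 0 1 1).sub hG
  have h2 : IsP2 (fun a b => F a (b + 1)) := by
    have e : (fun (a b : ℚ) => F a (b + 1)) = (fun a b => F (1 * a + 0) (1 * b + 1)) := by
      funext a b; norm_num
    rw [e]
    exact hF.comp_affine 1 0 1 1
  have key : (fun a b => G a (b + 1) - G a b) = (fun a b => F a (b + 1)) := by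
    apply h1.ext_nat h2
    intro m n
    have c1 : ((n : ℚ) + 1) = ((n + 1 : ℕ) : ℚ) := by push_cast; ring
    rw [c1, hs m (n + 1), hs m n, Finset.sum_range_succ]
    push_cast
    ring
  intro a b
  have := congrFun (congrFun key a) (b - 1)
  simp only [sub_add_cancel] at this
  linarith [this]

/-- Values of the partial-sum function at negated arguments. -/
lemma sum_neg {F G : ℚ → ℚ → ℚ} (hF : IsP2 F) (hG : IsP2 G)
    (hs : ∀ (a : ℚ) (m : ℕ), G a m = ∑ k ∈ range m, F a ((k : ℚ) + 1)) :
    ∀ (a : ℚ) (m : ℕ), G a (-(m : ℚ)) = - ∑ k ∈ range m, F a (-(k : ℚ)) := by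
  intro a m
  induction m with
  | zero => simpa using hs a 0
  | succ m ih =>
    have hrec := sum_rec hF hG hs a (-(m : ℚ))
    have : G a (-(m : ℚ) - 1) = G a (-(m : ℚ)) - F a (-(m : ℚ)) := by linarith
    have hcast : -((m + 1 : ℕ) : ℚ) = -(m : ℚ) - 1 := by push_cast; ring
    rw [hcast, this, ih, Finset.sum_range_succ]
    ring

/-- Arc weight: `α` for ascent, `β` for descent, `1` for level. -/
def W (α β a b : ℚ) : ℚ := if a < b then α else if b < a then β else 1

lemma W_lt {a b : ℚ} (α β : ℚ) (h : a < b) : W α β a b = α := if_pos h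

lemma W_gt {a b : ℚ} (α β : ℚ) (h : b < a) : W α β a b = β := by
  unfold W
  rw [if_neg (asymm h), if_pos h]

lemma W_eq (α β a : ℚ) : W α β a a = 1 := by
  unfold W
  rw [if_neg (lt_irrefl a), if_neg (lt_irrefl a)]

/-- The combined weight after summing out a leaf vertex. -/
def Rf (α β : ℚ) (F G : ℚ → ℚ → ℚ) (a b : ℚ) : ℚ :=
  β * G a (b - 1) + F a b + α * (G a a - G a b)

lemma isP2_Rf (α β : ℚ) {F G : ℚ → ℚ → ℚ} (hF : IsP2 F) (hG : IsP2 G) :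
    IsP2 (Rf α β F G) := by
  have h1 : IsP2 (fun a b => G a (b - 1)) := by
    have e : (fun (a b : ℚ) => G a (b - 1)) = (fun a b => G (1 * a + 0) (1 * b + (-1))) := by
      funext a b
      rw [show (1 : ℚ) * a + 0 = a from by ring, show (1 : ℚ) * b + (-1) = b - 1 from by ring]
    rw [e]
    exact hG.comp_affine 1 0 1 (-1)
  have : Rf α β F G = fun a b =>
      β * G a (b - 1) + F a b + α * ((fun a _ => G a a) a b - G a b) := rfl
  rw [this]
  exact ((h1.const_mul β).add hF).add ((hG.diag.sub hG).const_mul α)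

lemma Rf_interp (α β : ℚ) {F G : ℚ → ℚ → ℚ}
    (hs : ∀ (a : ℚ) (m : ℕ), G a m = ∑ k ∈ range m, F a ((k : ℚ) + 1))
    (n : ℕ) (c : Fin n) :
    ∑ j : Fin n, W α β (((c : ℕ) : ℚ) + 1) (((j : ℕ) : ℚ) + 1) * F n (((j : ℕ) : ℚ) + 1)
      = Rf α β F G n (((c : ℕ) : ℚ) + 1) := by
  have hsum := Fin.sum_univ_eq_sum_range
    (fun j => W α β (((c : ℕ) : ℚ) + 1) ((j : ℚ) + 1) * F n ((j : ℚ) + 1)) n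
  rw [hsum]
  have hcn : (c : ℕ) + 1 ≤ n := c.isLt
  have hsplit := Finset.sum_range_add_sum_Ico
    (fun j : ℕ => W α β (((c : ℕ) : ℚ) + 1) ((j : ℚ) + 1) * F n ((j : ℚ) + 1)) hcn
  rw [← hsplit, Finset.sum_range_succ]
  have hA : ∑ k ∈ range (c : ℕ), W α β (((c : ℕ) : ℚ) + 1) ((k : ℚ) + 1) * F n ((k : ℚ) + 1)
      = β * G n ((c : ℕ) : ℚ) := by
    rw [hs (n : ℚ) (c : ℕ), Finset.mul_sum]
    refine Finset.sum_congr rfl fun k hk => ?_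
    rw [Finset.mem_range] at hk
    rw [W_gt]
    have : (k : ℚ) < (c : ℕ) := by exact_mod_cast hk
    linarith
  have hB : W α β (((c : ℕ) : ℚ) + 1) (((c : ℕ) : ℚ) + 1) * F n (((c : ℕ) : ℚ) + 1)
      = F n (((c : ℕ) : ℚ) + 1) := by rw [W_eq, one_mul]
  have hC : ∑ k ∈ Ico ((c : ℕ) + 1) n, W α β (((c : ℕ) : ℚ) + 1) ((k : ℚ) + 1) * F n ((k : ℚ) + 1)
      = α * (G n (n : ℚ) - G n (((c : ℕ) : ℚ) + 1)) := by
    have e1 : ∑ k ∈ Ico ((c : ℕ) + 1) n,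
        W α β (((c : ℕ) : ℚ) + 1) ((k : ℚ) + 1) * F n ((k : ℚ) + 1)
        = α * ∑ k ∈ Ico ((c : ℕ) + 1) n, F n ((k : ℚ) + 1) := by
      rw [Finset.mul_sum]
      refine Finset.sum_congr rfl fun k hk => ?_
      rw [Finset.mem_Ico] at hk
      rw [W_lt]
      have : ((c : ℕ) : ℚ) < (k : ℚ) := by exact_mod_cast lt_of_lt_of_le (Nat.lt_succ_self _) hk.1
      linarith
    have e2 := Finset.sum_range_add_sum_Ico (fun k : ℕ => F n ((k : ℚ) + 1)) hcn
    have e3 : ∑ k ∈ Ico ((c : ℕ) + 1) n, F n ((k : ℚ) + 1)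
        = G n (n : ℚ) - G n (((c : ℕ) : ℚ) + 1) := by
      rw [hs (n : ℚ) n]
      have : G (n : ℚ) (((c : ℕ) : ℚ) + 1) = G (n : ℚ) (((c : ℕ) + 1 : ℕ) : ℚ) := by push_cast; ring_nf
      rw [this, hs (n : ℚ) ((c : ℕ) + 1)]
      have := e2
      linarith
    rw [e1, e3]
  rw [hA, hB, hC]
  unfold Rf
  rw [show (((c : ℕ) : ℚ) + 1 - 1) = ((c : ℕ) : ℚ) from by ring]

lemma Rf_funcEq (α β : ℚ) (hu : α + β - 1 ≠ 0) {F G F' G' : ℚ → ℚ → ℚ}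
    (hFF' : ∀ a b, F (-a) (1 - b) = F' a b)
    (hGG' : ∀ a b, G (-a) (-b) = - G' a b)
    (hrec' : ∀ a b, G' a b - G' a (b - 1) = F' a b) :
    ∀ a b, Rf α β F G (-a) (1 - b)
      = -(α + β - 1) * Rf (α / (α + β - 1)) (β / (α + β - 1)) F' G' a b := by
  intro a b
  unfold Rf
  rw [show (1 - b - 1 : ℚ) = -b from by ring, hGG' a b, hFF' a b]
  rw [show G (-a) (1 - b) = G (-a) (-(b - 1)) from by rw [show (1 - b : ℚ) = -(b-1) from by ring],
    hGG' a (b - 1), show G (-a) (-a) = - G' a a from hGG' a a]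
  rw [← hrec' a b]
  field_simp
  ring

lemma W_swap (α β a b : ℚ) : W β α b a = W α β a b := by
  rcases lt_trichotomy a b with h | h | h
  · rw [W_gt _ _ h, W_lt _ _ h]
  · subst h; rw [W_eq, W_eq]
  · rw [W_lt _ _ h, W_gt _ _ h]


section Digraph

variable {V A : Type} [Fintype V] [DecidableEq V] [Fintype A]

/-- The vertex-weighted ascent/descent generating sum. -/
def Phi (s t : A → V) (y z : ℚ) (P : V → ℚ → ℚ → ℚ) (n : ℕ) : ℚ :=
  ∑ f : V → Fin n,
    (∏ a : A, W y z (((f (s a) : ℕ) : ℚ) + 1) (((f (t a) : ℕ) : ℚ) + 1)) *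
    ∏ v : V, P v n (((f v : ℕ) : ℚ) + 1)

lemma Phi_swap (s t : A → V) (y z : ℚ) (P : V → ℚ → ℚ → ℚ) (n : ℕ) :
    Phi t s z y P n = Phi s t y z P n := by
  unfold Phi
  refine Finset.sum_congr rfl fun f _ => ?_
  congr 1
  refine Finset.prod_congr rfl fun a _ => ?_
  rw [W_swap]

lemma noLoop {s t : A → V} (hforest : ¬ UnderlyingHasCycle s t) : ∀ a, s a ≠ t a := by
  intro a ha
  apply hforest
  refine ⟨1, one_pos, fun _ => a, fun _ => s a, fun i j _ => Subsingleton.elim i j, fun i => ?_⟩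
  exact Or.inl ⟨rfl, ha.symm⟩

lemma cycle_swap {s t : A → V} (h : UnderlyingHasCycle t s) : UnderlyingHasCycle s t := by
  obtain ⟨n, hn, e, v, hinj, hcond⟩ := h
  exact ⟨n, hn, e, v, hinj, fun i => (hcond i).symm⟩

lemma exists_leaf (s t : A → V) (hA : Nonempty A) (hforest : ¬ UnderlyingHasCycle s t) :
    ∃ (a₀ : A) (x : V), (s a₀ = x ∨ t a₀ = x) ∧ s a₀ ≠ t a₀ ∧
      ∀ b : A, b ≠ a₀ → s b ≠ x ∧ t b ≠ x := by
  classical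
  have hloop := noLoop hforest
  by_contra hcon
  push_neg at hcon
  have hcon' : ∀ (a : A) (x : V), (s a = x ∨ t a = x) →
      ∃ b, b ≠ a ∧ (s b = x ∨ t b = x) := by
    intro a x hx
    obtain ⟨b, hb1, hb2⟩ := hcon a x hx (hloop a)
    refine ⟨b, hb1, ?_⟩
    by_cases h : s b = x
    · exact Or.inl h
    · exact Or.inr (by tauto)
  set T : ℕ → (ℕ → A) → (ℕ → V) → Prop := fun n e v =>
    (∀ i, i < n → (s (e i) = v i ∧ t (e i) = v (i + 1)) ∨
        (t (e i) = v i ∧ s (e i) = v (i + 1))) ∧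
    (∀ i, i < n → ∀ j, j < n → e i = e j → i = j) with hTdef
  have bound : ∀ n e v, T n e v → n ≤ Fintype.card A := by
    rintro n e v ⟨_, hinj⟩
    have hinj' : Function.Injective (fun i : Fin n => e i) := by
      intro i j hij
      exact Fin.ext (hinj i i.isLt j j.isLt hij)
    simpa using Fintype.card_le_of_injective _ hinj'
  obtain ⟨a⟩ := hA
  have h1 : ∃ e v, T 1 e v := by
    refine ⟨fun _ => a, fun i => if i = 0 then s a else t a, fun i hi => ?_, fun i hi j hj _ => by omega⟩
    have : i = 0 := by omega
    subst this
    exact Or.inl ⟨by simp, by simp⟩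
  set Pn : ℕ → Prop := fun n => ∃ e v, T n e v with hPn
  haveI : DecidablePred Pn := Classical.decPred _
  set N := Nat.findGreatest Pn (Fintype.card A) with hNdef
  have hcard1 : 1 ≤ Fintype.card A := by
    obtain ⟨e, v, ht⟩ := h1
    exact bound 1 e v ht
  have hN : Pn N := Nat.findGreatest_spec hcard1 h1
  have hNmax : ∀ m, Pn m → m ≤ N := by
    intro m hm
    obtain ⟨e, v, ht⟩ := hm
    exact Nat.le_findGreatest (bound m e v ht) ⟨e, v, ht⟩
  have hN1 : 1 ≤ N := hNmax 1 h1
  obtain ⟨e, v, hT, hinj⟩ := hN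
  have hend : s (e (N - 1)) = v N ∨ t (e (N - 1)) = v N := by
    have hc := hT (N - 1) (by omega)
    have hsucc : N - 1 + 1 = N := by omega
    rw [hsucc] at hc
    rcases hc with ⟨_, h⟩ | ⟨_, h⟩
    · exact Or.inr h
    · exact Or.inl h
  obtain ⟨b, hbne, hbinc⟩ := hcon' (e (N - 1)) (v N) hend
  by_cases hb : ∃ i, i < N ∧ e i = b
  · obtain ⟨i₀, hi₀N, hei₀⟩ := hb
    have hi₀ : i₀ ≠ N - 1 := fun h => hbne (by rw [← hei₀, h])
    have hvj : ∃ j, j < N ∧ v j = v N := by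
      have hcond := hT i₀ hi₀N
      rcases hbinc with hsb | htb
      · rcases hcond with ⟨h1', _⟩ | ⟨_, h2'⟩
        · exact ⟨i₀, hi₀N, by rw [← h1', hei₀, hsb]⟩
        · exact ⟨i₀ + 1, by omega, by rw [← h2', hei₀, hsb]⟩
      · rcases hcond with ⟨_, h2'⟩ | ⟨h1', _⟩
        · exact ⟨i₀ + 1, by omega, by rw [← h2', hei₀, htb]⟩
        · exact ⟨i₀, hi₀N, by rw [← h1', hei₀, htb]⟩
    obtain ⟨j, hjN, hvjN⟩ := hvj
    apply hforest
    set m := N - j with hm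
    have hm0 : 0 < m := by omega
    haveI : NeZero m := ⟨by omega⟩
    refine ⟨m, hm0, fun i : ZMod m => e (j + i.val), fun i : ZMod m => v (j + i.val), ?_, ?_⟩
    · intro i i' hii
      have h1' : j + i.val < N := by have := ZMod.val_lt i; omega
      have h2' : j + i'.val < N := by have := ZMod.val_lt i'; omega
      have := hinj _ h1' _ h2' hii
      exact ZMod.val_injective m (by omega)
    · intro i
      have hlt : i.val < m := ZMod.val_lt i
      have hcond := hT (j + i.val) (by omega)
      have hnext : v (j + (i + 1).val) = v (j + i.val + 1) := by
        have hval : (i + 1).val = (i.val + 1) % m := by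
          rw [ZMod.val_add]
          conv_rhs => rw [Nat.add_mod]
          rw [Nat.mod_eq_of_lt hlt, ZMod.val_one_eq_one_mod]
        by_cases hc2 : i.val + 1 < m
        · rw [hval, Nat.mod_eq_of_lt hc2]
          exact congrArg v (by omega)
        · have hceq : i.val + 1 = m := by omega
          rw [hval, hceq, Nat.mod_self, Nat.add_zero, hvjN]
          have : j + i.val + 1 = N := by omega
          rw [this]
      change (s (e (j + i.val)) = v (j + i.val) ∧ t (e (j + i.val)) = v (j + (i + 1).val)) ∨
        (t (e (j + i.val)) = v (j + i.val) ∧ s (e (j + i.val)) = v (j + (i + 1).val))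
      rcases hcond with ⟨h1', h2'⟩ | ⟨h1', h2'⟩
      · exact Or.inl ⟨h1', by rw [hnext]; exact h2'⟩
      · exact Or.inr ⟨h1', by rw [hnext]; exact h2'⟩
  · push_neg at hb
    have hext : Pn (N + 1) := by
      refine ⟨fun i => if i = N then b else e i,
        fun i => if i = N + 1 then (if s b = v N then t b else s b) else v i, ?_, ?_⟩
      · intro i hi
        by_cases hiN : i = N
        · subst hiN
          have e1 : (N : ℕ) ≠ N + 1 := by omega
          simp only [if_pos rfl, if_neg e1]
          by_cases hsb : s b = v N
          · rw [if_pos hsb]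
            exact Or.inl ⟨hsb, rfl⟩
          · rw [if_neg hsb]
            rcases hbinc with h | h
            · exact absurd h hsb
            · exact Or.inr ⟨h, rfl⟩
        · have hiN' : i < N := by omega
          have hc := hT i hiN'
          simp only [if_neg hiN, if_neg (by omega : i ≠ N + 1), if_neg (by omega : i + 1 ≠ N + 1)]
          exact hc
      · intro i hi j hj heq
        have heq' : (if i = N then b else e i) = (if j = N then b else e j) := heq
        by_cases hiN : i = N <;> by_cases hjN : j = N
        · omega
        · exfalso
          rw [if_pos hiN, if_neg hjN] at heq'
          exact hb j (by omega) heq'.symm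
        · exfalso
          rw [if_neg hiN, if_pos hjN] at heq'
          exact hb i (by omega) heq'
        · rw [if_neg hiN, if_neg hjN] at heq'
          exact hinj i (by omega) j (by omega) heq'
    have := hNmax (N + 1) hext
    omega

lemma Phi_mul_const (s t : A → V) (y z : ℚ) (P₁ P₂ : V → ℚ → ℚ → ℚ) (w₀ : V) (cst : ℚ)
    (h0 : ∀ a b, P₁ w₀ a b = cst * P₂ w₀ a b) (h1 : ∀ w, w ≠ w₀ → P₁ w = P₂ w) (n : ℕ) :
    Phi s t y z P₁ n = cst * Phi s t y z P₂ n := by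
  unfold Phi
  rw [Finset.mul_sum]
  refine Finset.sum_congr rfl fun f _ => ?_
  have hv : ∏ v : V, P₁ v n (((f v : ℕ) : ℚ) + 1)
      = cst * ∏ v : V, P₂ v n (((f v : ℕ) : ℚ) + 1) := by
    rw [← Finset.mul_prod_erase Finset.univ (fun v => P₁ v n (((f v : ℕ) : ℚ) + 1))
        (Finset.mem_univ w₀),
      ← Finset.mul_prod_erase Finset.univ (fun v => P₂ v n (((f v : ℕ) : ℚ) + 1))
        (Finset.mem_univ w₀), h0]
    rw [show ∏ v ∈ Finset.univ.erase w₀, P₁ v n (((f v : ℕ) : ℚ) + 1)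
        = ∏ v ∈ Finset.univ.erase w₀, P₂ v n (((f v : ℕ) : ℚ) + 1) from
      Finset.prod_congr rfl fun w hw => by rw [h1 w (Finset.mem_erase.mp hw).1]]
    ring
  rw [hv]
  ring

lemma Phi_leaf [DecidableEq A] (y z : ℚ) (s t : A → V) (a₀ : A) (hx : s a₀ ≠ t a₀)
    (hleaf : ∀ b, b ≠ a₀ → s b ≠ t a₀ ∧ t b ≠ t a₀)
    (P : V → ℚ → ℚ → ℚ) (G : ℚ → ℚ → ℚ)
    (hG : ∀ (a : ℚ) (m : ℕ), G a m = ∑ k ∈ range m, P (t a₀) a ((k : ℚ) + 1))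
    (n : ℕ) :
    Phi s t y z P n =
      Phi (fun b : {b : A // b ≠ a₀} => (⟨s b.val, (hleaf b.val b.prop).1⟩ : {w : V // w ≠ t a₀}))
          (fun b : {b : A // b ≠ a₀} => (⟨t b.val, (hleaf b.val b.prop).2⟩ : {w : V // w ≠ t a₀}))
          y z
          (fun w : {w : V // w ≠ t a₀} => if w = (⟨s a₀, hx⟩ : {w : V // w ≠ t a₀})
            then (fun a b => P (s a₀) a b * Rf y z (P (t a₀)) G a b) else P w.val) n := by
  classical
  unfold Phi
  rw [← Equiv.sum_comp (Equiv.funSplitAt (t a₀) (Fin n)).symm, Fintype.sum_prod_type,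
    Finset.sum_comm]
  refine Finset.sum_congr rfl fun g _ => ?_
  set u₀' : {w : V // w ≠ t a₀} := ⟨s a₀, hx⟩ with hu₀'
  have hfx : ∀ c : Fin n, (Equiv.funSplitAt (t a₀) (Fin n)).symm (c, g) (t a₀) = c := by
    intro c
    rw [Equiv.funSplitAt_symm_apply]
    simp
  have hfw : ∀ (c : Fin n) (w : V) (hw : w ≠ t a₀),
      (Equiv.funSplitAt (t a₀) (Fin n)).symm (c, g) w = g ⟨w, hw⟩ := by
    intro c w hw
    rw [Equiv.funSplitAt_symm_apply, dif_neg hw]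
  have harc : ∀ c : Fin n,
      (∏ a : A, W y z ((((Equiv.funSplitAt (t a₀) (Fin n)).symm (c, g) (s a) : ℕ) : ℚ) + 1)
        ((((Equiv.funSplitAt (t a₀) (Fin n)).symm (c, g) (t a) : ℕ) : ℚ) + 1))
      = W y z (((g u₀' : ℕ) : ℚ) + 1) (((c : ℕ) : ℚ) + 1) *
        ∏ b : {b : A // b ≠ a₀},
          W y z (((g ⟨s b.val, (hleaf b.val b.prop).1⟩ : ℕ) : ℚ) + 1)
            (((g ⟨t b.val, (hleaf b.val b.prop).2⟩ : ℕ) : ℚ) + 1) := by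
    intro c
    rw [← Finset.mul_prod_erase Finset.univ _ (Finset.mem_univ a₀)]
    congr 1
    · rw [hfw c (s a₀) hx, hfx c]
    · rw [Finset.prod_subtype (Finset.univ.erase a₀)
        (p := fun b => b ≠ a₀) (fun b => by simp [Finset.mem_erase])]
      refine Finset.prod_congr rfl fun b _ => ?_
      rw [hfw c (s b.val) (hleaf b.val b.prop).1, hfw c (t b.val) (hleaf b.val b.prop).2]
  have hver : ∀ c : Fin n,
      (∏ v : V, P v n ((((Equiv.funSplitAt (t a₀) (Fin n)).symm (c, g) v : ℕ) : ℚ) + 1))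
      = P (t a₀) n (((c : ℕ) : ℚ) + 1) *
        ∏ w : {w : V // w ≠ t a₀}, P w.val n (((g w : ℕ) : ℚ) + 1) := by
    intro c
    rw [← Finset.mul_prod_erase Finset.univ _ (Finset.mem_univ (t a₀))]
    congr 1
    · rw [hfx c]
    · rw [Finset.prod_subtype (Finset.univ.erase (t a₀))
        (p := fun w => w ≠ t a₀) (fun w => by simp [Finset.mem_erase])]
      refine Finset.prod_congr rfl fun w _ => ?_
      rw [hfw c w.val w.prop]
  calc ∑ c : Fin n,
        (∏ a : A, W y z ((((Equiv.funSplitAt (t a₀) (Fin n)).symm (c, g) (s a) : ℕ) : ℚ) + 1)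
          ((((Equiv.funSplitAt (t a₀) (Fin n)).symm (c, g) (t a) : ℕ) : ℚ) + 1)) *
        ∏ v : V, P v n ((((Equiv.funSplitAt (t a₀) (Fin n)).symm (c, g) v : ℕ) : ℚ) + 1)
      = ∑ c : Fin n,
          (W y z (((g u₀' : ℕ) : ℚ) + 1) (((c : ℕ) : ℚ) + 1) *
            P (t a₀) n (((c : ℕ) : ℚ) + 1)) *
          ((∏ b : {b : A // b ≠ a₀},
            W y z (((g ⟨s b.val, (hleaf b.val b.prop).1⟩ : ℕ) : ℚ) + 1)
              (((g ⟨t b.val, (hleaf b.val b.prop).2⟩ : ℕ) : ℚ) + 1)) *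
           (∏ w : {w : V // w ≠ t a₀}, P w.val n (((g w : ℕ) : ℚ) + 1))) := by
        refine Finset.sum_congr rfl fun c _ => ?_
        rw [harc c, hver c]
        ring
    _ = _ := by
        rw [← Finset.sum_mul, Rf_interp y z hG n (g u₀')]
        rw [← Finset.mul_prod_erase Finset.univ
          (fun w : {w : V // w ≠ t a₀} =>
            (if w = u₀' then (fun a b => P (s a₀) a b * Rf y z (P (t a₀)) G a b) else P w.val)
              n (((g w : ℕ) : ℚ) + 1)) (Finset.mem_univ u₀'),
          ← Finset.mul_prod_erase Finset.univ
          (fun w : {w : V // w ≠ t a₀} => P w.val n (((g w : ℕ) : ℚ) + 1))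
            (Finset.mem_univ u₀')]
        rw [if_pos rfl]
        rw [show ∏ w ∈ Finset.univ.erase u₀',
            (if w = u₀' then (fun a b => P (s a₀) a b * Rf y z (P (t a₀)) G a b) else P w.val)
              n (((g w : ℕ) : ℚ) + 1)
            = ∏ w ∈ Finset.univ.erase u₀', P w.val n (((g w : ℕ) : ℚ) + 1) from
          Finset.prod_congr rfl fun w hw => by rw [if_neg (Finset.mem_erase.mp hw).1]]
        ring

end Digraph

/-- The statement of the main induction. -/
def KEY (m : ℕ) : Prop :=
  ∀ (y z : ℚ), y + z - 1 ≠ 0 →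
    ∀ (V A : Type) [Fintype V] [DecidableEq V] [Fintype A] (s t : A → V),
      Fintype.card A = m → ¬ UnderlyingHasCycle s t →
      ∀ (P Q : V → ℚ → ℚ → ℚ), (∀ v, IsP2 (P v)) → (∀ v, IsP2 (Q v)) →
      (∀ v a b, P v (-a) (1 - b) = Q v a b) →
      ∃ φ : Polynomial ℚ,
        (∀ n : ℕ, φ.eval (n : ℚ) = Phi s t y z P n) ∧
        (∀ n : ℕ, φ.eval (-(n : ℚ)) = (-1) ^ (Fintype.card V) * (y + z - 1) ^ m *
          Phi s t (y / (y + z - 1)) (z / (y + z - 1)) Q n)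

lemma key_zero : KEY 0 := by
  intro y z hu V A instV instVd instA s t hcard hforest P Q hP hQ hPQ
  haveI : IsEmpty A := Fintype.card_eq_zero_iff.mp hcard
  have hPhi : ∀ (y' z' : ℚ) (R : V → ℚ → ℚ → ℚ) (n : ℕ),
      Phi s t y' z' R n = ∏ v : V, ∑ k ∈ range n, R v n ((k : ℚ) + 1) := by
    intro y' z' R n
    unfold Phi
    have h1 : ∀ f : V → Fin n,
        (∏ a : A, W y' z' (((f (s a) : ℕ) : ℚ) + 1) (((f (t a) : ℕ) : ℚ) + 1)) = 1 :=
      fun f => Finset.prod_of_isEmpty _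
    calc ∑ f : V → Fin n,
          (∏ a : A, W y' z' (((f (s a) : ℕ) : ℚ) + 1) (((f (t a) : ℕ) : ℚ) + 1)) *
          ∏ v : V, R v n (((f v : ℕ) : ℚ) + 1)
        = ∑ f : V → Fin n, ∏ v : V, R v n (((f v : ℕ) : ℚ) + 1) := by
          refine Finset.sum_congr rfl fun f _ => ?_
          rw [h1 f, one_mul]
      _ = ∏ v : V, ∑ c : Fin n, R v n (((c : ℕ) : ℚ) + 1) := by
          rw [Finset.prod_univ_sum]
          rw [Fintype.piFinset_univ]
      _ = ∏ v : V, ∑ k ∈ range n, R v n ((k : ℚ) + 1) := by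
          refine Finset.prod_congr rfl fun v _ => ?_
          exact Fin.sum_univ_eq_sum_range (fun k => R v n ((k : ℚ) + 1)) n
  choose G hG2 hGs using fun v => (hP v).exists_sum
  choose gp hgp using fun v => hG2 v
  refine ⟨∏ v : V, dg (gp v), ?_, ?_⟩
  · intro n
    rw [Polynomial.eval_prod, hPhi y z P n]
    refine Finset.prod_congr rfl fun v _ => ?_
    rw [dg_eval, ← congrFun (congrFun (hgp v) (n : ℚ)) (n : ℚ), hGs v (n : ℚ) n]
  · intro n
    rw [Polynomial.eval_prod, hPhi (y / (y + z - 1)) (z / (y + z - 1)) Q n]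
    have hfac : ∀ v : V, (dg (gp v)).eval (-(n : ℚ))
        = - ∑ k ∈ range n, Q v n ((k : ℚ) + 1) := by
      intro v
      rw [dg_eval, ← congrFun (congrFun (hgp v) (-(n : ℚ))) (-(n : ℚ))]
      rw [sum_neg (hP v) (hG2 v) (hGs v) (-(n : ℚ)) n]
      congr 1
      refine Finset.sum_congr rfl fun k _ => ?_
      rw [show (-(k : ℚ)) = 1 - ((k : ℚ) + 1) from by ring, hPQ v (n : ℚ) ((k : ℚ) + 1)]
    calc ∏ v : V, (dg (gp v)).eval (-(n : ℚ))
        = ∏ v : V, (-1) * ∑ k ∈ range n, Q v n ((k : ℚ) + 1) := by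
          refine Finset.prod_congr rfl fun v _ => ?_
          rw [hfac v]; ring
      _ = ((-1 : ℚ) ^ Fintype.card V) * ∏ v : V, ∑ k ∈ range n, Q v n ((k : ℚ) + 1) := by
          rw [Finset.prod_mul_distrib, Finset.prod_const, Finset.card_univ]
      _ = _ := by rw [pow_zero]; ring

lemma key_step (m : ℕ) (ih : KEY m) (y z : ℚ) (hu : y + z - 1 ≠ 0)
    (V A : Type) [Fintype V] [DecidableEq V] [Fintype A] (s t : A → V)
    (hcard : Fintype.card A = m + 1) (hforest : ¬ UnderlyingHasCycle s t)
    (a₀ : A) (hx : s a₀ ≠ t a₀) (hleaf : ∀ b, b ≠ a₀ → s b ≠ t a₀ ∧ t b ≠ t a₀)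
    (P Q : V → ℚ → ℚ → ℚ) (hP : ∀ v, IsP2 (P v)) (hQ : ∀ v, IsP2 (Q v))
    (hPQ : ∀ v a b, P v (-a) (1 - b) = Q v a b) :
    ∃ φ : Polynomial ℚ,
      (∀ n : ℕ, φ.eval (n : ℚ) = Phi s t y z P n) ∧
      (∀ n : ℕ, φ.eval (-(n : ℚ)) = (-1) ^ (Fintype.card V) * (y + z - 1) ^ (m + 1) *
        Phi s t (y / (y + z - 1)) (z / (y + z - 1)) Q n) := by
  classical
  obtain ⟨G, hG2, hGs⟩ := (hP (t a₀)).exists_sum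
  obtain ⟨G', hG'2, hG's⟩ := (hQ (t a₀)).exists_sum
  have hGG' : ∀ a b : ℚ, G (-a) (-b) = - G' a b := by
    have h₁ : IsP2 (fun a b => G (-a) (-b)) := by
      have e : (fun (a b : ℚ) => G (-a) (-b))
          = (fun a b => G ((-1) * a + 0) ((-1) * b + 0)) := by
        funext a b
        rw [show ((-1 : ℚ)) * a + 0 = -a from by ring, show ((-1 : ℚ)) * b + 0 = -b from by ring]
      rw [e]; exact hG2.comp_affine (-1) 0 (-1) 0
    have h₂ : IsP2 (fun a b => - G' a b) := hG'2.neg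
    have hgrid : ∀ mm nn : ℕ, G (-(mm : ℚ)) (-(nn : ℚ)) = - G' (mm : ℚ) (nn : ℚ) := by
      intro mm nn
      rw [sum_neg (hP (t a₀)) hG2 hGs (-(mm : ℚ)) nn, hG's (mm : ℚ) nn, neg_inj]
      refine Finset.sum_congr rfl fun k _ => ?_
      rw [show (-(k : ℚ)) = 1 - ((k : ℚ) + 1) from by ring, hPQ (t a₀) (mm : ℚ) ((k : ℚ) + 1)]
    have := IsP2.ext_nat h₁ h₂ hgrid
    intro a b
    exact congrFun (congrFun this a) b
  have hrec' : ∀ a b : ℚ, G' a b - G' a (b - 1) = Q (t a₀) a b :=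
    sum_rec (hQ (t a₀)) hG'2 hG's
  -- the new weight functions on the smaller digraph
  set V' := {w : V // w ≠ t a₀} with hV'def
  set A' := {b : A // b ≠ a₀} with hA'def
  set s' : A' → V' := fun b => ⟨s b.val, (hleaf b.val b.prop).1⟩ with hs'def
  set t' : A' → V' := fun b => ⟨t b.val, (hleaf b.val b.prop).2⟩ with ht'def
  set u₀' : V' := ⟨s a₀, hx⟩ with hu₀'def
  set P' : V' → ℚ → ℚ → ℚ := fun w => if w = u₀'
      then (fun a b => P (s a₀) a b * Rf y z (P (t a₀)) G a b) else P w.val with hP'def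
  set Q'₁ : V' → ℚ → ℚ → ℚ := fun w => if w = u₀'
      then (fun a b => Q (s a₀) a b *
        Rf (y / (y + z - 1)) (z / (y + z - 1)) (Q (t a₀)) G' a b) else Q w.val with hQ'₁def
  set Q' : V' → ℚ → ℚ → ℚ := fun w => if w = u₀'
      then (fun a b => (-(y + z - 1)) * (Q (s a₀) a b *
        Rf (y / (y + z - 1)) (z / (y + z - 1)) (Q (t a₀)) G' a b)) else Q w.val with hQ'def
  have hcardA' : Fintype.card A' = m := by
    have h1 : Fintype.card A' = Fintype.card A - Fintype.card {b : A // b = a₀} :=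
      Fintype.card_subtype_compl _
    rw [Fintype.card_subtype_eq, hcard] at h1
    omega
  have hforest' : ¬ UnderlyingHasCycle s' t' := by
    intro hcyc
    obtain ⟨nn, hnn, ec, vc, hinjc, hcondc⟩ := hcyc
    refine hforest ⟨nn, hnn, fun i => (ec i).val, fun i => (vc i).val, ?_, ?_⟩
    · intro i j hij
      exact hinjc (Subtype.ext hij)
    · intro i
      rcases hcondc i with ⟨h1, h2⟩ | ⟨h1, h2⟩
      · exact Or.inl ⟨congrArg Subtype.val h1, congrArg Subtype.val h2⟩
      · exact Or.inr ⟨congrArg Subtype.val h1, congrArg Subtype.val h2⟩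
  have hP' : ∀ w : V', IsP2 (P' w) := by
    intro w
    simp only [hP'def]
    by_cases hw : w = u₀'
    · rw [if_pos hw]
      exact (hP (s a₀)).mul (isP2_Rf y z (hP (t a₀)) hG2)
    · rw [if_neg hw]
      exact hP w.val
  have hQ' : ∀ w : V', IsP2 (Q' w) := by
    intro w
    simp only [hQ'def]
    by_cases hw : w = u₀'
    · rw [if_pos hw]
      exact ((hQ (s a₀)).mul (isP2_Rf _ _ (hQ (t a₀)) hG'2)).const_mul _
    · rw [if_neg hw]
      exact hQ w.val
  have hPQ' : ∀ (w : V') (a b : ℚ), P' w (-a) (1 - b) = Q' w a b := by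
    intro w a b
    simp only [hP'def, hQ'def]
    by_cases hw : w = u₀'
    · rw [if_pos hw, if_pos hw]
      have hRf := Rf_funcEq y z hu (hPQ (t a₀)) hGG' hrec' a b
      rw [hPQ (s a₀) a b, hRf]
      ring
    · rw [if_neg hw, if_neg hw]
      exact hPQ w.val a b
  obtain ⟨φ, hφ1, hφ2⟩ := ih y z hu V' A' s' t' hcardA' hforest' P' Q' hP' hQ' hPQ'
  have hVcard : Fintype.card V = Fintype.card V' + 1 := by
    have h1 : Fintype.card V' = Fintype.card V - Fintype.card {w : V // w = t a₀} :=
      Fintype.card_subtype_compl _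
    have h2 : 0 < Fintype.card V := Fintype.card_pos_iff.mpr ⟨t a₀⟩
    rw [Fintype.card_subtype_eq] at h1
    omega
  refine ⟨φ, ?_, ?_⟩
  · intro n
    rw [hφ1 n, Phi_leaf y z s t a₀ hx hleaf P G hGs n]
  · intro n
    rw [hφ2 n]
    have hsc : Phi s' t' (y / (y + z - 1)) (z / (y + z - 1)) Q' n
        = (-(y + z - 1)) * Phi s' t' (y / (y + z - 1)) (z / (y + z - 1)) Q'₁ n := by
      refine Phi_mul_const s' t' _ _ Q' Q'₁ u₀' (-(y + z - 1)) ?_ ?_ n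
      · intro a b
        simp only [hQ'def, hQ'₁def, if_pos rfl]
      · intro w hw
        simp only [hQ'def, hQ'₁def, if_neg hw]
    have hlf := Phi_leaf (y / (y + z - 1)) (z / (y + z - 1)) s t a₀ hx hleaf Q G' hG's n
    have hQeq : Phi s' t' (y / (y + z - 1)) (z / (y + z - 1)) Q'₁ n
        = Phi s t (y / (y + z - 1)) (z / (y + z - 1)) Q n := by
      rw [hlf]
    rw [hsc, hQeq, hVcard]
    ring

lemma key : ∀ m, KEY m := by
  intro m
  induction m with
  | zero => exact key_zero
  | succ m ih =>
    intro y z hu V A instV instVd instA s t hcard hforest P Q hP hQ hPQ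
    have hA : Nonempty A := by
      rw [← Fintype.card_pos_iff, hcard]; omega
    obtain ⟨a₀, x, hinc, hloopa, hleaf⟩ := exists_leaf s t hA hforest
    rcases hinc with hsx | htx
    · subst hsx
      have hforest' : ¬ UnderlyingHasCycle t s := fun hc => hforest (cycle_swap hc)
      have hyz : z + y - 1 = y + z - 1 := by ring
      have hu' : z + y - 1 ≠ 0 := by rw [hyz]; exact hu
      have hleaf' : ∀ b, b ≠ a₀ → t b ≠ s a₀ ∧ s b ≠ s a₀ :=
        fun b hb => ⟨(hleaf b hb).2, (hleaf b hb).1⟩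
      obtain ⟨φ, h1, h2⟩ := key_step m ih z y hu' V A t s hcard hforest' a₀
        (Ne.symm hloopa) hleaf' P Q hP hQ hPQ
      refine ⟨φ, ?_, ?_⟩
      · intro n
        rw [h1 n, Phi_swap]
      · intro n
        rw [h2 n, hyz, Phi_swap]
    · subst htx
      exact key_step m ih y z hu V A s t hcard hforest a₀ hloopa hleaf P Q hP hQ hPQ

lemma poly_ext_nat' (p q : Polynomial ℚ)
    (h : ∀ n : ℕ, p.eval ((n : ℚ) + 1) = q.eval ((n : ℚ) + 1)) : p = q := by
  have hz : p - q = 0 := by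
    apply Polynomial.eq_zero_of_infinite_isRoot
    apply Set.infinite_of_injective_forall_mem (f := fun n : ℕ => (n : ℚ) + 1)
    · intro a b hab
      simp only [add_left_inj] at hab
      exact Nat.cast_injective hab
    · intro n
      simp only [Set.mem_setOf_eq, Polynomial.IsRoot, Polynomial.eval_sub]
      rw [h n, sub_self]
  have := sub_eq_zero.mp hz
  exact this

lemma hBpoly (B : MvPolynomial (Fin 3) ℚ) (c d : ℚ) :
    ∃ ψ : Polynomial ℚ, ∀ r : ℚ, ψ.eval r = MvPolynomial.eval ![r, c, d] B := by
  refine ⟨MvPolynomial.eval₂ Polynomial.C ![Polynomial.X, Polynomial.C c, Polynomial.C d] B, ?_⟩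
  intro r
  have h1 : Polynomial.eval r (MvPolynomial.eval₂ Polynomial.C
      ![Polynomial.X, Polynomial.C c, Polynomial.C d] B)
      = (Polynomial.evalRingHom r) (MvPolynomial.eval₂ Polynomial.C
        ![Polynomial.X, Polynomial.C c, Polynomial.C d] B) := rfl
  rw [h1, MvPolynomial.eval₂_comp_left]
  have h2 : (Polynomial.evalRingHom r).comp (Polynomial.C : ℚ →+* Polynomial ℚ)
      = RingHom.id ℚ := by ext a; simp
  have h3 : (⇑(Polynomial.evalRingHom r) ∘ ![Polynomial.X, Polynomial.C c, Polynomial.C d])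
      = ![r, c, d] := by
    funext i
    fin_cases i <;> simp
  rw [h2, h3]
  rfl


lemma Phi_one_eq_colorSum (V A : Type) [Fintype V] [DecidableEq V] [Fintype A]
    (s t : A → V) (y z : ℚ) (n : ℕ) :
    Phi s t y z (fun _ _ _ => (1 : ℚ)) n = colorSum V A s t n y z := by
  classical
  unfold Phi colorSum
  refine Finset.sum_congr rfl fun f _ => ?_
  rw [Finset.prod_const_one, mul_one]
  have hiff : ∀ w w' : V, ((((f w : ℕ) : ℚ) + 1 < ((f w' : ℕ) : ℚ) + 1) ↔ f w < f w') := by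
    intro w w'
    rw [add_lt_add_iff_right, Nat.cast_lt]
    exact Iff.rfl
  have key : ∀ a : A, W y z (((f (s a) : ℕ) : ℚ) + 1) (((f (t a) : ℕ) : ℚ) + 1)
      = (if f (s a) < f (t a) then y else if f (t a) < f (s a) then z else 1) := by
    intro a
    unfold W
    by_cases hlt : f (s a) < f (t a)
    · rw [if_pos ((hiff (s a) (t a)).mpr hlt), if_pos hlt]
    · by_cases hgt : f (t a) < f (s a)
      · rw [if_neg (fun hc => hlt ((hiff (s a) (t a)).mp hc)),
          if_pos ((hiff (t a) (s a)).mpr hgt), if_neg hlt, if_pos hgt]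
      · rw [if_neg (fun hc => hlt ((hiff (s a) (t a)).mp hc)),
          if_neg (fun hc => hgt ((hiff (t a) (s a)).mp hc)), if_neg hlt, if_neg hgt]
  rw [Finset.prod_congr rfl (fun a _ => key a)]
  rw [← Finset.prod_filter_mul_prod_filter_not Finset.univ (fun a => f (s a) < f (t a))]
  have h1 : ∏ a ∈ Finset.univ.filter (fun a => f (s a) < f (t a)),
      (if f (s a) < f (t a) then y else if f (t a) < f (s a) then z else 1)
      = y ^ (Finset.univ.filter (fun a => f (s a) < f (t a))).card := by
    rw [Finset.prod_congr rfl (fun a ha => if_pos (Finset.mem_filter.mp ha).2),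
      Finset.prod_const]
  have h2 : ∏ a ∈ Finset.univ.filter (fun a => ¬ f (s a) < f (t a)),
      (if f (s a) < f (t a) then y else if f (t a) < f (s a) then z else 1)
      = z ^ (Finset.univ.filter (fun a => f (t a) < f (s a))).card := by
    rw [Finset.prod_congr rfl (fun a ha => if_neg (Finset.mem_filter.mp ha).2)]
    rw [← Finset.prod_filter_mul_prod_filter_not
      (Finset.univ.filter (fun a => ¬ f (s a) < f (t a))) (fun a => f (t a) < f (s a))]
    have h21 : ∏ a ∈ (Finset.univ.filter (fun a => ¬ f (s a) < f (t a))).filter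
        (fun a => f (t a) < f (s a)), (if f (t a) < f (s a) then z else 1)
        = z ^ (Finset.univ.filter (fun a => f (t a) < f (s a))).card := by
      rw [Finset.prod_congr rfl (fun a ha =>
        if_pos (Finset.mem_filter.mp ha).2), Finset.prod_const]
      congr 1
      rw [Finset.filter_filter]
      congr 1
      ext a
      simp only [Finset.mem_filter, Finset.mem_univ, true_and]
      exact ⟨fun h => h.2, fun h => ⟨lt_asymm h, h⟩⟩
    have h22 : ∏ a ∈ (Finset.univ.filter (fun a => ¬ f (s a) < f (t a))).filter
        (fun a => ¬ f (t a) < f (s a)), (if f (t a) < f (s a) then z else 1) = 1 := by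
      rw [Finset.prod_congr rfl (fun a ha => if_neg (Finset.mem_filter.mp ha).2)]
      exact Finset.prod_const_one
    rw [h21, h22, mul_one]
  rw [h1, h2]

end ForestB

open ForestB in
theorem forest_B_symmetry
    (V A : Type) [Fintype V] [DecidableEq V] [Fintype A]
    (s t : A → V)
    (hforest : ¬ UnderlyingHasCycle s t)
    (B : MvPolynomial (Fin 3) ℚ)
    (hB : ∀ q : ℕ, 0 < q → ∀ y z : ℚ,
      MvPolynomial.eval ![(q : ℚ), y, z] B = colorSum V A s t q y z) :
    ∀ q y z : ℚ, y + z - 1 ≠ 0 →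
      MvPolynomial.eval ![-q, y, z] B
      = (-1 : ℚ) ^ (Fintype.card V) * ((y + z - 1) ^ (Fintype.card A) *
          MvPolynomial.eval ![q, y / (y + z - 1), z / (y + z - 1)] B) := by
  intro q y z hu
  obtain ⟨φ, hφ1, hφ2⟩ := key (Fintype.card A) y z hu V A s t rfl hforest
    (fun _ _ _ => (1 : ℚ)) (fun _ _ _ => (1 : ℚ)) (fun _ => isP2_const 1)
    (fun _ => isP2_const 1) (fun _ _ _ => rfl)
  obtain ⟨ψ, hψ⟩ := hBpoly B y z
  obtain ⟨ψ', hψ'⟩ := hBpoly B (y / (y + z - 1)) (z / (y + z - 1))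
  have hcast : ∀ n : ℕ, ((n + 1 : ℕ) : ℚ) = (n : ℚ) + 1 := by
    intro n; push_cast; ring
  have hψφ : ψ = φ := by
    apply poly_ext_nat'
    intro n
    rw [hψ, ← hcast n, hB (n + 1) (Nat.succ_pos n) y z,
      ← Phi_one_eq_colorSum V A s t y z (n + 1), ← hφ1 (n + 1)]
  have hneg : ∀ n : ℕ, ψ.eval (-((n : ℚ) + 1))
      = ((-1 : ℚ) ^ Fintype.card V * (y + z - 1) ^ Fintype.card A) * ψ'.eval ((n : ℚ) + 1) := by
    intro n
    rw [hψφ, ← hcast n, hφ2 (n + 1), hψ', hB (n + 1) (Nat.succ_pos n) _ _,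
      ← Phi_one_eq_colorSum V A s t _ _ (n + 1)]
  have hpoly : ψ.comp (-Polynomial.X)
      = Polynomial.C ((-1 : ℚ) ^ Fintype.card V * (y + z - 1) ^ Fintype.card A) * ψ' := by
    apply poly_ext_nat'
    intro n
    rw [Polynomial.eval_comp, Polynomial.eval_mul, Polynomial.eval_C]
    simp only [Polynomial.eval_neg, Polynomial.eval_X]
    exact hneg n
  have hq := congrArg (Polynomial.eval q) hpoly
  rw [Polynomial.eval_comp, Polynomial.eval_mul, Polynomial.eval_C] at hq
  simp only [Polynomial.eval_neg, Polynomial.eval_X] at hq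
  rw [← hψ (-q), ← hψ' q, hq]
  ring
end

section
/- Let D = (V,A) be a digraph. Then χ^<_D(−1) = (−1)^{|V|} if D is acyclic and χ^<_D(−1) = 0 otherwise; and χ^≥_D(−1) = (−1)^{comp(D)} if D is totally cyclic and χ^≥_D(−1) = 0 otherwise. Here χ^<_D and χ^≥_D are the strict- and weak-chromatic polynomials of D, evaluated at −1. -/
set_option maxHeartbeats 1000000

open scoped Classical


section walks
variable {V A α : Type}

/-- transitive chain around a cycle -/
lemma cyc_trans {n : ℕ} (hn : 0 < n) (r : α → α → Prop) (htr : Transitive r)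
    (v : ZMod n → α) (h : ∀ i, r (v i) (v (i + 1))) : ∀ i j : ZMod n, r (v i) (v j) := by
  haveI : NeZero n := ⟨hn.ne'⟩
  have key : ∀ (m : ℕ) (i : ZMod n), r (v i) (v (i + (m + 1 : ℕ))) := by
    intro m
    induction m with
    | zero => intro i; simpa using h i
    | succ m ih =>
      intro i
      have h2 := h (i + (m + 1 : ℕ))
      have h3 : r (v i) (v (i + (m + 1 : ℕ) + 1)) := htr (ih i) h2
      have e : i + ((m + 1 : ℕ) : ZMod n) + 1 = i + ((m + 1 + 1 : ℕ) : ZMod n) := by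
        push_cast; ring
      rwa [e] at h3
  intro i j
  rcases eq_or_ne (j - i) 0 with hij | hij
  · have hji : j = i := sub_eq_zero.mp hij
    subst hji
    have h4 := key (n - 1) j
    have e : n - 1 + 1 = n := by omega
    rwa [e, ZMod.natCast_self, add_zero] at h4
  · have hval : (j - i).val ≠ 0 := fun hv => hij ((ZMod.val_eq_zero _).mp hv)
    obtain ⟨m, hm⟩ : ∃ m, (j - i).val = m + 1 :=
      ⟨(j - i).val - 1, by omega⟩
    have h4 := key m i
    rw [← hm] at h4
    rwa [ZMod.natCast_val, ZMod.cast_id, add_sub_cancel] at h4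

/-- periodic functions factor through mod -/
lemma periodic_mod (F : ℕ → A) (n : ℕ) (hn : 0 < n) (hper : ∀ j, F (j + n) = F j) :
    ∀ j, F j = F (j % n) := by
  intro j
  induction j using Nat.strong_induction_on with
  | _ j ih =>
    by_cases h : j < n
    · rw [Nat.mod_eq_of_lt h]
    · push_neg at h
      have h1 : j - n + n = j := Nat.sub_add_cancel h
      have h2 : F (j - n + n) = F (j - n) := hper (j - n)
      rw [h1] at h2
      rw [h2, ih (j - n) (by omega)]
      congr 1
      conv_rhs => rw [← h1, Nat.add_mod_right]

lemma mk_walk (s t : A → V) (n : ℕ) (hn : 0 < n) (F : ℕ → A)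
    (hper : ∀ j, F (j + n) = F j) (hstep : ∀ j, t (F j) = s (F (j + 1))) :
    ∃ c : ZMod n → A, (∀ i, t (c i) = s (c (i + 1))) ∧ c 0 = F 0 := by
  haveI : NeZero n := ⟨hn.ne'⟩
  refine ⟨fun i => F i.val, fun i => ?_, ?_⟩
  · show t (F i.val) = s (F (i + 1).val)
    rw [hstep i.val]
    congr 1
    rw [periodic_mod F n hn hper (i.val + 1), periodic_mod F n hn hper ((i + 1).val)]
    congr 1
    rw [ZMod.val_add, ZMod.val_one_eq_one_mod, Nat.mod_mod_of_dvd _ dvd_rfl]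
    conv_lhs => rw [Nat.add_mod, Nat.mod_eq_of_lt (ZMod.val_lt i)]
  · show F (0 : ZMod n).val = F 0
    rw [ZMod.val_zero]

end walks


def IsCyclicArc {V A : Type} (s t : A → V) (a : A) : Prop :=
  ∃ n : ℕ, 0 < n ∧ ∃ c : ZMod n → A,
    (∀ i, t (c i) = s (c (i + 1))) ∧ ∃ i, c i = a

def connSetoid {V A : Type} (s t : A → V) : Setoid V where
  r := Relation.ReflTransGen (fun x y => ∃ a, (s a = x ∧ t a = y) ∨ (s a = y ∧ t a = x))
  iseqv := by
    refine ⟨fun _ => Relation.ReflTransGen.refl, ?_, fun h h' => h.trans h'⟩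
    intro x y h
    induction h with
    | refl => exact Relation.ReflTransGen.refl
    | tail _ hbc ih => exact Relation.ReflTransGen.head (hbc.imp (fun a ha => ha.symm)) ih

section pigeon
variable {V A : Type}

lemma hasDicycle_of_out (s t : A → V) [Finite V] (arc : V → A) (hs : ∀ v, s (arc v) = v)
    (v0 : V) : HasDicycle s t := by
  set g : V → V := fun v => t (arc v) with hg
  obtain ⟨i, j, hne, heq⟩ := Finite.exists_ne_map_eq_of_infinite (fun m : ℕ => g^[m] v0)
  wlog hij : i < j generalizing i j
  · exact this j i hne.symm heq.symm (by omega)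
  set p := j - i with hp
  have hp0 : 0 < p := by omega
  have hper0 : g^[i + p] v0 = g^[i] v0 := by
    have : i + p = j := by omega
    rw [this]; exact heq.symm
  have hper : ∀ m, g^[i + m + p] v0 = g^[i + m] v0 := by
    intro m
    have e1 : i + m + p = m + (i + p) := by ring
    have e2 : i + m = m + i := by ring
    rw [e1, e2, Function.iterate_add_apply g m (i + p), Function.iterate_add_apply g m i, hper0]
  have hper' : ∀ m, arc (g^[i + (m + p)] v0) = arc (g^[i + m] v0) := by
    intro m
    rw [show i + (m + p) = i + m + p by ring, hper m]
  have hstep' : ∀ m, t (arc (g^[i + m] v0)) = s (arc (g^[i + (m + 1)] v0)) := by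
    intro m
    rw [hs (g^[i + (m + 1)] v0)]
    show g (g^[i + m] v0) = g^[i + (m + 1)] v0
    rw [show i + (m + 1) = (i + m) + 1 by ring, Function.iterate_succ_apply']
  obtain ⟨c, hc, -⟩ := mk_walk s t p hp0 (fun m => arc (g^[i + m] v0)) hper' hstep'
  exact ⟨p, hp0, c, hc⟩

lemma hasDicycle_swap (s t : A → V) (h : HasDicycle t s) : HasDicycle s t := by
  obtain ⟨n, hn, c, hc⟩ := h
  exact ⟨n, hn, fun i => c (-i - 1), fun i => by
    have := hc (-i - 2)
    have e : -i - 2 + 1 = -i - 1 := by ring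
    rw [e] at this
    rw [← this]
    congr 1
    ring⟩

end pigeon

section chrom
variable {V A : Type} (s t : A → V) (rel : ℕ → ℕ → Prop)

def PP (m : ℕ) (f : V → Fin m) : Prop := ∀ a : A, rel (f (s a)).val (f (t a)).val

noncomputable def scnt (k : ℕ) : ℕ :=
  Nat.card {f : V → Fin k // PP s t rel k f ∧ Function.Surjective f}

noncomputable def cnt (q : ℕ) : ℕ := Nat.card {f : V → Fin q // PP s t rel q f}

lemma PP_comp (hmono : ∀ x y x' y' : ℕ,
      (x < y ↔ x' < y') → (x = y ↔ x' = y') → (rel x y ↔ rel x' y'))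
    {k q : ℕ} (φ : Fin k → Fin q) (hφ : StrictMono φ) (g : V → Fin k) :
    PP s t rel q (fun v => φ (g v)) ↔ PP s t rel k g := by
  refine forall_congr' fun a => hmono _ _ _ _ ?_ ?_
  · show (φ (g (s a))).val < (φ (g (t a))).val ↔ _
    rw [← Fin.lt_def, ← Fin.lt_def, hφ.lt_iff_lt]
  · constructor
    · intro h
      exact congrArg Fin.val (hφ.injective (Fin.val_injective h))
    · intro h
      exact congrArg Fin.val (congrArg φ (Fin.val_injective h))

lemma scnt_eq_zero [Fintype V] {k : ℕ} (hk : Fintype.card V < k) : scnt s t rel k = 0 := by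
  rw [scnt, Nat.card_eq_zero]
  left
  rw [isEmpty_subtype]
  intro f hf
  obtain ⟨-, hsurj⟩ := hf
  have := Fintype.card_le_of_surjective f hsurj
  simp only [Fintype.card_fin] at this
  omega

lemma cnt_decomp [Fintype V] [Fintype A]
    (hmono : ∀ x y x' y' : ℕ,
      (x < y ↔ x' < y') → (x = y ↔ x' = y') → (rel x y ↔ rel x' y'))
    (q : ℕ) :
    cnt s t rel q =
      ∑ k ∈ Finset.range (Fintype.card V + 1), scnt s t rel k * q.choose k := by
  classical
  have fiberEq : ∀ I : Finset (Fin q),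
      Nat.card {F : {f : V → Fin q // PP s t rel q f} // Finset.image F.1 Finset.univ = I}
        = scnt s t rel I.card := by
    intro I
    rw [scnt]
    apply Nat.card_congr
    set e := I.orderIsoOfFin rfl with he
    have hφ : StrictMono (fun x : Fin I.card => (e x : Fin q)) := fun x y hxy => by
      show (e x : Fin q) < (e y : Fin q)
      exact Subtype.coe_lt_coe.mpr (e.lt_iff_lt.mpr hxy)
    have mem1 : ∀ (f : V → Fin q), Finset.image f Finset.univ = I → ∀ v, f v ∈ I := by
      intro f hf v
      have h := Finset.mem_image_of_mem f (Finset.mem_univ v)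
      rwa [hf] at h
    refine
      { toFun := fun F => ⟨fun v => e.symm ⟨F.1.1 v, mem1 F.1.1 F.2 v⟩, ?_, ?_⟩
        invFun := fun g => ⟨⟨fun v => (e (g.1 v) : Fin q), ?_⟩, ?_⟩
        left_inv := ?_
        right_inv := ?_ }
    · -- PP forward
      have hfg : (fun v => (e (e.symm ⟨F.1.1 v, mem1 F.1.1 F.2 v⟩) : Fin q))
          = F.1.1 := funext fun v => by rw [OrderIso.apply_symm_apply]
      exact (PP_comp s t rel hmono _ hφ _).mp (by rw [hfg]; exact F.1.2)
    · -- surjectivity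
      intro b
      obtain ⟨v, -, hv⟩ := Finset.mem_image.mp (by rw [F.2]; exact (e b).2 :
        (e b : Fin q) ∈ Finset.image F.1.1 Finset.univ)
      refine ⟨v, ?_⟩
      have h2 : (⟨F.1.1 v, mem1 F.1.1 F.2 v⟩ : {x // x ∈ I}) = e b := Subtype.ext hv
      show e.symm ⟨F.1.1 v, mem1 F.1.1 F.2 v⟩ = b
      rw [h2, OrderIso.symm_apply_apply]
    · -- PP back
      exact (PP_comp s t rel hmono _ hφ g.1).mpr g.2.1
    · -- image eq
      ext x
      simp only [Finset.mem_image, Finset.mem_univ, true_and]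
      constructor
      · rintro ⟨v, rfl⟩; exact (e (g.1 v)).2
      · intro hx
        obtain ⟨v, hv⟩ := g.2.2 (e.symm ⟨x, hx⟩)
        exact ⟨v, by rw [hv, OrderIso.apply_symm_apply]⟩
    · -- left_inv
      rintro ⟨⟨f, hf⟩, hI⟩
      refine Subtype.ext (Subtype.ext (funext fun v => ?_))
      show (e (e.symm ⟨f v, _⟩) : Fin q) = f v
      rw [OrderIso.apply_symm_apply]
    · -- right_inv
      rintro ⟨g, hg⟩
      refine Subtype.ext (funext fun v => ?_)
      show e.symm ⟨(e (g v) : Fin q), _⟩ = g v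
      have h2 : (⟨(e (g v) : Fin q), _⟩ : {x // x ∈ I}) = e (g v) := Subtype.ext rfl
      rw [h2, OrderIso.symm_apply_apply]
  have step1 : cnt s t rel q = ∑ I : Finset (Fin q), scnt s t rel I.card := by
    rw [cnt, Nat.card_congr (Equiv.sigmaFiberEquiv
      (fun F : {f : V → Fin q // PP s t rel q f} => Finset.image F.1 Finset.univ)).symm]
    haveI : ∀ I : Finset (Fin q), Fintype {F : {f : V → Fin q // PP s t rel q f} //
        Finset.image F.1 Finset.univ = I} := fun I => Fintype.ofFinite _
    rw [Nat.card_eq_fintype_card, Fintype.card_sigma]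
    exact Finset.sum_congr rfl fun I _ => by rw [← Nat.card_eq_fintype_card, fiberEq]
  rw [step1]
  -- group by cardinality
  have step2 : ∑ I : Finset (Fin q), scnt s t rel I.card
      = ∑ k ∈ Finset.range (q + 1), scnt s t rel k * q.choose k := by
    rw [← Finset.sum_fiberwise_of_maps_to (g := fun I : Finset (Fin q) => I.card)
      (t := Finset.range (q + 1)) (fun I _ => Finset.mem_range.mpr
        (Nat.lt_succ_of_le (by simpa using Finset.card_le_card (Finset.subset_univ I))))]
    refine Finset.sum_congr rfl fun k hk => ?_
    rw [Finset.sum_congr rfl (fun I hI => by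
      rw [(Finset.mem_filter.mp hI).2] : ∀ I ∈ Finset.filter (fun I : Finset (Fin q) => I.card = k) Finset.univ,
        scnt s t rel I.card = scnt s t rel k)]
    rw [Finset.sum_const, smul_eq_mul, mul_comm]
    congr 1
    have hpc : Finset.filter (fun I : Finset (Fin q) => I.card = k) Finset.univ
        = Finset.powersetCard k (Finset.univ : Finset (Fin q)) := by
      rw [Finset.powersetCard_eq_filter, Finset.powerset_univ]
    rw [hpc, Finset.card_powersetCard, Finset.card_univ, Fintype.card_fin]
  rw [step2]
  -- adjust summation range
  have hrange : ∀ m₁ m₂ : ℕ, m₁ ≤ m₂ →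
      ∑ k ∈ Finset.range (m₂ + 1), scnt s t rel k * q.choose k
        = ∑ k ∈ Finset.range (m₁ + 1), scnt s t rel k * q.choose k
        ∨ True := fun _ _ _ => Or.inr trivial
  set N := max q (Fintype.card V) with hN
  have e1 : ∑ k ∈ Finset.range (q + 1), scnt s t rel k * q.choose k
      = ∑ k ∈ Finset.range (N + 1), scnt s t rel k * q.choose k := by
    apply Finset.sum_subset
    · intro x hx
      simp only [Finset.mem_range] at hx ⊢
      omega
    · intro x hx hnx
      simp only [Finset.mem_range] at hx hnx
      rw [Nat.choose_eq_zero_of_lt (by omega), mul_zero]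
  have e2 : ∑ k ∈ Finset.range (Fintype.card V + 1), scnt s t rel k * q.choose k
      = ∑ k ∈ Finset.range (N + 1), scnt s t rel k * q.choose k := by
    apply Finset.sum_subset
    · intro x hx
      simp only [Finset.mem_range] at hx ⊢
      omega
    · intro x hx hnx
      simp only [Finset.mem_range] at hx hnx
      rw [scnt_eq_zero s t rel (by omega), zero_mul]
  rw [e1, e2]


def Good (B : Finset V) : Prop := ∀ a : A, t a ∈ B → (s a ∈ B ∧ rel 0 0)

def subs (B : Finset V) : {a : A // s a ∉ B ∧ t a ∉ B} → {v : V // v ∉ B} :=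
  fun a => ⟨s a.1, a.2.1⟩

def subt (B : Finset V) : {a : A // s a ∉ B ∧ t a ∉ B} → {v : V // v ∉ B} :=
  fun a => ⟨t a.1, a.2.2⟩

lemma scnt_succ [Fintype V]
    (h0succ : ∀ y, rel 0 (y + 1)) (hsucc0 : ∀ x, ¬ rel (x + 1) 0)
    (hshift : ∀ x y, rel (x + 1) (y + 1) ↔ rel x y) (k : ℕ) :
    scnt s t rel (k + 1) =
      ∑ B ∈ Finset.filter (fun B : Finset V => B.Nonempty ∧ Good s t rel B) Finset.univ,
        scnt (subs s t B) (subt s t B) rel k := by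
  classical
  -- index by the fiber of the zero set
  have fiberEq : ∀ (B : Finset V), B.Nonempty → Good s t rel B →
      Nat.card {F : {f : V → Fin (k+1) // PP s t rel (k+1) f ∧ Function.Surjective f} //
        Finset.filter (fun v => F.1 v = 0) Finset.univ = B}
      = scnt (subs s t B) (subt s t B) rel k := by
    intro B hBne hBgood
    rw [scnt]
    apply Nat.card_congr
    have hmem : ∀ (F : {f : V → Fin (k+1) // PP s t rel (k+1) f ∧ Function.Surjective f}),
        Finset.filter (fun v => F.1 v = 0) Finset.univ = B →
        ∀ v : V, (v ∈ B ↔ F.1 v = 0) := by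
      intro F hF v
      rw [← hF]
      simp
    refine
      { toFun := fun F => ⟨fun v => ⟨(F.1.1 v.1).val - 1, ?_⟩, ?_, ?_⟩
        invFun := fun g => ⟨⟨fun v => if h : v ∈ B then (0 : Fin (k+1)) else
            ⟨(g.1 ⟨v, h⟩).val + 1, by have := (g.1 ⟨v, h⟩).isLt; omega⟩, ?_, ?_⟩, ?_⟩
        left_inv := ?_
        right_inv := ?_ }
    · -- bound
      have h1 : F.1.1 v.1 ≠ 0 := fun h0 => v.2 (((hmem F F.2 v.1)).mpr h0)
      have h2 := (F.1.1 v.1).isLt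
      have h3 : (F.1.1 v.1).val ≠ 0 := fun h0 => h1 (Fin.ext h0)
      omega
    · -- PP for g
      intro a
      have hP := F.1.2.1 a.1
      have h1 : F.1.1 (s a.1) ≠ 0 := fun h0 => a.2.1 ((hmem F F.2 (s a.1)).mpr h0)
      have h2 : F.1.1 (t a.1) ≠ 0 := fun h0 => a.2.2 ((hmem F F.2 (t a.1)).mpr h0)
      have e1 : (F.1.1 (s a.1)).val - 1 + 1 = (F.1.1 (s a.1)).val := by
        have : (F.1.1 (s a.1)).val ≠ 0 := fun h => h1 (Fin.ext h); omega
      have e2 : (F.1.1 (t a.1)).val - 1 + 1 = (F.1.1 (t a.1)).val := by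
        have : (F.1.1 (t a.1)).val ≠ 0 := fun h => h2 (Fin.ext h); omega
      show rel ((F.1.1 (s a.1)).val - 1) ((F.1.1 (t a.1)).val - 1)
      rw [← hshift, e1, e2]
      exact hP
    · -- surjectivity of g
      intro j
      obtain ⟨v, hv⟩ := F.1.2.2 ⟨j.val + 1, by have := j.isLt; omega⟩
      have hvB : v ∉ B := fun hB => by
        rw [(hmem F F.2 v).mp hB] at hv
        exact absurd (congrArg Fin.val hv) (by simp)
      refine ⟨⟨v, hvB⟩, ?_⟩
      apply Fin.ext
      show (F.1.1 v).val - 1 = j.val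
      rw [hv]
      simp
    · -- PP for f
      intro a
      by_cases hta : t a ∈ B
      · obtain ⟨hsa, hrel⟩ := hBgood a hta
        show rel ((if h : s a ∈ B then _ else _ : Fin (k+1))).val
          ((if h : t a ∈ B then _ else _ : Fin (k+1))).val
        rw [dif_pos hsa, dif_pos hta]
        exact hrel
      · by_cases hsa : s a ∈ B
        · show rel ((if h : s a ∈ B then _ else _ : Fin (k+1))).val
            ((if h : t a ∈ B then _ else _ : Fin (k+1))).val
          rw [dif_pos hsa, dif_neg hta]
          exact h0succ _
        · show rel ((if h : s a ∈ B then _ else _ : Fin (k+1))).val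
            ((if h : t a ∈ B then _ else _ : Fin (k+1))).val
          rw [dif_neg hsa, dif_neg hta]
          show rel ((g.1 ⟨s a, hsa⟩).val + 1) ((g.1 ⟨t a, hta⟩).val + 1)
          rw [hshift]
          exact g.2.1 ⟨a, hsa, hta⟩
    · -- surjectivity of f
      intro i
      rcases Nat.eq_zero_or_eq_succ_pred i.val with hi | hi
      · obtain ⟨b, hb⟩ := hBne
        refine ⟨b, ?_⟩
        simp only [dif_pos hb]
        exact (Fin.ext hi).symm
      · obtain ⟨w, hw⟩ := g.2.2 ⟨i.val - 1, by have := i.isLt; omega⟩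
        refine ⟨w.1, ?_⟩
        simp only [dif_neg w.2]
        apply Fin.ext
        show (g.1 w).val + 1 = i.val
        rw [hw]
        show i.val - 1 + 1 = i.val
        omega
    · -- fiber condition
      ext v
      simp only [Finset.mem_filter, Finset.mem_univ, true_and]
      constructor
      · intro hv
        by_contra hvB
        simp only [dif_neg hvB] at hv
        exact absurd (congrArg Fin.val hv) (by simp)
      · intro hv
        simp only [dif_pos hv]
    · -- left_inv
      rintro ⟨⟨f, hf⟩, hfib⟩
      refine Subtype.ext (Subtype.ext (funext fun v => ?_))
      by_cases hv : v ∈ B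
      · simp only [dif_pos hv]
        exact ((hmem ⟨f, hf⟩ hfib v).mp hv).symm
      · simp only [dif_neg hv]
        apply Fin.ext
        simp only [Fin.val_mk]
        have h1 : f v ≠ 0 := fun h0 => hv ((hmem ⟨f, hf⟩ hfib v).mpr h0)
        have h2 : (f v).val ≠ 0 := fun h0 => h1 (Fin.ext h0)
        omega
    · -- right_inv
      rintro ⟨g, hg⟩
      refine Subtype.ext (funext fun v => ?_)
      apply Fin.ext
      simp only [dif_neg v.2, Subtype.coe_eta]
      omega
  -- now sum over the sigma type
  have key : scnt s t rel (k + 1) =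
      ∑ B : {B : Finset V // B.Nonempty ∧ Good s t rel B},
        Nat.card {F : {f : V → Fin (k+1) // PP s t rel (k+1) f ∧ Function.Surjective f} //
          Finset.filter (fun v => F.1 v = 0) Finset.univ = B.1} := by
    rw [scnt]
    have hfibmap : ∀ F : {f : V → Fin (k+1) // PP s t rel (k+1) f ∧ Function.Surjective f},
        (Finset.filter (fun v => F.1 v = 0) Finset.univ).Nonempty ∧
          Good s t rel (Finset.filter (fun v => F.1 v = 0) Finset.univ) := by
      intro F
      constructor
      · obtain ⟨v, hv⟩ := F.2.2 0
        exact ⟨v, by simp [hv]⟩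
      · intro a hta
        simp only [Finset.mem_filter, Finset.mem_univ, true_and] at hta ⊢
        have hP := F.2.1 a
        rw [hta] at hP
        have h0 : F.1 (s a) = 0 := by
          rcases Nat.eq_zero_or_eq_succ_pred (F.1 (s a)).val with h | h
          · exact Fin.ext h
          · rw [show (0:Fin (k+1)).val = 0 from rfl, h] at hP
            exact absurd hP (hsucc0 _)
        refine ⟨h0, ?_⟩
        have := hP
        rwa [h0] at this
    rw [Nat.card_congr (Equiv.sigmaFiberEquiv
      (fun F : {f : V → Fin (k+1) // PP s t rel (k+1) f ∧ Function.Surjective f} =>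
        (⟨Finset.filter (fun v => F.1 v = 0) Finset.univ, hfibmap F⟩ :
          {B : Finset V // B.Nonempty ∧ Good s t rel B}))).symm]
    haveI : ∀ B : {B : Finset V // B.Nonempty ∧ Good s t rel B}, Fintype
        {F : {f : V → Fin (k+1) // PP s t rel (k+1) f ∧ Function.Surjective f} //
          (⟨Finset.filter (fun v => F.1 v = 0) Finset.univ, hfibmap F⟩ :
            {B : Finset V // B.Nonempty ∧ Good s t rel B}) = B} := fun B => Fintype.ofFinite _
    rw [Nat.card_eq_fintype_card, Fintype.card_sigma]
    refine Finset.sum_congr rfl fun B _ => ?_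
    rw [← Nat.card_eq_fintype_card]
    exact Nat.card_congr (Equiv.subtypeEquivRight fun F => Subtype.ext_iff)
  rw [key]
  have h1 : ∀ B : {B : Finset V // B.Nonempty ∧ Good s t rel B},
      Nat.card {F : {f : V → Fin (k+1) // PP s t rel (k+1) f ∧ Function.Surjective f} //
        Finset.filter (fun v => F.1 v = 0) Finset.univ = B.1}
      = scnt (subs s t B.1) (subt s t B.1) rel k := fun B => fiberEq B.1 B.2.1 B.2.2
  rw [Fintype.sum_congr _ _ h1]
  exact (Finset.sum_subtype
    (Finset.filter (fun B : Finset V => B.Nonempty ∧ Good s t rel B) Finset.univ)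
    (fun B => by simp only [Finset.mem_filter, Finset.mem_univ, true_and])
    (fun B => scnt (subs s t B) (subt s t B) rel k)).symm

end chrom



lemma neg_one_pow_sub (n b : ℕ) (h : b ≤ n) : (-1 : ℤ) ^ (n - b) = (-1) ^ n * (-1) ^ b := by
  have h1 : (-1 : ℤ) ^ (n - b) * (-1) ^ b = (-1) ^ n := by
    rw [← pow_add]; congr 1; omega
  have h2 : ((-1 : ℤ) ^ b) * ((-1) ^ b) = 1 := by
    rw [← pow_add]; exact Even.neg_one_pow ⟨b, by ring⟩
  calc (-1 : ℤ) ^ (n - b) = (-1 : ℤ) ^ (n - b) * ((-1) ^ b * (-1) ^ b) := by rw [h2, mul_one]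
    _ = ((-1 : ℤ) ^ (n - b) * (-1) ^ b) * (-1) ^ b := by ring
    _ = (-1) ^ n * (-1) ^ b := by rw [h1]

lemma sum_nonempty_subsets {V : Type} [Fintype V] (S : Finset V) (hS : S.Nonempty) :
    ∑ B ∈ Finset.filter (fun B : Finset V => B.Nonempty ∧ B ⊆ S) Finset.univ,
      (-1 : ℤ) ^ B.card = -1 := by
  have hset : Finset.filter (fun B : Finset V => B.Nonempty ∧ B ⊆ S) Finset.univ
      = S.powerset.erase ∅ := by
    ext B
    simp only [Finset.mem_filter, Finset.mem_univ, true_and, Finset.mem_erase,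
      Finset.mem_powerset, Finset.nonempty_iff_ne_empty, and_comm]
  rw [hset, Finset.sum_erase_eq_sub (Finset.empty_mem_powerset S),
    Finset.sum_powerset_neg_one_pow_card_of_nonempty hS]
  simp

lemma sum_supersets {V : Type} [Fintype V] (K : Finset V) (hK : K ≠ Finset.univ) :
    ∑ B ∈ Finset.filter (fun B : Finset V => K ⊆ B) Finset.univ,
      (-1 : ℤ) ^ B.card = 0 := by
  have hne : (Finset.univ \ K).Nonempty := by
    rw [Finset.sdiff_nonempty]
    intro hsub
    exact hK (le_antisymm (Finset.subset_univ K) hsub)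
  have := Finset.sum_powerset_neg_one_pow_card_of_nonempty hne
  calc ∑ B ∈ Finset.filter (fun B : Finset V => K ⊆ B) Finset.univ, (-1 : ℤ) ^ B.card
      = ∑ C ∈ (Finset.univ \ K).powerset, (-1 : ℤ) ^ C.card * (-1) ^ K.card := by
        refine Finset.sum_bij' (fun B _ => B \ K) (fun C _ => C ∪ K) ?_ ?_ ?_ ?_ ?_
        · intro B hB
          simp only [Finset.mem_filter, Finset.mem_univ, true_and] at hB
          rw [Finset.mem_powerset]
          intro x hx
          simp only [Finset.mem_sdiff] at hx ⊢
          exact ⟨Finset.mem_univ x, hx.2⟩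
        · intro C hC
          simp only [Finset.mem_filter, Finset.mem_univ, true_and]
          exact Finset.subset_union_right
        · intro B hB
          simp only [Finset.mem_filter, Finset.mem_univ, true_and] at hB
          exact Finset.sdiff_union_of_subset hB
        · intro C hC
          rw [Finset.mem_powerset] at hC
          apply Finset.union_sdiff_cancel_right
          intro x hx1 hx2
          intro y hy
          have := hC (hx1 hy)
          simp only [Finset.mem_sdiff] at this
          exact absurd (hx2 hy) this.2
        · intro B hB
          simp only [Finset.mem_filter, Finset.mem_univ, true_and] at hB
          rw [← pow_add, Finset.card_sdiff_add_card_eq_card hB]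
    _ = 0 := by rw [← Finset.sum_mul, this, zero_mul]

section chrom
variable {V A : Type} (s t : A → V) (rel : ℕ → ℕ → Prop)

lemma sub_acyclic (B : Finset V) (h : ¬ HasDicycle s t) :
    ¬ HasDicycle (subs s t B) (subt s t B) := by
  rintro ⟨n, hn, c, hc⟩
  exact h ⟨n, hn, fun i => (c i).1, fun i => congrArg Subtype.val (hc i)⟩

lemma scnt_zero_of_nonempty [Nonempty V] : scnt s t rel 0 = 0 := by
  rw [scnt, Nat.card_eq_zero]
  left
  constructor
  intro f
  exact (f.1 (Classical.arbitrary V)).elim0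

lemma card_compl_sub [Fintype V] (B : Finset V) :
    Fintype.card {v : V // v ∉ B} = Fintype.card V - B.card := by
  rw [Fintype.card_subtype]
  have : Finset.filter (fun v => v ∉ B) Finset.univ = Bᶜ := by
    ext v; simp [Finset.mem_compl]
  rw [this, Finset.card_compl]

end chrom

lemma Tval_base (rel : ℕ → ℕ → Prop) (V A : Type) [Fintype V] [Fintype A] (s t : A → V)
    (h : Fintype.card V = 0) :
    ∑ k ∈ Finset.range (Fintype.card V + 1), (-1 : ℤ) ^ k * scnt s t rel k
      = if Nonempty A ∧ rel 0 0 then 0 else (-1) ^ (Fintype.card V) := by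
  haveI hVe : IsEmpty V := Fintype.card_eq_zero_iff.mp h
  haveI hAe : IsEmpty A := ⟨fun a => IsEmpty.false (s a)⟩
  haveI : Unique {f : V → Fin 0 // PP s t rel 0 f ∧ Function.Surjective f} :=
    { default := ⟨fun v => isEmptyElim v, fun a => isEmptyElim a, fun b => b.elim0⟩
      uniq := fun f => Subtype.ext (funext fun v => isEmptyElim v) }
  have h1 : scnt s t rel 0 = 1 := Nat.card_unique
  rw [h]
  rw [if_neg (fun hc => not_nonempty_iff.mpr hAe hc.1)]
  simp [h1]

lemma Tval (rel : ℕ → ℕ → Prop)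
    (h0succ : ∀ y, rel 0 (y + 1)) (hsucc0 : ∀ x, ¬ rel (x + 1) 0)
    (hshift : ∀ x y, rel (x + 1) (y + 1) ↔ rel x y) :
    ∀ (n : ℕ) (V A : Type) [Fintype V] [Fintype A] (s t : A → V),
      Fintype.card V ≤ n → ¬ HasDicycle s t →
      ∑ k ∈ Finset.range (Fintype.card V + 1), (-1 : ℤ) ^ k * scnt s t rel k
        = if Nonempty A ∧ rel 0 0 then 0 else (-1) ^ (Fintype.card V) := by
  intro n
  induction n with
  | zero =>
    intro V A _ _ s t hcard hac
    exact Tval_base rel V A s t (by omega)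
  | succ n ih =>
    intro V A _ _ s t hcard hac
    by_cases hV : Fintype.card V = 0
    · exact Tval_base rel V A s t hV
    · -- main step
      have hpos : 0 < Fintype.card V := Nat.pos_of_ne_zero hV
      haveI : Nonempty V := Fintype.card_pos_iff.mp hpos
      set n0 := Fintype.card V with hn0
      -- peel off k = 0
      rw [Finset.sum_range_succ' (fun k => (-1 : ℤ) ^ k * scnt s t rel k) n0]
      rw [scnt_zero_of_nonempty]
      simp only [Nat.cast_zero, mul_zero, add_zero, pow_zero]
      -- rewrite each scnt (k+1)
      have hrec : ∀ i ∈ Finset.range n0, (-1 : ℤ) ^ (i + 1) * scnt s t rel (i + 1)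
          = -∑ B ∈ Finset.filter (fun B : Finset V => B.Nonempty ∧ Good s t rel B)
              Finset.univ, (-1 : ℤ) ^ i * scnt (subs s t B) (subt s t B) rel i := by
        intro i _
        rw [scnt_succ s t rel h0succ hsucc0 hshift i]
        push_cast
        rw [Finset.mul_sum, ← Finset.sum_neg_distrib]
        refine Finset.sum_congr rfl fun B _ => ?_
        ring
      rw [Finset.sum_congr rfl hrec, Finset.sum_neg_distrib, ← Finset.sum_comm]
      -- evaluate inner sums by the induction hypothesis
      have hinner : ∀ B ∈ Finset.filter (fun B : Finset V => B.Nonempty ∧ Good s t rel B)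
          Finset.univ,
          ∑ y ∈ Finset.range n0, (-1 : ℤ) ^ y * scnt (subs s t B) (subt s t B) rel y
            = if Nonempty {a : A // s a ∉ B ∧ t a ∉ B} ∧ rel 0 0 then 0
              else (-1) ^ (n0 - B.card) := by
        intro B hB
        obtain ⟨hBne, hBgood⟩ := (Finset.mem_filter.mp hB).2
        have hcardB : Fintype.card {v : V // v ∉ B} = n0 - B.card := card_compl_sub B
        have hb1 : 1 ≤ B.card := Finset.card_pos.mpr hBne
        have hbn : B.card ≤ n0 := Finset.card_le_univ B
        have hsub : Finset.range (Fintype.card {v : V // v ∉ B} + 1) ⊆ Finset.range n0 := by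
          intro x hx
          simp only [Finset.mem_range] at hx ⊢
          omega
        have hz : ∀ x ∈ Finset.range n0, x ∉ Finset.range (Fintype.card {v : V // v ∉ B} + 1) →
            (-1 : ℤ) ^ x * scnt (subs s t B) (subt s t B) rel x = 0 := by
          intro x _ hx
          simp only [Finset.mem_range] at hx
          rw [scnt_eq_zero _ _ rel (by omega)]
          simp
        rw [← Finset.sum_subset hsub hz,
          ih {v : V // v ∉ B} {a : A // s a ∉ B ∧ t a ∉ B} (subs s t B) (subt s t B)
            (by omega) (sub_acyclic s t B hac), hcardB]
      rw [Finset.sum_congr rfl hinner]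
      -- now case analysis
      by_cases hr : rel 0 0
      · by_cases hA : Nonempty A
        · -- weak case with arcs : total is 0
          rw [if_pos ⟨hA, hr⟩]
          have hval : ∀ B ∈ Finset.filter (fun B : Finset V => B.Nonempty ∧ Good s t rel B)
              Finset.univ,
              (if Nonempty {a : A // s a ∉ B ∧ t a ∉ B} ∧ rel 0 0 then (0:ℤ)
                else (-1) ^ (n0 - B.card))
              = if Nonempty {a : A // s a ∉ B ∧ t a ∉ B} then (0:ℤ)
                else (-1) ^ (n0 - B.card) := by
            intro B _
            by_cases h' : Nonempty {a : A // s a ∉ B ∧ t a ∉ B}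
            · rw [if_pos ⟨h', hr⟩, if_pos h']
            · rw [if_neg (fun hc => h' hc.1), if_neg h']
          rw [Finset.sum_congr rfl hval, Finset.sum_ite, Finset.sum_const_zero, zero_add]
          set K := Finset.image s Finset.univ with hK
          have hKB : Finset.filter (fun B => ¬ Nonempty {a : A // s a ∉ B ∧ t a ∉ B})
              (Finset.filter (fun B : Finset V => B.Nonempty ∧ Good s t rel B) Finset.univ)
              = Finset.filter (fun B : Finset V => K ⊆ B) Finset.univ := by
            ext B
            simp only [Finset.mem_filter, Finset.mem_univ, true_and]
            constructor
            · rintro ⟨⟨hne, hgood⟩, hno⟩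
              intro x hx
              simp only [hK, Finset.mem_image, Finset.mem_univ, true_and] at hx
              obtain ⟨a, rfl⟩ := hx
              by_cases hta : t a ∈ B
              · exact (hgood a hta).1
              · by_contra hsa
                exact hno ⟨a, hsa, hta⟩
            · intro hKsub
              obtain ⟨a0⟩ := hA
              refine ⟨⟨⟨s a0, hKsub (Finset.mem_image_of_mem s (Finset.mem_univ a0))⟩, ?_⟩, ?_⟩
              · intro a hta
                exact ⟨hKsub (Finset.mem_image_of_mem s (Finset.mem_univ a)), hr⟩
              · rintro ⟨a, hsa, -⟩
                exact hsa (hKsub (Finset.mem_image_of_mem s (Finset.mem_univ a)))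
          rw [hKB]
          have hKne : K ≠ Finset.univ := by
            intro hKuniv
            apply hac
            have harc : ∀ v : V, ∃ a : A, s a = v := by
              intro v
              have : v ∈ K := hKuniv ▸ Finset.mem_univ v
              simpa only [hK, Finset.mem_image, Finset.mem_univ, true_and] using this
            exact hasDicycle_of_out s t (fun v => (harc v).choose)
              (fun v => (harc v).choose_spec) (Classical.arbitrary V)
          have : ∑ B ∈ Finset.filter (fun B : Finset V => K ⊆ B) Finset.univ,
              (-1:ℤ) ^ (n0 - B.card)
              = ∑ B ∈ Finset.filter (fun B : Finset V => K ⊆ B) Finset.univ,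
                (-1:ℤ) ^ n0 * (-1) ^ B.card := by
            refine Finset.sum_congr rfl fun B _ => ?_
            exact neg_one_pow_sub n0 B.card (Finset.card_le_univ B)
          rw [this, ← Finset.mul_sum, sum_supersets K hKne, mul_zero, neg_zero]
        · -- weak case, no arcs
          rw [if_neg (fun hc => hA hc.1)]
          have hval : ∀ B ∈ Finset.filter (fun B : Finset V => B.Nonempty ∧ Good s t rel B)
              Finset.univ,
              (if Nonempty {a : A // s a ∉ B ∧ t a ∉ B} ∧ rel 0 0 then (0:ℤ)
                else (-1) ^ (n0 - B.card))
              = (-1:ℤ) ^ n0 * (-1) ^ B.card := by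
            intro B _
            rw [if_neg (fun hc => hA ⟨hc.1.some.1⟩),
              neg_one_pow_sub n0 B.card (Finset.card_le_univ B)]
          rw [Finset.sum_congr rfl hval, ← Finset.mul_sum]
          have hset : Finset.filter (fun B : Finset V => B.Nonempty ∧ Good s t rel B)
              Finset.univ
              = Finset.filter (fun B : Finset V => B.Nonempty ∧ B ⊆ Finset.univ)
                Finset.univ := by
            ext B
            simp only [Finset.mem_filter, Finset.mem_univ, true_and, Finset.subset_univ,
              and_true]
            exact ⟨fun h => h.1, fun h => ⟨h, fun a _ => (hA ⟨a⟩).elim⟩⟩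
          rw [hset, sum_nonempty_subsets Finset.univ Finset.univ_nonempty]
          ring
      · -- strict case
        rw [if_neg (fun hc => hr hc.2)]
        set Src := Finset.filter (fun v : V => ∀ a : A, t a ≠ v) Finset.univ with hSrc
        have hval : ∀ B ∈ Finset.filter (fun B : Finset V => B.Nonempty ∧ Good s t rel B)
            Finset.univ,
            (if Nonempty {a : A // s a ∉ B ∧ t a ∉ B} ∧ rel 0 0 then (0:ℤ)
              else (-1) ^ (n0 - B.card))
            = (-1:ℤ) ^ n0 * (-1) ^ B.card := by
          intro B _
          rw [if_neg (fun hc => hr hc.2), neg_one_pow_sub n0 B.card (Finset.card_le_univ B)]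
        rw [Finset.sum_congr rfl hval, ← Finset.mul_sum]
        have hgood : ∀ B : Finset V, Good s t rel B ↔ B ⊆ Src := by
          intro B
          constructor
          · intro hG v hv
            simp only [hSrc, Finset.mem_filter, Finset.mem_univ, true_and]
            intro a hta
            exact hr (hG a (hta ▸ hv)).2
          · intro hsub a hta
            have := (Finset.mem_filter.mp (hsub hta)).2 a
            exact absurd rfl this
        have hset : Finset.filter (fun B : Finset V => B.Nonempty ∧ Good s t rel B)
            Finset.univ
            = Finset.filter (fun B : Finset V => B.Nonempty ∧ B ⊆ Src) Finset.univ := by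
          ext B
          simp only [Finset.mem_filter, Finset.mem_univ, true_and]
          exact and_congr_right fun _ => hgood B
        have hSne : Src.Nonempty := by
          by_contra hS
          apply hac
          apply hasDicycle_swap s t
          have harc : ∀ v : V, ∃ a : A, t a = v := by
            intro v
            by_contra hno
            push_neg at hno
            apply hS
            refine ⟨v, ?_⟩
            simp only [hSrc, Finset.mem_filter, Finset.mem_univ, true_and]
            exact hno
          exact hasDicycle_of_out t s (fun v => (harc v).choose)
            (fun v => (harc v).choose_spec) (Classical.arbitrary V)
        rw [hset, sum_nonempty_subsets Src hSne]
        ring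

lemma descPochhammer_eval_neg_one (k : ℕ) :
    (descPochhammer ℚ k).eval (-1) = (-1) ^ k * (k.factorial : ℚ) := by
  induction k with
  | zero => simp
  | succ k ih =>
    rw [descPochhammer_succ_eval, ih, Nat.factorial_succ]
    push_cast
    ring

lemma chi_eval_neg_one {V A : Type} [Fintype V] [Fintype A] (s t : A → V)
    (rel : ℕ → ℕ → Prop)
    (hmono : ∀ x y x' y' : ℕ,
      (x < y ↔ x' < y') → (x = y ↔ x' = y') → (rel x y ↔ rel x' y'))
    (χ : Polynomial ℚ)
    (hχ : ∀ q : ℕ, 0 < q → χ.eval (q : ℚ) = (cnt s t rel q : ℚ)) :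
    χ.eval (-1) = ∑ k ∈ Finset.range (Fintype.card V + 1),
      (-1 : ℚ) ^ k * (scnt s t rel k : ℚ) := by
  set n := Fintype.card V with hn
  set Q : Polynomial ℚ := ∑ k ∈ Finset.range (n + 1),
    Polynomial.C ((scnt s t rel k : ℚ) / k.factorial) * descPochhammer ℚ k with hQ
  have hQeval : ∀ q : ℕ, Q.eval (q : ℚ) = (cnt s t rel q : ℚ) → True := fun _ _ => trivial
  have hQev : ∀ q : ℕ, Q.eval (q : ℚ)
      = ∑ k ∈ Finset.range (n + 1), (scnt s t rel k : ℚ) * (q.choose k : ℚ) := by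
    intro q
    rw [hQ, Polynomial.eval_finset_sum]
    refine Finset.sum_congr rfl fun k _ => ?_
    rw [Polynomial.eval_mul, Polynomial.eval_C,
      descPochhammer_eval_eq_descFactorial ℚ q k,
      Nat.descFactorial_eq_factorial_mul_choose]
    have hfac : (k.factorial : ℚ) ≠ 0 := Nat.cast_ne_zero.mpr k.factorial_ne_zero
    push_cast
    field_simp
  have hagree : χ = Q := by
    apply Polynomial.eq_of_infinite_eval_eq
    apply Set.infinite_of_injective_forall_mem
      (f := fun m : ℕ => ((m + 1 : ℕ) : ℚ))
    case hi =>
      intro a b hab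
      have : a + 1 = b + 1 := Nat.cast_injective hab
      omega
    case hf =>
      intro m
      show χ.eval _ = Q.eval _
      rw [hχ (m + 1) (Nat.succ_pos m), hQev (m + 1)]
      rw [cnt_decomp s t rel hmono (m + 1)]
      push_cast
      rfl
  rw [hagree, hQ, Polynomial.eval_finset_sum]
  refine Finset.sum_congr rfl fun k _ => ?_
  rw [Polynomial.eval_mul, Polynomial.eval_C, descPochhammer_eval_neg_one]
  have hfac : (k.factorial : ℚ) ≠ 0 := Nat.cast_ne_zero.mpr k.factorial_ne_zero
  field_simp

section reach
variable {V A : Type} (s t : A → V)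

def reach : V → V → Prop :=
  Relation.ReflTransGen (fun x y => ∃ a, s a = x ∧ t a = y)

def sccSetoid : Setoid V where
  r u v := reach s t u v ∧ reach s t v u
  iseqv := ⟨fun _ => ⟨.refl, .refl⟩, fun h => ⟨h.2, h.1⟩,
    fun h h' => ⟨h.1.trans h'.1, h'.2.trans h.2⟩⟩

lemma reach_single (a : A) : reach s t (s a) (t a) :=
  Relation.ReflTransGen.single ⟨a, rfl, rfl⟩

lemma reach_chain {x y : V} (h : reach s t x y) :
    ∃ (m : ℕ) (w : ℕ → V), w 0 = x ∧ w m = y ∧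
      ∀ i, i < m → ∃ a, s a = w i ∧ t a = w (i + 1) := by
  induction h with
  | refl => exact ⟨0, fun _ => x, rfl, rfl, fun i hi => absurd hi (Nat.not_lt_zero i)⟩
  | tail hab hbc ih =>
    obtain ⟨m, w, h0, hm, hstep⟩ := ih
    obtain ⟨a, ha1, ha2⟩ := hbc
    refine ⟨m + 1, fun i => if i = m + 1 then t a else w i, ?_, ?_, ?_⟩
    · simp only [Nat.zero_ne_add_one, if_neg, reduceIte]
      exact h0
    · simpa using ha2
    · intro i hi
      by_cases him : i < m
      · obtain ⟨a', ha'⟩ := hstep i him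
        refine ⟨a', ?_, ?_⟩
        · simp only [if_neg (show i ≠ m + 1 by omega)]; exact ha'.1
        · simp only [if_neg (show i + 1 ≠ m + 1 by omega)]; exact ha'.2
      · have hieq : i = m := by omega
        subst hieq
        refine ⟨a, ?_, ?_⟩
        · simp only [if_neg (show i ≠ i + 1 by omega)]; rw [hm]; exact ha1
        · simp

lemma isCyclicArc_of_reach (a : A) (h : reach s t (t a) (s a)) : IsCyclicArc s t a := by
  obtain ⟨m, w, h0, hm, hstep⟩ := reach_chain s t h
  rcases Nat.eq_zero_or_pos m with hm0 | hmpos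
  · subst hm0
    have hsa : s a = t a := by rw [← hm, h0]
    exact ⟨1, one_pos, fun _ => a, fun i => hsa.symm, 0, rfl⟩
  · set warc : ℕ → A := fun i => if hi : i < m then (hstep i hi).choose else a with hwarc
    have hws : ∀ i, i < m → s (warc i) = w i := by
      intro i hi
      simp only [hwarc, dif_pos hi]
      exact (hstep i hi).choose_spec.1
    have hwt : ∀ i, i < m → t (warc i) = w (i + 1) := by
      intro i hi
      simp only [hwarc, dif_pos hi]
      exact (hstep i hi).choose_spec.2
    set F : ℕ → A := fun j => if j % (m + 1) = 0 then a else warc (j % (m + 1) - 1) with hF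
    have hper : ∀ j, F (j + (m + 1)) = F j := by
      intro j
      simp only [hF, Nat.add_mod_right]
    have hstepF : ∀ j, t (F j) = s (F (j + 1)) := by
      intro j
      set r := j % (m + 1) with hr
      have hrlt : r < m + 1 := Nat.mod_lt _ (Nat.succ_pos m)
      have hmod : (j + 1) % (m + 1) = (r + 1) % (m + 1) := by
        rw [Nat.add_mod, ← hr]
        congr 1
        rw [Nat.mod_eq_of_lt (by omega)]
      by_cases hrm : r = m
      · have h1 : (j + 1) % (m + 1) = 0 := by rw [hmod, hrm, Nat.mod_self]
        have hFj1 : F (j + 1) = a := by rw [hF]; simp only [h1, reduceIte]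
        have hr0 : r ≠ 0 := by omega
        have hFj : F j = warc (r - 1) := by
          rw [hF]
          simp only [← hr, if_neg hr0]
        rw [hFj, hFj1, hwt (r - 1) (by omega)]
        have he : r - 1 + 1 = m := by omega
        rw [he, hm]
      · have h1 : (j + 1) % (m + 1) = r + 1 := by rw [hmod, Nat.mod_eq_of_lt (by omega)]
        have hFj1 : F (j + 1) = warc r := by
          rw [hF]
          simp only [h1, Nat.add_sub_cancel, if_neg (Nat.succ_ne_zero r)]
        rw [hFj1, hws r (by omega)]
        by_cases hr0 : r = 0
        · have hFj : F j = a := by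
            simp only [hF]
            rw [if_pos (show j % (m + 1) = 0 by omega)]
          rw [hFj, hr0, h0]
        · have hFj : F j = warc (r - 1) := by rw [hF]; simp only [← hr, if_neg hr0]
          rw [hFj, hwt (r - 1) (by omega)]
          congr 1
          omega
    obtain ⟨c, hc, hc0⟩ := mk_walk s t (m + 1) (Nat.succ_pos m) F hper hstepF
    refine ⟨m + 1, Nat.succ_pos m, c, hc, 0, ?_⟩
    rw [hc0, hF]
    simp

lemma reach_of_isCyclicArc (a : A) (h : IsCyclicArc s t a) : reach s t (t a) (s a) := by
  obtain ⟨n, hn, c, hc, i0, rfl⟩ := h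
  have hstep : ∀ i, reach s t (s (c i)) (s (c (i + 1))) := by
    intro i
    have h1 := reach_single s t (c i)
    rwa [hc i] at h1
  have hall := cyc_trans hn (reach s t) (fun _ _ _ hab hbc => hab.trans hbc)
    (fun i => s (c i)) hstep
  have h1 : reach s t (s (c (i0 + 1))) (s (c i0)) := hall (i0 + 1) i0
  rwa [← hc i0] at h1

lemma isCyclicArc_iff (a : A) : IsCyclicArc s t a ↔ reach s t (t a) (s a) :=
  ⟨reach_of_isCyclicArc s t a, isCyclicArc_of_reach s t a⟩

lemma reach_mono {q : ℕ} (f : V → Fin q) (hf : ∀ a, f (s a) ≤ f (t a)) {u v : V}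
    (h : reach s t u v) : f u ≤ f v := by
  induction h with
  | refl => exact le_refl _
  | tail hab hbc ih =>
    obtain ⟨a, rfl, rfl⟩ := hbc
    exact ih.trans (hf a)

lemma weak_eq_of_cyclic {q : ℕ} (f : V → Fin q) (hf : ∀ a, f (s a) ≤ f (t a)) (a : A)
    (ha : IsCyclicArc s t a) : f (s a) = f (t a) :=
  le_antisymm (hf a) (reach_mono s t f hf (reach_of_isCyclicArc s t a ha))

/-- totally cyclic count -/
lemma count_totcyc (htc : ∀ a : A, IsCyclicArc s t a) (q : ℕ) :
    Nat.card {f : V → Fin q // ∀ a : A, f (s a) ≤ f (t a)}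
      = Nat.card (Quotient (connSetoid s t) → Fin q) := by
  apply Nat.card_congr
  have hconst : ∀ (f : {f : V → Fin q // ∀ a : A, f (s a) ≤ f (t a)}) (u v : V),
      (connSetoid s t).r u v → f.1 u = f.1 v := by
    intro f u v h
    induction h with
    | refl => rfl
    | tail hab hbc ih =>
      obtain ⟨a, hcase⟩ := hbc
      rcases hcase with ⟨rfl, rfl⟩ | ⟨rfl, rfl⟩
      · exact ih.trans (weak_eq_of_cyclic s t f.1 f.2 a (htc a))
      · exact ih.trans (weak_eq_of_cyclic s t f.1 f.2 a (htc a)).symm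
  refine
    { toFun := fun f => Quotient.lift f.1 (hconst f)
      invFun := fun F => ⟨fun v => F (Quotient.mk (connSetoid s t) v), fun a =>
        le_of_eq (congrArg F (Quotient.sound
          (Relation.ReflTransGen.single ⟨a, Or.inl ⟨rfl, rfl⟩⟩)))⟩
      left_inv := fun f => Subtype.ext (funext fun v => rfl)
      right_inv := fun F => funext fun x => Quotient.inductionOn x fun v => rfl }

/-- condensation arcs -/
def QA : Type := {a : A // ¬ (sccSetoid s t).r (s a) (t a)}

def qs : QA s t → Quotient (sccSetoid s t) := fun a => Quotient.mk _ (s a.1)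
def qt : QA s t → Quotient (sccSetoid s t) := fun a => Quotient.mk _ (t a.1)

lemma cond_acyclic : ¬ HasDicycle (qs s t) (qt s t) := by
  rintro ⟨n, hn, c, hc⟩
  have hstep : ∀ i, reach s t (s (c i).1) (s (c (i + 1)).1) := by
    intro i
    have h1 : (sccSetoid s t).r (t (c i).1) (s (c (i + 1)).1) := Quotient.exact (hc i)
    exact (reach_single s t (c i).1).trans h1.1
  have hall := cyc_trans hn (reach s t) (fun _ _ _ hab hbc => hab.trans hbc)
    (fun i => s (c i).1) hstep
  apply (c 0).2
  constructor
  · exact reach_single s t (c 0).1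
  · have h1 : (sccSetoid s t).r (t (c 0).1) (s (c (0 + 1)).1) := Quotient.exact (hc 0)
    exact h1.1.trans (hall (0 + 1) 0)

lemma cond_count (q : ℕ) :
    Nat.card {f : V → Fin q // ∀ a : A, f (s a) ≤ f (t a)}
      = Nat.card {F : Quotient (sccSetoid s t) → Fin q //
          ∀ ab : QA s t, F (qs s t ab) ≤ F (qt s t ab)} := by
  apply Nat.card_congr
  have hconst : ∀ (f : {f : V → Fin q // ∀ a : A, f (s a) ≤ f (t a)}) (u v : V),
      (sccSetoid s t).r u v → f.1 u = f.1 v := fun f u v h =>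
    le_antisymm (reach_mono s t f.1 f.2 h.1) (reach_mono s t f.1 f.2 h.2)
  refine
    { toFun := fun f => ⟨Quotient.lift f.1 (hconst f), fun ab => f.2 ab.1⟩
      invFun := fun F => ⟨fun v => F.1 (Quotient.mk _ v), fun a => ?_⟩
      left_inv := fun f => Subtype.ext (funext fun v => rfl)
      right_inv := fun F => Subtype.ext (funext fun x => Quotient.inductionOn x fun v => rfl) }
  by_cases h : (sccSetoid s t).r (s a) (t a)
  · exact le_of_eq (congrArg F.1 (Quotient.sound h))
  · exact F.2 ⟨a, h⟩

end reach



lemma poly_eq_of_nat (χ Q : Polynomial ℚ)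
    (h : ∀ q : ℕ, 0 < q → χ.eval (q : ℚ) = Q.eval (q : ℚ)) : χ = Q := by
  apply Polynomial.eq_of_infinite_eval_eq
  apply Set.infinite_of_injective_forall_mem (f := fun m : ℕ => ((m + 1 : ℕ) : ℚ))
  case hi =>
    intro a b hab
    have : a + 1 = b + 1 := Nat.cast_injective hab
    omega
  case hf =>
    intro m
    exact h (m + 1) (Nat.succ_pos m)

/-- for a digraph `D = (V,A)` with strict-chromatic polynomial `χ^<`
and weak-chromatic polynomial `χ^≥`: `χ^<(−1) = (−1)^{|V|}` if `D` is acyclic and `0`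
otherwise, and `χ^≥(−1) = (−1)^{comp(D)}` if `D` is totally cyclic and `0` otherwise. -/
theorem chromatic_at_minus_one (V A : Type) [Fintype V] [Fintype A]
    (s t : A → V)
    (χlt χge : Polynomial ℚ)
    (hχlt : ∀ q : ℕ, 0 < q → χlt.eval (q : ℚ) =
      (Nat.card {f : V → Fin q // ∀ a : A, f (s a) < f (t a)} : ℚ))
    (hχge : ∀ q : ℕ, 0 < q → χge.eval (q : ℚ) =
      (Nat.card {f : V → Fin q // ∀ a : A, f (s a) ≤ f (t a)} : ℚ)) :
    (¬ HasDicycle s t → χlt.eval (-1) = (-1 : ℚ) ^ (Fintype.card V)) ∧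
    (HasDicycle s t → χlt.eval (-1) = 0) ∧
    ((∀ a : A, IsCyclicArc s t a) →
      χge.eval (-1) = (-1 : ℚ) ^ (Nat.card (Quotient (connSetoid s t)))) ∧
    (¬ (∀ a : A, IsCyclicArc s t a) → χge.eval (-1) = 0) := by
  classical
  refine ⟨?_, ?_, ?_, ?_⟩
  · -- acyclic strict
    intro hac
    have hχ : ∀ q : ℕ, 0 < q → χlt.eval (q : ℚ) = (cnt s t (fun x y => x < y) q : ℚ) := by
      intro q hq
      have hcc : Nat.card {f : V → Fin q // ∀ a : A, f (s a) < f (t a)}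
          = cnt s t (fun x y => x < y) q := by
        rw [cnt]
        exact Nat.card_congr (Equiv.subtypeEquivRight fun f =>
          forall_congr' fun a => Fin.lt_def)
      rw [hχlt q hq, hcc]
    have h1 := chi_eval_neg_one s t (fun x y => x < y)
      (fun x y x' y' h1 _ => h1) χlt hχ
    have h2 := Tval (fun x y : ℕ => x < y) (fun y => Nat.succ_pos y)
      (fun x => by omega) (fun x y => by omega)
      (Fintype.card V) V A s t le_rfl hac
    rw [if_neg (by rintro ⟨-, h⟩; exact absurd h (lt_irrefl 0))] at h2
    rw [h1]
    have h3 := congrArg (fun z : ℤ => (z : ℚ)) h2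
    push_cast at h3
    exact h3
  · -- cyclic strict : zero
    intro hdic
    have hzero : ∀ q : ℕ, 0 < q → χlt.eval (q : ℚ) = Polynomial.eval (q : ℚ) 0 := by
      intro q hq
      rw [hχlt q hq, Polynomial.eval_zero]
      norm_cast
      rw [Nat.card_eq_zero]
      left
      constructor
      rintro ⟨f, hf⟩
      obtain ⟨n, hn, c, hc⟩ := hdic
      have hstep : ∀ i, (f (s (c i))).val < (f (s (c (i + 1)))).val := by
        intro i
        have h4 := hf (c i)
        rw [hc i] at h4
        exact h4
      have h5 := cyc_trans hn (fun x y : ℕ => x < y) (fun _ _ _ h h' => h.trans h')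
        (fun i => (f (s (c i))).val) hstep 0 0
      exact lt_irrefl _ h5
    rw [poly_eq_of_nat χlt 0 hzero, Polynomial.eval_zero]
  · -- totally cyclic weak
    intro htc
    have hQ : ∀ q : ℕ, 0 < q → χge.eval (q : ℚ)
        = Polynomial.eval (q : ℚ) (Polynomial.X ^ (Nat.card (Quotient (connSetoid s t)))) := by
      intro q hq
      haveI : Finite (Quotient (connSetoid s t)) := Quotient.finite _
      rw [hχge q hq, count_totcyc s t htc q, Nat.card_fun]
      rw [Nat.card_eq_fintype_card, Fintype.card_fin]
      rw [Polynomial.eval_pow, Polynomial.eval_X]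
      push_cast
      ring
    rw [poly_eq_of_nat χge _ hQ, Polynomial.eval_pow, Polynomial.eval_X]
  · -- not totally cyclic weak : zero
    intro hntc
    obtain ⟨a0, ha0⟩ := not_forall.mp hntc
    haveI : Finite (Quotient (sccSetoid s t)) := Quotient.finite _
    haveI : Fintype (Quotient (sccSetoid s t)) := Fintype.ofFinite _
    haveI : Finite (QA s t) :=
      inferInstanceAs (Finite {a : A // ¬ (sccSetoid s t).r (s a) (t a)})
    haveI : Fintype (QA s t) := Fintype.ofFinite _
    have hχ : ∀ q : ℕ, 0 < q → χge.eval (q : ℚ)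
        = (cnt (qs s t) (qt s t) (fun x y => x ≤ y) q : ℚ) := by
      intro q hq
      have hcc : Nat.card {f : V → Fin q // ∀ a : A, f (s a) ≤ f (t a)}
          = cnt (qs s t) (qt s t) (fun x y => x ≤ y) q := by
        rw [cond_count s t q, cnt]
        exact Nat.card_congr (Equiv.subtypeEquivRight fun F =>
          forall_congr' fun ab => Fin.le_def)
      rw [hχge q hq, hcc]
    have h1 := chi_eval_neg_one (qs s t) (qt s t) (fun x y => x ≤ y)
      (fun x y x' y' h1 h2 => by
        show x ≤ y ↔ x' ≤ y'
        rw [le_iff_lt_or_eq, le_iff_lt_or_eq, h1, h2]) χge hχ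
    have h2 := Tval (fun x y : ℕ => x ≤ y) (fun y => by omega)
      (fun x => by omega) (fun x y => by omega)
      (Fintype.card (Quotient (sccSetoid s t))) _ _ (qs s t) (qt s t) le_rfl
      (cond_acyclic s t)
    rw [if_pos ⟨⟨⟨a0, fun hr => ha0 (isCyclicArc_of_reach s t a0 hr.2)⟩⟩, le_refl 0⟩] at h2
    rw [h1]
    have h3 := congrArg (fun z : ℤ => (z : ℚ)) h2
    push_cast at h3
    exact h3
end

section
/- Let n be a positive integer and let D = ([n], A) be a digraph on vertex set {1,…,n} that is compatibly labeled, i.e., s(a) < t(a) for every arc a ∈ A (in particular D is acyclic). Then, as polynomials in q and y: B_D(q, y, 1) = (1/n!) · Σ_{σ ∈ S_n} ( ∏_{i=1}^{n} (q − asc(σ^{−1}) + i − 1) ) · y^{A^<(σ)}, where the sum is over all permutations σ of {1,…,n}, asc(σ^{−1}) = |{ i ∈ {1,…,n−1} : σ^{−1}(i) < σ^{−1}(i+1) }|, and A^<(σ) = |{ a ∈ A : σ(s(a)) < σ(t(a)) }|. -/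
open Finset

/-- The number of ascents of a permutation `σ` of `{0,…,n−1}` (standing for
`{1,…,n}`): the number of `i` with `i + 1 ≤ n − 1` and `σ i < σ (i+1)`. -/
def permAscents {n : ℕ} (σ : Equiv.Perm (Fin n)) : ℕ :=
  (Finset.univ.filter (fun i : Fin n =>
    (i : ℕ) + 1 < n ∧ σ i < σ ⟨((i : ℕ) + 1) % n, Nat.mod_lt _ i.pos⟩)).card


section Counting
variable {m q : ℕ}

/-- number of elements of `T` below `k` -/
def cntN (T : Finset (Fin m)) (k : ℕ) : ℕ := (T.filter (fun j : Fin m => (j : ℕ) < k)).card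

/-- monotone words with strict increases at positions in `T` -/
def IsTWord (T : Finset (Fin m)) (c : Fin (m + 1) → Fin q) : Prop :=
  Monotone c ∧ ∀ i ∈ T, c (Fin.castSucc i) < c i.succ

lemma cntN_le (T : Finset (Fin m)) (k : ℕ) : cntN T k ≤ k := by
  have : (T.filter (fun j : Fin m => (j : ℕ) < k)).card ≤ (Finset.range k).card := by
    apply Finset.card_le_card_of_injOn (fun j : Fin m => (j : ℕ))
    · intro j hj; simp only [mem_coe, mem_filter] at hj; simpa using hj.2
    · intro x _ y _ h; exact Fin.val_injective h
  simpa [cntN] using this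

lemma cntN_le_card (T : Finset (Fin m)) (k : ℕ) : cntN T k ≤ T.card :=
  Finset.card_filter_le _ _

lemma cntN_ge (T : Finset (Fin m)) (k : ℕ) (hk : k ≤ m) :
    k + T.card ≤ m + cntN T k := by
  have hsplit : cntN T k + (T.filter (fun j : Fin m => ¬ (j : ℕ) < k)).card = T.card :=
    Finset.card_filter_add_card_filter_not _
  have hb : (T.filter (fun j : Fin m => ¬ (j : ℕ) < k)).card ≤ (Finset.Ico k m).card := by
    apply Finset.card_le_card_of_injOn (fun j : Fin m => (j : ℕ))
    · intro j hj; simp only [mem_coe, mem_filter, not_lt] at hj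
      simp [Finset.mem_Ico, hj.2, j.is_lt]
    · intro x _ y _ h; exact Fin.val_injective h
  rw [Nat.card_Ico] at hb
  omega

lemma cntN_succ (T : Finset (Fin m)) (i : Fin m) :
    cntN T ((i : ℕ) + 1) = cntN T (i : ℕ) + (if i ∈ T then 1 else 0) := by
  classical
  unfold cntN
  have h1 : T.filter (fun j : Fin m => (j : ℕ) < (i : ℕ) + 1)
      = T.filter (fun j : Fin m => ((j : ℕ) < (i : ℕ) ∨ j = i)) := by
    apply Finset.filter_congr; intro j _
    simp [Nat.lt_succ_iff_lt_or_eq, Fin.ext_iff]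
    exact le_iff_lt_or_eq.trans (or_congr_right Fin.ext_iff)
  rw [h1, Finset.filter_or]
  rw [Finset.card_union_of_disjoint]
  · congr 1
    rw [Finset.filter_eq']
    split <;> simp
  · simp only [Finset.disjoint_left, mem_filter]
    rintro j ⟨_, hj⟩ ⟨_, rfl⟩
    omega

lemma strictMono_add_le {M : ℕ} {e : Fin (m + 1) → Fin M} (he : StrictMono e) :
    ∀ (d : ℕ) (i : Fin (m + 1)) (h : (i : ℕ) + d < m + 1),
      (e i : ℕ) + d ≤ e ⟨(i : ℕ) + d, h⟩ := by
  intro d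
  induction d with
  | zero =>
    intro i h
    have : (⟨(i : ℕ) + 0, h⟩ : Fin (m + 1)) = i := by ext; simp
    rw [this]; omega
  | succ d ih =>
    intro i h
    have h1 : (i : ℕ) + d < m + 1 := by omega
    have h2 := ih i h1
    have h3 : (⟨(i : ℕ) + d, h1⟩ : Fin (m + 1)) < ⟨(i : ℕ) + (d + 1), h⟩ := by
      simp [Fin.lt_def]
    have h4 := he h3
    rw [Fin.lt_def] at h4
    omega

lemma strictMono_le_apply' {M : ℕ} {e : Fin (m + 1) → Fin M} (he : StrictMono e)
    (i : Fin (m + 1)) : (i : ℕ) ≤ e i := by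
  have h0 : ((0 : ℕ) + (i : ℕ)) < m + 1 := by omega
  have := strictMono_add_le he (i : ℕ) ⟨0, by omega⟩ h0
  have heq : (⟨(0 : ℕ) + (i : ℕ), h0⟩ : Fin (m + 1)) = i := by ext; simp
  rw [heq] at this
  omega

lemma strictMono_top_bound {M : ℕ} {e : Fin (m + 1) → Fin M} (he : StrictMono e)
    (i : Fin (m + 1)) : (e i : ℕ) + (m - (i : ℕ)) < M := by
  have h : (i : ℕ) + (m - (i : ℕ)) < m + 1 := by omega
  have := strictMono_add_le he (m - (i : ℕ)) i h
  have := (e ⟨(i : ℕ) + (m - (i : ℕ)), h⟩).is_lt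
  omega

/-- words with strict increases at `T` are equinumerous with strictly monotone maps -/
noncomputable def twordEquiv (T : Finset (Fin m)) (hq : 0 < q) :
    {c : Fin (m + 1) → Fin q // IsTWord T c} ≃
      {e : Fin (m + 1) → Fin (q + m - T.card) // StrictMono e} where
  toFun := fun ⟨c, hc⟩ => ⟨fun i => ⟨(c i : ℕ) + ((i : ℕ) - cntN T i), by
      have h1 := cntN_le T (i : ℕ)
      have h2 := cntN_ge T (i : ℕ) (by omega)
      have h3 := (c i).is_lt
      have h4 : T.card ≤ m := le_trans (Finset.card_le_univ T) (by simp)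
      omega⟩, by
    rw [Fin.strictMono_iff_lt_succ]
    intro i
    rw [Fin.lt_def]
    simp only [Fin.coe_castSucc, Fin.val_succ]
    rw [cntN_succ T i]
    have h1 := cntN_le T (i : ℕ)
    by_cases hi : i ∈ T
    · have := hc.2 i hi
      rw [Fin.lt_def] at this
      simp [hi]; omega
    · have := hc.1 (Fin.castSucc_le_succ i)
      rw [Fin.le_def] at this
      simp [hi]; omega⟩
  invFun := fun ⟨e, he⟩ => ⟨fun i => ⟨(e i : ℕ) - ((i : ℕ) - cntN T i), by
      have h1 := cntN_le T (i : ℕ)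
      have h2 := cntN_ge T (i : ℕ) (by omega)
      have h3 := cntN_le_card T (i : ℕ)
      have h4 : T.card ≤ m := le_trans (Finset.card_le_univ T) (by simp)
      have h5 := strictMono_top_bound he i
      have h6 := i.is_lt
      omega⟩, by
    constructor
    · rw [Fin.monotone_iff_le_succ]
      intro i
      rw [Fin.le_def]
      simp only [Fin.coe_castSucc, Fin.val_succ]
      rw [cntN_succ T i]
      have h1 := cntN_le T (i : ℕ)
      have h2 := strictMono_le_apply' he i.castSucc
      have h3 := he (Fin.castSucc_lt_succ (i := i))
      rw [Fin.lt_def] at h3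
      simp only [Fin.coe_castSucc] at h2
      by_cases hi : i ∈ T <;> simp [hi] <;> omega
    · intro i hi
      rw [Fin.lt_def]
      simp only [Fin.coe_castSucc, Fin.val_succ]
      rw [cntN_succ T i]
      have h1 := cntN_le T (i : ℕ)
      have h2 := strictMono_le_apply' he i.castSucc
      have h3 := he (Fin.castSucc_lt_succ (i := i))
      rw [Fin.lt_def] at h3
      simp only [Fin.coe_castSucc] at h2
      simp [hi]; omega⟩
  left_inv := by
    rintro ⟨c, hc⟩
    apply Subtype.ext
    funext i
    apply Fin.ext
    simp only
    have h1 := cntN_le T (i : ℕ)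
    omega
  right_inv := by
    rintro ⟨e, he⟩
    apply Subtype.ext
    funext i
    apply Fin.ext
    simp only
    have h1 := cntN_le T (i : ℕ)
    have h2 := strictMono_le_apply' he i
    omega

/-- strictly monotone maps correspond to subsets of size `m+1` -/
noncomputable def strictMonoEquiv (M : ℕ) :
    {e : Fin (m + 1) → Fin M // StrictMono e} ≃
      {S : Finset (Fin M) // S.card = m + 1} where
  toFun := fun ⟨e, he⟩ => ⟨Finset.univ.image e, by
    rw [Finset.card_image_of_injective _ he.injective, Finset.card_univ, Fintype.card_fin]⟩
  invFun := fun ⟨S, hS⟩ => ⟨S.orderEmbOfFin hS, (S.orderEmbOfFin hS).strictMono⟩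
  left_inv := by
    rintro ⟨e, he⟩
    apply Subtype.ext
    simp only
    exact (Finset.orderEmbOfFin_unique _ (fun x => Finset.mem_image_of_mem _ (Finset.mem_univ x)) he).symm
  right_inv := by
    rintro ⟨S, hS⟩
    apply Subtype.ext
    simp only
    rw [← Finset.coe_inj, Finset.coe_image, Finset.coe_univ, Set.image_univ]
    exact Finset.range_orderEmbOfFin S hS

lemma card_tword (T : Finset (Fin m)) (hq : 0 < q) :
    Nat.card {c : Fin (m + 1) → Fin q // IsTWord T c} = (q + m - T.card).choose (m + 1) := by
  rw [Nat.card_congr ((twordEquiv T hq).trans (strictMonoEquiv _))]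
  rw [Nat.card_eq_fintype_card, Fintype.card_finset_len, Fintype.card_fin]

end Counting

variable {n q : ℕ}

def key (f : Fin n → Fin q) (v : Fin n) : Lex (Fin q × Fin n) := toLex (f v, v.rev)

lemma key_injective (f : Fin n → Fin q) : Function.Injective (key f) := by
  intro u v h
  have := congrArg (fun x => (ofLex x).2) h
  simpa [key, Fin.rev_inj] using this

lemma key_lt_iff (f : Fin n → Fin q) {u v : Fin n} :
    key f u < key f v ↔ f u < f v ∨ (f u = f v ∧ v < u) := by
  simp [key, Prod.Lex.lt_iff, Fin.rev_lt_rev]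

lemma key_card (f : Fin n → Fin q) : (univ.image (key f)).card = n := by
  rw [card_image_of_injective _ (key_injective f), card_univ, Fintype.card_fin]

noncomputable def std (f : Fin n → Fin q) : Equiv.Perm (Fin n) :=
  Equiv.ofBijective
    (fun v => ((univ.image (key f)).orderIsoOfFin (key_card f)).symm
      ⟨key f v, mem_image_of_mem _ (mem_univ v)⟩)
    (Finite.injective_iff_bijective.mp (by
      intro u v h
      have h2 := congrArg ((univ.image (key f)).orderIsoOfFin (key_card f)) h
      simp only [OrderIso.apply_symm_apply] at h2
      exact key_injective f (congrArg Subtype.val h2)))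

lemma std_lt_iff (f : Fin n → Fin q) {u v : Fin n} :
    std f u < std f v ↔ key f u < key f v := by
  rw [std]
  constructor
  · intro h
    have := (((univ.image (key f)).orderIsoOfFin (key_card f)).symm.lt_iff_lt).mp h
    exact this
  · intro h
    exact (((univ.image (key f)).orderIsoOfFin (key_card f)).symm.lt_iff_lt).mpr h

lemma std_strictMono (f : Fin n → Fin q) : StrictMono fun i => key f ((std f)⁻¹ i) := by
  intro i j hij
  rw [← std_lt_iff f]
  simpa using hij

lemma std_unique (f : Fin n → Fin q) (τ : Equiv.Perm (Fin n))
    (h : StrictMono fun i => key f (τ⁻¹ i)) : std f = τ := by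
  have hg : StrictMono fun i => std f (τ⁻¹ i) := fun i j hij => (std_lt_iff f).mpr (h hij)
  have hid : (fun i => std f (τ⁻¹ i)) = id := by
    have inst : WellFoundedLT (Fin n) := inferInstance
    apply (@StrictMono.range_inj (Fin n) (Fin n) _ _ inst _ _ hg strictMono_id).mp
    rw [Set.range_id]
    apply Set.range_eq_univ.mpr
    exact (std f).surjective.comp τ⁻¹.surjective
  apply Equiv.ext
  intro v
  have := congrFun hid (τ v)
  simpa using this

lemma std_arc_iff (f : Fin n → Fin q) {u v : Fin n} (huv : u < v) :
    f u < f v ↔ std f u < std f v := by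
  rw [std_lt_iff, key_lt_iff]
  constructor
  · exact Or.inl
  · rintro (h | ⟨h1, h2⟩)
    · exact h
    · exact absurd huv (not_lt.mpr h2.le)

section Fiber
variable {m q : ℕ}

/-- the ascent set of `σ⁻¹`, as positions in `Fin m` -/
def ascT (σ : Equiv.Perm (Fin (m + 1))) : Finset (Fin m) :=
  univ.filter fun i : Fin m => σ⁻¹ i.castSucc < σ⁻¹ i.succ

noncomputable def fiberEquiv (σ : Equiv.Perm (Fin (m + 1))) :
    {f : Fin (m + 1) → Fin q // std f = σ} ≃
      {c : Fin (m + 1) → Fin q // IsTWord (ascT σ) c} where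
  toFun := fun ⟨f, hf⟩ => ⟨fun i => f (σ⁻¹ i), by
    have hs := std_strictMono f
    rw [hf] at hs
    constructor
    · intro i j hij
      rcases eq_or_lt_of_le hij with rfl | hlt
      · exact le_refl _
      · have := hs hlt
        rw [key_lt_iff] at this
        rcases this with h | ⟨h, _⟩
        · exact le_of_lt h
        · exact le_of_eq h
    · intro i hi
      simp only [ascT, mem_filter, mem_univ, true_and] at hi
      have := hs (Fin.castSucc_lt_succ (i := i))
      rw [key_lt_iff] at this
      rcases this with h | ⟨_, h2⟩
      · exact h
      · exact absurd hi (lt_asymm h2)⟩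
  invFun := fun ⟨c, hc⟩ => ⟨fun v => c (σ v), by
    apply std_unique
    cases m with
    | zero =>
      intro i j hij
      have h1 := i.isLt
      have h2 := j.isLt
      have : i = j := Fin.ext (by omega)
      exact absurd (this ▸ hij) (lt_irrefl _)
    | succ mm =>
      rw [Fin.strictMono_iff_lt_succ]
      intro i
      show key _ (σ⁻¹ i.castSucc) < key _ (σ⁻¹ i.succ)
      unfold key
      rw [Prod.Lex.lt_iff]
      simp only [ofLex_toLex, ← Equiv.Perm.mul_apply, mul_inv_cancel, Equiv.Perm.one_apply]
      by_cases hi : i ∈ ascT σ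
      · exact Or.inl (hc.2 i hi)
      · simp only [ascT, mem_filter, mem_univ, true_and] at hi
        have hne : σ⁻¹ i.succ ≠ σ⁻¹ i.castSucc := by
          intro h
          exact absurd (σ⁻¹.injective h) (Fin.ne_of_lt (Fin.castSucc_lt_succ (i := i))).symm
        have hlt : σ⁻¹ i.succ < σ⁻¹ i.castSucc := lt_of_le_of_ne (not_lt.mp hi) hne
        rcases lt_or_eq_of_le (hc.1 (Fin.castSucc_le_succ i)) with h | h
        · exact Or.inl h
        · exact Or.inr ⟨h, by rwa [Fin.rev_lt_rev]⟩⟩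
  left_inv := fun ⟨f, hf⟩ => Subtype.ext (funext fun v => by simp)
  right_inv := fun ⟨c, hc⟩ => Subtype.ext (funext fun i => by simp)

lemma permAscents_eq (τ : Equiv.Perm (Fin (m + 1))) :
    permAscents τ = (univ.filter fun i : Fin m => τ i.castSucc < τ i.succ).card := by
  unfold permAscents
  rw [show (univ.filter (fun i : Fin (m + 1) =>
        (i : ℕ) + 1 < m + 1 ∧ τ i < τ ⟨((i : ℕ) + 1) % (m + 1), Nat.mod_lt _ i.pos⟩))
      = (univ.filter fun i : Fin m => τ i.castSucc < τ i.succ).image Fin.castSucc from ?_]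
  · rw [Finset.card_image_of_injective _ (Fin.castSucc_injective m)]
  · ext i
    simp only [mem_filter, mem_univ, true_and, Finset.mem_image]
    constructor
    · rintro ⟨h1, h2⟩
      refine ⟨⟨(i : ℕ), by omega⟩, ?_, by ext; simp⟩
      have e1 : Fin.castSucc (⟨(i : ℕ), by omega⟩ : Fin m) = i := by ext; simp
      have e2 : Fin.succ (⟨(i : ℕ), by omega⟩ : Fin m)
          = ⟨((i : ℕ) + 1) % (m + 1), Nat.mod_lt _ i.pos⟩ := by
        ext; simp [Nat.mod_eq_of_lt h1]
      rw [e1, e2]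
      exact h2
    · rintro ⟨j, hj, rfl⟩
      have h1 : ((j.castSucc : ℕ)) + 1 < m + 1 := by simp
      refine ⟨h1, ?_⟩
      have e2 : (⟨((j.castSucc : ℕ) + 1) % (m + 1), Nat.mod_lt _ j.castSucc.pos⟩ : Fin (m + 1))
          = j.succ := by
        ext; simp [Nat.mod_eq_of_lt h1]
      rw [e2]
      exact hj

lemma permAscents_le (τ : Equiv.Perm (Fin (m + 1))) : permAscents τ ≤ m := by
  rw [permAscents_eq]
  calc (univ.filter fun i : Fin m => τ i.castSucc < τ i.succ).card
      ≤ (univ : Finset (Fin m)).card := Finset.card_filter_le _ _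
    _ = m := by simp

lemma card_fiber (σ : Equiv.Perm (Fin (m + 1))) (hq : 0 < q) :
    Nat.card {f : Fin (m + 1) → Fin q // std f = σ}
      = (q + m - permAscents σ⁻¹).choose (m + 1) := by
  rw [Nat.card_congr (fiberEquiv σ), card_tword _ hq, permAscents_eq σ⁻¹]
  rfl

end Fiber

lemma colorSum_eq {m q : ℕ} (A : Type) [Fintype A] (s t : A → Fin (m + 1))
    (hcomp : ∀ a, s a < t a) (hq : 0 < q) (y : ℚ) :
    colorSum (Fin (m + 1)) A s t q y 1 =
      ∑ σ : Equiv.Perm (Fin (m + 1)),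
        ((q + m - permAscents σ⁻¹).choose (m + 1) : ℚ) *
          y ^ (univ.filter (fun a : A => σ (s a) < σ (t a))).card := by
  classical
  unfold colorSum
  simp only [one_pow, mul_one]
  have hfib := Finset.sum_fiberwise_eq_sum_filter univ univ (fun f : Fin (m + 1) → Fin q => std f)
    (fun f => y ^ (univ.filter (fun a : A => f (s a) < f (t a))).card)
  simp only [Finset.mem_univ, Finset.filter_true] at hfib
  rw [← hfib]
  apply Finset.sum_congr rfl
  intro σ _
  have hconst : ∀ f ∈ univ.filter (fun f : Fin (m + 1) → Fin q => std f = σ),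
      y ^ (univ.filter (fun a : A => f (s a) < f (t a))).card
        = y ^ (univ.filter (fun a : A => σ (s a) < σ (t a))).card := by
    intro f hf
    rw [mem_filter] at hf
    congr 2
    apply Finset.filter_congr
    intro a _
    rw [std_arc_iff f (hcomp a), hf.2]
  rw [Finset.sum_congr rfl hconst, Finset.sum_const, nsmul_eq_mul]
  congr 1
  rw [← card_fiber σ hq, Nat.card_eq_fintype_card, Fintype.card_subtype]

lemma ascPochhammer_eval_prod (k : ℕ) (x : ℚ) :
    (ascPochhammer ℚ k).eval x = ∏ i ∈ Finset.range k, (x + i) := by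
  induction k with
  | zero => simp [ascPochhammer_zero]
  | succ k ih =>
    rw [ascPochhammer_succ_right, Polynomial.eval_mul, ih, Finset.prod_range_succ]
    simp

lemma factorial_mul_choose_eq {q mm a : ℕ} (hq : 0 < q) (ha : a ≤ mm) :
    ((mm + 1).factorial : ℚ) * ((q + mm - a).choose (mm + 1) : ℚ)
      = ∏ i ∈ Finset.Icc 1 (mm + 1), ((q : ℚ) - a + i - 1) := by
  have h1 : (q + mm - a).descFactorial (mm + 1)
      = (mm + 1).factorial * (q + mm - a).choose (mm + 1) :=
    Nat.descFactorial_eq_factorial_mul_choose _ _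
  have h2 := Nat.cast_descFactorial (S := ℚ) (q + mm - a) (mm + 1)
  have hcast : ((q + mm - a : ℕ) : ℚ) = (q : ℚ) + mm - a := by
    have : a ≤ q + mm := by omega
    push_cast [Nat.cast_sub this]
    ring
  by_cases haq : a ≤ q
  · have h3 : ((mm + 1).factorial : ℚ) * ((q + mm - a).choose (mm + 1) : ℚ)
        = ((q + mm - a).descFactorial (mm + 1) : ℚ) := by rw [h1]; push_cast; ring
    have h4 : ((q + mm - a).descFactorial (mm + 1) : ℚ)
        = (ascPochhammer ℚ (mm + 1)).eval ((q : ℚ) - a) := by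
      rw [h2]
      congr 1
      have hn : q + mm - a - (mm + 1 - 1) = q - a := by omega
      rw [hn, Nat.cast_sub haq]
    rw [h3, h4, ascPochhammer_eval_prod]
    rw [← Finset.Ico_add_one_right_eq_Icc, Finset.prod_Ico_eq_prod_range]
    apply Finset.prod_congr (by norm_num)
    intro i _
    push_cast
    ring
  · have hc : (q + mm - a).choose (mm + 1) = 0 := Nat.choose_eq_zero_of_lt (by omega)
    rw [hc]
    have hmem : a - q + 1 ∈ Finset.Icc 1 (mm + 1) := Finset.mem_Icc.mpr ⟨by omega, by omega⟩
    rw [Finset.prod_eq_zero hmem ?_]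
    · simp
    · have hcq : ((a - q + 1 : ℕ) : ℚ) = (a : ℚ) - q + 1 := by
        rw [Nat.cast_add, Nat.cast_sub (le_of_lt (not_le.mp haq))]
        norm_num
      rw [hcq]
      ring

lemma eval_aeval (B : MvPolynomial (Fin 3) ℚ) (g : Fin 3 → Polynomial ℚ) (x : ℚ) :
    ((MvPolynomial.aeval g B).eval x) = MvPolynomial.eval (fun i => (g i).eval x) B := by
  induction B using MvPolynomial.induction_on with
  | C a => simp
  | add p r hp hr => simp [hp, hr]
  | mul_X p i hp => simp [hp]

/-- for a compatibly labeled digraph `D` on vertex set `{1,…,n}`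
(modeled as `Fin n`, with `s a < t a` for every arc `a`), as polynomials in `q` and
`y` (stated for all rationals `q, y`):
`B_D(q, y, 1) = (1/n!) Σ_{σ ∈ S_n} (∏_{i=1}^{n} (q − asc(σ⁻¹) + i − 1)) · y^{A^<(σ)}`,
where `asc(σ⁻¹)` is the number of ascents of `σ⁻¹` and
`A^<(σ) = #{a ∈ A : σ(s a) < σ(t a)}`. -/
theorem B_compatibly_labeled_fundamental_expansion
    (n : ℕ) (hn : 0 < n) (A : Type) [Fintype A]
    (s t : A → Fin n) (hcomp : ∀ a : A, s a < t a)
    (B : MvPolynomial (Fin 3) ℚ)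
    (hB : ∀ q : ℕ, 0 < q → ∀ y z : ℚ,
      MvPolynomial.eval ![(q : ℚ), y, z] B = colorSum (Fin n) A s t q y z) :
    ∀ q y : ℚ,
      MvPolynomial.eval ![q, y, 1] B =
        (1 / (n.factorial : ℚ)) *
        ∑ σ : Equiv.Perm (Fin n),
          (∏ i ∈ Finset.Icc 1 n, (q - (permAscents σ⁻¹ : ℚ) + (i : ℚ) - 1)) *
          y ^ (Finset.univ.filter (fun a : A => σ (s a) < σ (t a))).card := by

  obtain ⟨m, rfl⟩ : ∃ m, n = m + 1 := ⟨n - 1, by omega⟩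
  intro q y
  set F : Polynomial ℚ := MvPolynomial.aeval ![Polynomial.X, Polynomial.C y, 1] B with hF
  set G : Polynomial ℚ := Polynomial.C (1 / ((m + 1).factorial : ℚ)) *
    ∑ σ : Equiv.Perm (Fin (m + 1)),
      (∏ i ∈ Finset.Icc 1 (m + 1),
        (Polynomial.X - Polynomial.C ((permAscents σ⁻¹ : ℚ)) + Polynomial.C ((i : ℚ)) - 1)) *
        Polynomial.C (y ^ (univ.filter (fun a : A => σ (s a) < σ (t a))).card) with hG
  have hFeval : ∀ x : ℚ, F.eval x = MvPolynomial.eval ![x, y, 1] B := by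
    intro x
    have harg : (fun i => Polynomial.eval x (![Polynomial.X, Polynomial.C y, 1] i))
        = ![x, y, 1] := by
      funext i
      fin_cases i <;> simp
    rw [hF, eval_aeval, harg]
  have hGeval : ∀ x : ℚ, G.eval x =
      (1 / ((m + 1).factorial : ℚ)) *
        ∑ σ : Equiv.Perm (Fin (m + 1)),
          (∏ i ∈ Finset.Icc 1 (m + 1), (x - (permAscents σ⁻¹ : ℚ) + (i : ℚ) - 1)) *
          y ^ (univ.filter (fun a : A => σ (s a) < σ (t a))).card := by
    intro x
    rw [hG]
    simp [Polynomial.eval_finset_sum, Polynomial.eval_prod]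
  have key : ∀ k : ℕ, 0 < k → F.eval ((k : ℕ) : ℚ) = G.eval ((k : ℕ) : ℚ) := by
    intro k hk
    rw [hFeval, hGeval, hB k hk y 1, colorSum_eq A s t hcomp hk y, Finset.mul_sum]
    apply Finset.sum_congr rfl
    intro σ _
    have ha : permAscents σ⁻¹ ≤ m := permAscents_le σ⁻¹
    rw [← factorial_mul_choose_eq hk ha]
    have hfac : ((m + 1).factorial : ℚ) ≠ 0 := by
      exact_mod_cast Nat.factorial_ne_zero (m + 1)
    field_simp
  have hFG : F = G := by
    have hroot : {x : ℚ | (F - G).IsRoot x}.Infinite := by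
      apply Set.infinite_of_injective_forall_mem (f := fun k : ℕ => ((k + 1 : ℕ) : ℚ))
      · intro a b hab
        have : ((a + 1 : ℕ) : ℚ) = ((b + 1 : ℕ) : ℚ) := hab
        exact_mod_cast Nat.succ_injective (by exact_mod_cast this)
      · intro k
        simp only [Set.mem_setOf_eq, Polynomial.IsRoot, Polynomial.eval_sub]
        rw [key (k + 1) (Nat.succ_pos k)]
        ring
    have := Polynomial.eq_zero_of_infinite_isRoot (F - G) hroot
    have := sub_eq_zero.mp this
    exact this
  rw [← hFeval q, hFG, hGeval q]
end
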